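/- arXiv:2103.03603 — 13 statements merged into one kernel-verified Lean document; each statement's English description precedes it below -/
import Mathlib

section
/- An n×n matrix D = [d_ij] is a generalized Euclidean distance matrix if and only if there exist positive reals a, b and vectors x^1,...,x^n in some Euclidean space with sum x^j = 0 such that d_ij = ⟨a x^i - b x^j, a x^i - b x^j⟩ for all i, j. -/
open Matrix
open scoped RealInnerProductSpace

lemma inner_expand {m : ℕ} (a b : ℝ) (u v : EuclideanSpace ℝ (Fin m)) :
    ⟪a • u - b • v, a • u - b • v⟫ =
      a ^ 2 * ⟪u, u⟫ + b ^ 2 * ⟪v, v⟫ - 2 * a * b * ⟪u, v⟫ := by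
  simp only [real_inner_sub_sub_self, real_inner_smul_left, real_inner_smul_right,
    real_inner_comm v u]
  ring

lemma gram_inner {m : ℕ} (u v : EuclideanSpace ℝ (Fin m)) :
    ⟪u, v⟫ = ∑ k, u k * v k := by
  simp [PiLp.inner_apply, mul_comm]

/-- `D` is a generalized Euclidean distance matrix iff there are `a, b > 0` and vectors
`x^1, …, x^n` summing to zero with `d_ij = ⟨a x^i - b x^j, a x^i - b x^j⟩`. -/
theorem stmt1 (n : ℕ) (D : Matrix (Fin n) (Fin n) ℝ) :
    (∃ a b : ℝ, 0 < a ∧ 0 < b ∧ ∃ L : Matrix (Fin n) (Fin n) ℝ,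
      L.PosSemidef ∧ L *ᵥ (fun _ => (1 : ℝ)) = 0 ∧
      ∀ i j, D i j = a ^ 2 * L i i + b ^ 2 * L j j - 2 * a * b * L i j) ↔
    (∃ a b : ℝ, 0 < a ∧ 0 < b ∧
      ∃ (m : ℕ) (x : Fin n → EuclideanSpace ℝ (Fin m)),
        (∑ j, x j) = 0 ∧
        ∀ i j, D i j = ⟪a • x i - b • x j, a • x i - b • x j⟫) := by
  constructor
  · rintro ⟨a, b, ha, hb, L, hL, h1, hD⟩
    obtain ⟨B, rfl⟩ : ∃ B : Matrix (Fin n) (Fin n) ℝ, L = Bᴴ * B := by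
      open scoped MatrixOrder in
      obtain ⟨X, hX, -, hLX⟩ := sub_zero L ▸ CFC.exists_sqrt_of_isSelfAdjoint_of_quasispectrumRestricts
        hL.isHermitian (QuasispectrumRestricts.nnreal_of_nonneg hL.nonneg)
      rw [sub_zero] at hLX
      exact ⟨X, by rw [← hLX, ← star_eq_conjTranspose, hX.star_eq]⟩
    set x : Fin n → EuclideanSpace ℝ (Fin n) :=
      fun j => (WithLp.equiv 2 (Fin n → ℝ)).symm (fun k => B k j) with hx
    have hgram : ∀ i j, ⟪x i, x j⟫ = (Bᴴ * B) i j := by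
      intro i j
      simp [gram_inner, hx, Matrix.mul_apply, Matrix.conjTranspose_apply,
        WithLp.equiv_symm_apply]
    refine ⟨a, b, ha, hb, n, x, ?_, ?_⟩
    · have hB1 : B *ᵥ (fun _ => (1 : ℝ)) = 0 := by
        have h2 : (B *ᵥ fun _ => (1:ℝ)) ⬝ᵥ (B *ᵥ fun _ => (1:ℝ)) = 0 := by
          have hT : Bᵀ = Bᴴ := rfl
          have h5 : (B *ᵥ fun _ => (1:ℝ)) ᵥ* B = 0 := by
            rw [← Matrix.mulVec_transpose, Matrix.mulVec_mulVec, hT, h1]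
          rw [Matrix.dotProduct_mulVec, h5]
          simp
        exact dotProduct_self_eq_zero.mp h2
      ext k
      have h3 := congrFun hB1 k
      simp only [Matrix.mulVec, dotProduct, mul_one, Pi.zero_apply] at h3
      have h4 : (∑ j, x j) k = ∑ j, x j k := by
        rw [WithLp.ofLp_sum, Finset.sum_apply]
      simp only [hx, WithLp.equiv_symm_apply, WithLp.ofLp_toLp] at h4
      exact h4.trans h3
    · intro i j
      rw [inner_expand, hgram, hgram, hgram, hD]
  · rintro ⟨a, b, ha, hb, m, x, hsum, hD⟩
    set B : Matrix (Fin m) (Fin n) ℝ := fun k j => x j k with hB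
    have hgram : ∀ i j, ⟪x i, x j⟫ = (Bᵀ * B) i j := by
      intro i j
      simp [gram_inner, hB, Matrix.mul_apply, Matrix.transpose_apply]
      rfl
    have hTH : Bᵀ = Bᴴ := rfl
    refine ⟨a, b, ha, hb, Bᵀ * B, ?_, ?_, ?_⟩
    · rw [hTH]; exact Matrix.posSemidef_conjTranspose_mul_self B
    · have hB1 : B *ᵥ (fun _ => (1 : ℝ)) = 0 := by
        funext k
        have h3 : (∑ j, x j) k = ∑ j, x j k := by rw [WithLp.ofLp_sum, Finset.sum_apply]
        rw [hsum] at h3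
        simpa [Matrix.mulVec, dotProduct, hB] using h3.symm
      rw [← Matrix.mulVec_mulVec, hB1, Matrix.mulVec_zero]
    · intro i j
      rw [hD i j, inner_expand, hgram, hgram, hgram]
end

section
/- Every generalized Euclidean distance matrix D is similar to a real symmetric matrix; in particular all eigenvalues of D are real. -/
set_option maxHeartbeats 1000000


open Matrix

/-- Every generalized Euclidean distance matrix is similar to a real symmetric matrix;
in particular all of its eigenvalues are real. -/
theorem stmt3 (n : ℕ) (L D : Matrix (Fin n) (Fin n) ℝ) (hL : L.PosSemidef)
    (hL1 : L *ᵥ (fun _ => (1 : ℝ)) = 0) (a b : ℝ) (ha : 0 < a) (hb : 0 < b)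
    (hD : ∀ i j, D i j = a ^ 2 * L i i + b ^ 2 * L j j - 2 * a * b * L i j) :
    (∃ A : Matrix (Fin n) (Fin n) ℝ, IsUnit A ∧ (A⁻¹ * D * A).IsSymm) ∧
    (∀ μ ∈ spectrum ℂ (D.map Complex.ofReal), μ.im = 0) := by
  have ha' : a ≠ 0 := ha.ne'
  have hb' : b ≠ 0 := hb.ne'
  set α : ℝ := (b - a) / (a * n) with hα
  set β : ℝ := (a - b) / (b * n) with hβ
  set J : Matrix (Fin n) (Fin n) ℝ := Matrix.of (fun _ _ => (1:ℝ)) with hJ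
  set A : Matrix (Fin n) (Fin n) ℝ := 1 + α • J with hAdef
  set B : Matrix (Fin n) (Fin n) ℝ := 1 + β • J with hBdef
  have hcoef : α + β + α * β * n = 0 := by
    rcases eq_or_ne (n : ℝ) 0 with hn | hn
    · rw [hα, hβ, hn, mul_zero, mul_zero, div_zero, div_zero]
      ring
    · rw [hα, hβ]
      field_simp
      ring
  have hJJ : J * J = (n : ℝ) • J := by
    ext i j
    simp [hJ, Matrix.mul_apply]
  have hABJ : A * B = 1 + (α + β + α * β * n) • J := by
    rw [hAdef, hBdef, add_mul, mul_add, mul_add, smul_mul_smul_comm, hJJ, smul_smul]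
    simp only [one_mul, mul_one]
    module
  have hAB : A * B = 1 := by rw [hABJ, hcoef, zero_smul, add_zero]
  have hBA : B * A = 1 := mul_eq_one_comm.mp hAB
  have hAinv : A⁻¹ = B := Matrix.inv_eq_right_inv hAB
  have hAunit : IsUnit A := ⟨⟨A, B, hAB, hBA⟩, rfl⟩
  have hLsymm : ∀ i j, L j i = L i j := fun i j => hL.1.apply i j
  have hrow : ∀ i, ∑ k, L i k = 0 := by
    intro i
    have := congrFun hL1 i
    simpa [Matrix.mulVec, dotProduct] using this
  have hcol : ∀ j, ∑ k, L k j = 0 := fun j =>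
    (Finset.sum_congr rfl fun k _ => (hLsymm k j).symm).trans (hrow j)
  set s : ℝ := ∑ k, L k k with hs
  have hDrow : ∀ i, ∑ k, D i k = (n : ℝ) * a ^ 2 * L i i + b ^ 2 * s := by
    intro i
    simp only [hD]
    rw [Finset.sum_sub_distrib, Finset.sum_add_distrib, Finset.sum_const,
      ← Finset.mul_sum, ← Finset.mul_sum, hrow i, hs]
    simp [Finset.card_univ]
    ring
  have hDcol : ∀ j, ∑ k, D k j = a ^ 2 * s + (n : ℝ) * b ^ 2 * L j j := by
    intro j
    simp only [hD]
    rw [Finset.sum_sub_distrib, Finset.sum_add_distrib, Finset.sum_const,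
      ← Finset.mul_sum, ← Finset.mul_sum, hcol j, hs]
    simp [Finset.card_univ]
    ring
  have hDA : ∀ i j, (D * A) i j = D i j + α * ((n : ℝ) * a ^ 2 * L i i + b ^ 2 * s) := by
    intro i j
    rw [← hDrow i, hAdef, Matrix.mul_apply]
    simp only [Matrix.add_apply, Matrix.smul_apply, Matrix.one_apply, hJ, Matrix.of_apply,
      smul_eq_mul, mul_one, mul_add, mul_ite, mul_zero]
    rw [Finset.sum_add_distrib, Finset.sum_ite_eq' Finset.univ j (fun k => D i k)]
    simp [Finset.sum_mul, mul_comm]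
  have hBC : ∀ (C : Matrix (Fin n) (Fin n) ℝ) i j, (B * C) i j = C i j + β * ∑ k, C k j := by
    intro C i j
    rw [hBdef, Matrix.mul_apply]
    simp only [Matrix.add_apply, Matrix.smul_apply, Matrix.one_apply, hJ, Matrix.of_apply,
      smul_eq_mul, mul_one, add_mul, ite_mul, one_mul, zero_mul]
    rw [Finset.sum_add_distrib, Finset.sum_ite_eq Finset.univ i (fun k => C k j)]
    simp [Finset.mul_sum, mul_comm]
  have hMf : ∀ i j, (B * (D * A)) i j =
      D i j + α * ((n : ℝ) * a ^ 2 * L i i + b ^ 2 * s)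
        + β * ((a ^ 2 * s + (n : ℝ) * b ^ 2 * L j j)
          + α * ((n : ℝ) * a ^ 2 * s + (n : ℝ) * (b ^ 2 * s))) := by
    intro i j
    rw [hBC (D * A) i j, hDA i j]
    have h1 : ∑ x, α * ((n : ℝ) * a ^ 2 * L x x + b ^ 2 * s)
        = α * ((n : ℝ) * a ^ 2 * s + (n : ℝ) * (b ^ 2 * s)) := by
      rw [← Finset.mul_sum, Finset.sum_add_distrib, ← Finset.mul_sum, ← hs,
        Finset.sum_const, Finset.card_univ, Fintype.card_fin, nsmul_eq_mul]
    have : ∑ k, (D * A) k j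
        = (a ^ 2 * s + (n : ℝ) * b ^ 2 * L j j)
          + α * ((n : ℝ) * a ^ 2 * s + (n : ℝ) * (b ^ 2 * s)) := by
      rw [Finset.sum_congr rfl fun k _ => hDA k j, Finset.sum_add_distrib, hDcol j, h1]
    rw [this]
  have hsymm : (B * (D * A)).IsSymm := by
    rw [Matrix.IsSymm]
    ext i j
    have hn : (n : ℝ) ≠ 0 := Nat.cast_ne_zero.mpr i.pos.ne'
    rw [Matrix.transpose_apply, hMf j i, hMf i j, hD j i, hD i j, hLsymm i j]
    rw [hα, hβ]; field_simp
    ring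
  refine ⟨⟨A, hAunit, by rw [hAinv, Matrix.mul_assoc]; exact hsymm⟩, ?_⟩
  -- eigenvalues
  have hback : A * (B * (D * A)) * B = D := by
    rw [← Matrix.mul_assoc A B, hAB, Matrix.one_mul, Matrix.mul_assoc, hAB, Matrix.mul_one]
  set f : ℝ →+* ℂ := Complex.ofRealHom with hf
  have hmap1 : ∀ (M N : Matrix (Fin n) (Fin n) ℝ), (M * N).map f = M.map f * N.map f :=
    fun M N => Matrix.map_mul
  have hone : (1 : Matrix (Fin n) (Fin n) ℝ).map f = 1 := Matrix.map_one f f.map_zero f.map_one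
  set u : (Matrix (Fin n) (Fin n) ℂ)ˣ :=
    ⟨A.map f, B.map f, by rw [← hmap1, hAB, hone], by rw [← hmap1, hBA, hone]⟩ with hu
  have key : D.map Complex.ofReal
      = (u : Matrix (Fin n) (Fin n) ℂ) * ((B * (D * A)).map f)
        * ((u⁻¹ : (Matrix (Fin n) (Fin n) ℂ)ˣ) : Matrix (Fin n) (Fin n) ℂ) := by
    show D.map f = (A.map f) * ((B * (D * A)).map f) * (B.map f)
    rw [← hmap1, ← hmap1, hback]
  have hstar : ∀ x : ℝ, star (f x) = f x := fun x => by
    simp [hf, Complex.conj_ofReal]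
  have hherm : ((B * (D * A)).map f).IsHermitian := by
    ext i j
    rw [Matrix.conjTranspose_apply, Matrix.map_apply, Matrix.map_apply, hstar]
    exact congrArg f (hsymm.apply i j)
  intro μ hμ
  rw [key, spectrum.units_conjugate, hherm.spectral_theorem,
    Unitary.conjStarAlgAut_apply, Unitary.spectrum_star_right_conjugate, spectrum_diagonal] at hμ
  obtain ⟨i, hi⟩ := hμ
  rw [← hi]
  simp
end

section
/- A nonzero generalized Euclidean distance matrix D has exactly one positive eigenvalue, and that eigenvalue is simple. -/
open Matrix Polynomial

lemma charpoly_conj_aux {n : ℕ} (P Q A : Matrix (Fin n) (Fin n) ℝ) (hPQ : P * Q = 1) :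
    (P * A * Q).charpoly = A.charpoly := by
  have hmap : ∀ M N : Matrix (Fin n) (Fin n) ℝ,
      (M * N).map (C : ℝ →+* ℝ[X]) = M.map C * N.map C := fun M N => by
    simpa using (RingHom.mapMatrix (C : ℝ →+* ℝ[X])).map_mul M N
  have key : charmatrix (P * A * Q) = P.map C * charmatrix A * Q.map C := by
    have hc : ∀ M : Matrix (Fin n) (Fin n) ℝ[X],
        M * Matrix.scalar (Fin n) (X : ℝ[X]) = Matrix.scalar (Fin n) (X : ℝ[X]) * M := by
      intro M
      exact (Matrix.scalar_commute (X : ℝ[X]) (fun r => Commute.all _ _) M).symm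
    simp only [charmatrix, RingHom.mapMatrix_apply]
    rw [Matrix.mul_sub, Matrix.sub_mul, hc, Matrix.mul_assoc, ← hmap, ← hmap]
    rw [Matrix.mul_assoc (Matrix.scalar (Fin n) X), ← hmap, hPQ]
    simp [hmap, Matrix.mul_assoc]
  rw [Matrix.charpoly, key, det_mul, det_mul, Matrix.charpoly]
  have : (P.map (C : ℝ →+* ℝ[X])).det * (Q.map C).det = 1 := by
    have h1 : (P.map (C : ℝ →+* ℝ[X])).det = C P.det := ((C : ℝ →+* ℝ[X]).map_det P).symm
    have h2 : (Q.map (C : ℝ →+* ℝ[X])).det = C Q.det := ((C : ℝ →+* ℝ[X]).map_det Q).symm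
    rw [h1, h2, ← C_mul, ← det_mul, hPQ, det_one, C_1]
  calc (P.map (C : ℝ →+* ℝ[X])).det * (charmatrix A).det * (Q.map C).det
      = (charmatrix A).det * ((P.map C).det * (Q.map C).det) := by ring
    _ = (charmatrix A).det := by rw [this, mul_one]

lemma roots_charpoly_isHermitian {n : ℕ} (A : Matrix (Fin n) (Fin n) ℝ) (hA : A.IsHermitian) :
    A.charpoly.roots = Finset.univ.val.map hA.eigenvalues := by
  have hU : (hA.eigenvectorUnitary : Matrix (Fin n) (Fin n) ℝ) *
      (star (hA.eigenvectorUnitary : Matrix (Fin n) (Fin n) ℝ)) = 1 :=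
    (Matrix.mem_unitaryGroup_iff).mp hA.eigenvectorUnitary.2
  have hdiag : Matrix.diagonal (RCLike.ofReal ∘ hA.eigenvalues) = Matrix.diagonal hA.eigenvalues := by
    congr 1
  have h1 : A.charpoly = (Matrix.diagonal hA.eigenvalues).charpoly := by
    conv_lhs => rw [hA.spectral_theorem]
    rw [hdiag, Unitary.conjStarAlgAut_apply, charpoly_conj_aux _ _ _ hU]
  have h2 : (Matrix.diagonal hA.eigenvalues).charpoly
      = ∏ i : Fin n, (X - C (hA.eigenvalues i)) := by
    rw [Matrix.charpoly]
    have : charmatrix (Matrix.diagonal hA.eigenvalues)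
        = Matrix.diagonal (fun i => X - C (hA.eigenvalues i)) := by
      ext i j
      by_cases h : i = j
      · subst h; simp
      · simp [h, Matrix.diagonal_apply_ne _ h]
    rw [this, Matrix.det_diagonal]
  rw [h1, h2, Finset.prod_eq_multiset_prod]
  have : Multiset.map (fun i => X - C (hA.eigenvalues i)) Finset.univ.val
      = Multiset.map (fun x => X - C x) (Finset.univ.val.map hA.eigenvalues) := by
    rw [Multiset.map_map]; rfl
  rw [this, Polynomial.roots_multiset_prod_X_sub_C]

lemma dot_eigenbasis {n : ℕ} {A : Matrix (Fin n) (Fin n) ℝ} (hA : A.IsHermitian) (i j : Fin n) :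
    (⇑(hA.eigenvectorBasis i)) ⬝ᵥ (⇑(hA.eigenvectorBasis j)) = if i = j then 1 else 0 := by
  have hU : (star (hA.eigenvectorUnitary : Matrix (Fin n) (Fin n) ℝ)) *
      (hA.eigenvectorUnitary : Matrix (Fin n) (Fin n) ℝ) = 1 :=
    Unitary.coe_star_mul_self hA.eigenvectorUnitary
  have := congrFun (congrFun hU i) j
  simp only [Matrix.mul_apply, Matrix.one_apply, Matrix.star_apply,
    Matrix.IsHermitian.eigenvectorUnitary_apply, star_trivial] at this
  simpa [dotProduct] using this

lemma quadform_eigen {n : ℕ} {A : Matrix (Fin n) (Fin n) ℝ} (hA : A.IsHermitian)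
    (x : Fin n → ℝ) :
    x ⬝ᵥ (A *ᵥ x) = ∑ i, hA.eigenvalues i * ((⇑(hA.eigenvectorBasis i)) ⬝ᵥ x)^2 := by
  set U : Matrix (Fin n) (Fin n) ℝ := (hA.eigenvectorUnitary : Matrix (Fin n) (Fin n) ℝ) with hUdef
  set y : Fin n → ℝ := (star U) *ᵥ x with hy
  have hdiag : Matrix.diagonal (RCLike.ofReal ∘ hA.eigenvalues) = Matrix.diagonal hA.eigenvalues := by
    congr 1
  have hvec : Matrix.vecMul x U = y := by
    funext i
    simp [hy, Matrix.vecMul, Matrix.mulVec, dotProduct, Matrix.star_apply, mul_comm]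
  have hyi : ∀ i, y i = (⇑(hA.eigenvectorBasis i)) ⬝ᵥ x := by
    intro i
    simp [hy, hUdef, Matrix.mulVec, dotProduct, Matrix.star_apply,
      Matrix.IsHermitian.eigenvectorUnitary_apply]
  conv_lhs => rw [hA.spectral_theorem, hdiag]
  rw [Unitary.conjStarAlgAut_apply, ← Matrix.mulVec_mulVec, ← Matrix.mulVec_mulVec, Matrix.dotProduct_mulVec, hvec]
  have : y ⬝ᵥ (Matrix.diagonal hA.eigenvalues *ᵥ y) = ∑ i, hA.eigenvalues i * (y i)^2 := by
    simp only [dotProduct, Matrix.mulVec_diagonal]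
    exact Finset.sum_congr rfl fun i _ => by ring
  rw [this]
  exact Finset.sum_congr rfl fun i _ => by rw [hyi i]

set_option maxHeartbeats 1000000 in
/-- A nonzero generalized Euclidean distance matrix has exactly one positive eigenvalue,
counted with algebraic multiplicity (so that eigenvalue is simple). -/
theorem stmt4 (n : ℕ) (L D : Matrix (Fin n) (Fin n) ℝ) (hL : L.PosSemidef)
    (hL1 : L *ᵥ (fun _ => (1 : ℝ)) = 0) (hL0 : L ≠ 0)
    (a b : ℝ) (ha : 0 < a) (hb : 0 < b)
    (hD : ∀ i j, D i j = a ^ 2 * L i i + b ^ 2 * L j j - 2 * a * b * L i j) :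
    (D.charpoly.roots.filter (fun x => 0 < x)).card = 1 := by
  classical
  have hn0 : 0 < n := by
    rcases Nat.eq_zero_or_pos n with h | h
    · subst h; exact absurd (by ext i j; exact i.elim0) hL0
    · exact h
  have hnR : (0:ℝ) < (n:ℝ) := by exact_mod_cast hn0
  have hsym : ∀ i j, L i j = L j i := by
    intro i j
    have := congrFun (congrFun hL.1 j) i
    simpa [Matrix.conjTranspose_apply] using this
  have hrowL : ∀ i, ∑ j, L i j = 0 := by
    intro i
    have := congrFun hL1 i
    simpa [Matrix.mulVec, dotProduct] using this
  have hcolL : ∀ j, ∑ i, L i j = 0 := by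
    intro j
    rw [Finset.sum_congr rfl fun i _ => hsym i j]
    exact hrowL j
  set T : ℝ := ∑ k, L k k with hTdef
  have hT : 0 < T := by
    obtain ⟨B, hB⟩ : ∃ B : Matrix (Fin n) (Fin n) ℝ, L = Bᴴ * B := by
      open scoped MatrixOrder in
      obtain ⟨B, hB⟩ := CStarAlgebra.nonneg_iff_eq_star_mul_self.mp hL.nonneg
      exact ⟨B, hB⟩
    have hdiag : ∀ i, L i i = ∑ k, (B k i)^2 := by
      intro i; rw [hB]; simp [Matrix.mul_apply, Matrix.conjTranspose_apply, pow_two]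
    have hnn : ∀ k, 0 ≤ L k k := fun k => by rw [hdiag]; positivity
    rcases (Finset.sum_nonneg fun k (_ : k ∈ Finset.univ) => hnn k).lt_or_eq with h | h
    · exact h
    · exfalso; apply hL0
      have hdz : ∀ i, L i i = 0 := by
        intro i
        exact (Finset.sum_eq_zero_iff_of_nonneg (fun k _ => hnn k)).mp h.symm i (Finset.mem_univ i)
      have hBz : ∀ k i, B k i = 0 := by
        intro k i
        have h2 : ∑ m, (B m i)^2 = 0 := by rw [← hdiag i]; exact hdz i
        have := (Finset.sum_eq_zero_iff_of_nonneg (fun m _ => sq_nonneg (B m i))).mp h2 k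
          (Finset.mem_univ k)
        exact pow_eq_zero_iff (by norm_num) |>.mp this
      ext i j
      rw [hB]
      simp [Matrix.mul_apply, hBz]
  set K : ℝ := (a-b)^2*T/n with hKdef
  set E : Matrix (Fin n) (Fin n) ℝ :=
    Matrix.of (fun i j => a*b*L i i + a*b*L j j - 2*a*b*L i j + K) with hEdef
  have hEapp : ∀ i j, E i j = a*b*L i i + a*b*L j j - 2*a*b*L i j + K := fun i j => rfl
  set c : ℝ := (a - b) / (b * n) with hcdef
  set d : ℝ := (b - a) / (a * n) with hddef
  set P : Matrix (Fin n) (Fin n) ℝ := Matrix.of (fun i j => (if i = j then (1:ℝ) else 0) + c)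
    with hPdef
  set Q : Matrix (Fin n) (Fin n) ℝ := Matrix.of (fun i j => (if i = j then (1:ℝ) else 0) + d)
    with hQdef
  have hcd : c + d + n*(c*d) = 0 := by
    rw [hcdef, hddef]
    field_simp
    ring
  have hPQ : P * Q = 1 := by
    ext i j
    simp only [hPdef, hQdef, Matrix.mul_apply, Matrix.of_apply, Matrix.one_apply]
    have h1 : ∀ k : Fin n, ((if i = k then (1:ℝ) else 0) + c) * ((if k = j then (1:ℝ) else 0) + d)
        = (if i = k then (if k = j then (1:ℝ) else 0) else 0)
          + d * (if i = k then 1 else 0) + c * (if k = j then 1 else 0) + c*d := by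
      intro k
      by_cases h : i = k
      · subst h; by_cases h' : i = j <;> simp [h'] <;> ring
      · by_cases h' : k = j
        · subst h'; simp [h]; try ring
        · simp [h, h']; try ring
    rw [Finset.sum_congr rfl fun k _ => h1 k]
    simp only [Finset.sum_add_distrib, Finset.sum_ite_eq, Finset.sum_ite_eq', Finset.mem_univ,
      if_true, ← Finset.mul_sum, Finset.sum_const, Finset.card_univ, Fintype.card_fin,
      nsmul_eq_mul, mul_one]
    by_cases hij : i = j <;> simp only [hij, if_true, if_false] <;> nlinarith [hcd]
  -- row and column sums of D
  have hDrow : ∀ i, ∑ l, D i l = a^2*n*L i i + b^2*T := by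
    intro i
    rw [Finset.sum_congr rfl fun l _ => hD i l]
    rw [Finset.sum_sub_distrib, Finset.sum_add_distrib, Finset.sum_const, ← Finset.mul_sum,
      ← Finset.mul_sum, hrowL i, Finset.card_univ, Fintype.card_fin, nsmul_eq_mul, ← hTdef]
    ring
  have hDcol : ∀ j, ∑ k, D k j = a^2*T + b^2*(n:ℝ)*L j j := by
    intro j
    rw [Finset.sum_congr rfl fun k _ => hD k j]
    rw [Finset.sum_sub_distrib, Finset.sum_add_distrib, Finset.sum_const, ← Finset.mul_sum,
      ← Finset.mul_sum, hcolL j, Finset.card_univ, Fintype.card_fin, nsmul_eq_mul, ← hTdef]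
    ring
  have hDtot : ∑ l, ∑ k, D k l = a^2*(n:ℝ)*T + b^2*(n:ℝ)*T := by
    rw [Finset.sum_congr rfl fun l _ => hDcol l]
    rw [Finset.sum_add_distrib, Finset.sum_const, ← Finset.mul_sum, Finset.card_univ,
      Fintype.card_fin, nsmul_eq_mul, ← hTdef]
    ring
  have hPmul : ∀ (M : Matrix (Fin n) (Fin n) ℝ) i j,
      (P * M) i j = M i j + c * ∑ k, M k j := by
    intro M i j
    simp only [hPdef, Matrix.mul_apply, Matrix.of_apply, add_mul, ite_mul, one_mul, zero_mul]
    rw [Finset.sum_add_distrib, Finset.sum_ite_eq, ← Finset.mul_sum]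
    simp
  have hQmul : ∀ (M : Matrix (Fin n) (Fin n) ℝ) i j,
      (M * Q) i j = M i j + d * ∑ l, M i l := by
    intro M i j
    simp only [hQdef, Matrix.mul_apply, Matrix.of_apply, mul_add, mul_ite, mul_one, mul_zero]
    rw [Finset.sum_add_distrib, Finset.sum_ite_eq', ← Finset.sum_mul]
    simp [mul_comm]
  have hPDQ : P * D * Q = E := by
    ext i j
    rw [hEapp, hQmul, hPmul, Finset.sum_congr rfl fun l _ => hPmul D i l,
      Finset.sum_add_distrib, ← Finset.mul_sum, hDrow, hDcol, hDtot, hD i j, hKdef,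
      hcdef, hddef]
    have ha' : (a:ℝ) ≠ 0 := ha.ne'
    have hb' : (b:ℝ) ≠ 0 := hb.ne'
    have hn' : (n:ℝ) ≠ 0 := hnR.ne'
    field_simp
    ring
  have hEherm : E.IsHermitian := by
    ext i j
    simp only [Matrix.conjTranspose_apply, hEapp, star_trivial]
    rw [hsym i j]
    ring
  -- quadratic form facts
  have hF1 : ∀ y : Fin n → ℝ, (∑ k, y k) = 0 → y ⬝ᵥ (E *ᵥ y) ≤ 0 := by
    intro y hy0
    have hinner : ∀ i, (E *ᵥ y) i = a*b*(∑ j, L j j * y j) - 2*a*b*((L *ᵥ y) i) := by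
      intro i
      simp only [Matrix.mulVec, dotProduct, hEapp]
      have h1 : ∀ j, (a*b*L i i + a*b*L j j - 2*a*b*L i j + K) * y j
          = (a*b*L i i + K) * y j + a*b*(L j j * y j) - 2*a*b*(L i j * y j) := by
        intro j; ring
      rw [Finset.sum_congr rfl fun j _ => h1 j, Finset.sum_sub_distrib, Finset.sum_add_distrib,
        ← Finset.mul_sum, ← Finset.mul_sum, ← Finset.mul_sum, hy0, mul_zero, zero_add]
    have hquad : y ⬝ᵥ (E *ᵥ y) = -2*a*b*(y ⬝ᵥ (L *ᵥ y)) := by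
      simp only [dotProduct]
      rw [Finset.sum_congr rfl fun i _ => by rw [hinner i]]
      have h2 : ∀ i, y i * (a*b*(∑ j, L j j * y j) - 2*a*b*((L *ᵥ y) i))
          = (a*b*(∑ j, L j j * y j)) * y i - 2*a*b*(y i * (L *ᵥ y) i) := by
        intro i; ring
      rw [Finset.sum_congr rfl fun i _ => h2 i, Finset.sum_sub_distrib, ← Finset.mul_sum,
        ← Finset.mul_sum, hy0, mul_zero, zero_sub]
      ring
    rw [hquad]
    have hpsd : 0 ≤ y ⬝ᵥ (L *ᵥ y) := by
      have := hL.dotProduct_mulVec_nonneg y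
      simpa using this
    nlinarith [mul_nonneg (mul_nonneg ha.le hb.le) hpsd]
  have hF2 : (0:ℝ) < (fun _ => (1:ℝ)) ⬝ᵥ (E *ᵥ (fun _ => (1:ℝ))) := by
    have hval : (fun _ => (1:ℝ)) ⬝ᵥ (E *ᵥ (fun _ => (1:ℝ)))
        = a*b*(n:ℝ)*T + a*b*(n:ℝ)*T + (a-b)^2*(n:ℝ)*T := by
      simp only [dotProduct, Matrix.mulVec, hEapp, mul_one, one_mul]
      have hrow : ∀ i, ∑ j, (a*b*L i i + a*b*L j j - 2*a*b*L i j + K)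
          = (n:ℝ)*(a*b*L i i) + a*b*T + (n:ℝ)*K := by
        intro i
        have h1 : ∀ j, a*b*L i i + a*b*L j j - 2*a*b*L i j + K
            = (a*b*L i i + K) + a*b*(L j j) - 2*a*b*(L i j) := by intro j; ring
        rw [Finset.sum_congr rfl fun j _ => h1 j, Finset.sum_sub_distrib, Finset.sum_add_distrib,
          Finset.sum_const, ← Finset.mul_sum, ← Finset.mul_sum, hrowL i, Finset.card_univ,
          Fintype.card_fin, nsmul_eq_mul, ← hTdef, mul_zero, sub_zero]
        ring
      rw [Finset.sum_congr rfl fun i _ => hrow i, Finset.sum_add_distrib, Finset.sum_add_distrib,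
        Finset.sum_const, Finset.sum_const, ← Finset.mul_sum, ← Finset.mul_sum, ← hTdef,
        Finset.card_univ, Fintype.card_fin, nsmul_eq_mul, nsmul_eq_mul, hKdef]
      field_simp
    rw [hval]
    nlinarith [mul_nonneg (mul_nonneg (sq_nonneg (a-b)) hnR.le) hT.le,
      mul_pos (mul_pos (mul_pos ha hb) hnR) hT]
  -- reduce to counting positive eigenvalues of E
  have hDE : D.charpoly = E.charpoly := by
    rw [← hPDQ, charpoly_conj_aux P Q D hPQ]
  rw [hDE, roots_charpoly_isHermitian E hEherm]
  have hcardeq : (Multiset.filter (fun x => 0 < x) (Finset.univ.val.map hEherm.eigenvalues)).card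
      = (Finset.univ.filter (fun i => 0 < hEherm.eigenvalues i)).card := by
    rw [← Multiset.countP_eq_card_filter, Multiset.countP_map]
    rw [Finset.card_def, Finset.filter_val, ← Multiset.countP_eq_card_filter]
  rw [hcardeq]
  -- at least one positive eigenvalue
  have hex : ∃ i, 0 < hEherm.eigenvalues i := by
    by_contra hno
    push_neg at hno
    have hle : (fun _ => (1:ℝ)) ⬝ᵥ (E *ᵥ (fun _ => (1:ℝ))) ≤ 0 := by
      rw [quadform_eigen hEherm]
      apply Finset.sum_nonpos
      intro k _
      exact mul_nonpos_iff.mpr (Or.inr ⟨hno k, sq_nonneg _⟩)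
    exact absurd hF2 (not_lt.mpr hle)
  -- at most one positive eigenvalue
  have huniq : ∀ i j, 0 < hEherm.eigenvalues i → 0 < hEherm.eigenvalues j → i = j := by
    intro i j hi hj
    by_contra hij
    obtain ⟨α, β, hαβ, hsum⟩ : ∃ α β : ℝ, ¬(α = 0 ∧ β = 0) ∧
        α * (∑ k, (⇑(hEherm.eigenvectorBasis i)) k) +
        β * (∑ k, (⇑(hEherm.eigenvectorBasis j)) k) = 0 := by
      by_cases hs : (∑ k, (⇑(hEherm.eigenvectorBasis i)) k) = 0 ∧
          (∑ k, (⇑(hEherm.eigenvectorBasis j)) k) = 0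
      · exact ⟨1, 0, by simp, by rw [one_mul, zero_mul, add_zero]; exact hs.1⟩
      · refine ⟨∑ k, (⇑(hEherm.eigenvectorBasis j)) k,
          -(∑ k, (⇑(hEherm.eigenvectorBasis i)) k), ?_, by ring⟩
        intro hc
        exact hs ⟨by simpa using congrArg Neg.neg hc.2, hc.1⟩
    set y : Fin n → ℝ := fun m => α * (⇑(hEherm.eigenvectorBasis i)) m
      + β * (⇑(hEherm.eigenvectorBasis j)) m with hy
    have hysum : ∑ k, y k = 0 := by
      rw [hy]
      rw [Finset.sum_add_distrib, ← Finset.mul_sum, ← Finset.mul_sum]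
      exact hsum
    have hdot : ∀ k, (⇑(hEherm.eigenvectorBasis k)) ⬝ᵥ y
        = α * (if k = i then 1 else 0) + β * (if k = j then 1 else 0) := by
      intro k
      have h1 : (⇑(hEherm.eigenvectorBasis k)) ⬝ᵥ y
          = α * ((⇑(hEherm.eigenvectorBasis k)) ⬝ᵥ (⇑(hEherm.eigenvectorBasis i)))
            + β * ((⇑(hEherm.eigenvectorBasis k)) ⬝ᵥ (⇑(hEherm.eigenvectorBasis j))) := by
        simp only [dotProduct, hy]
        have h2 : ∀ m, (⇑(hEherm.eigenvectorBasis k)) m *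
            (α * (⇑(hEherm.eigenvectorBasis i)) m + β * (⇑(hEherm.eigenvectorBasis j)) m)
            = α * ((⇑(hEherm.eigenvectorBasis k)) m * (⇑(hEherm.eigenvectorBasis i)) m)
              + β * ((⇑(hEherm.eigenvectorBasis k)) m * (⇑(hEherm.eigenvectorBasis j)) m) := by
          intro m; ring
        rw [Finset.sum_congr rfl fun m _ => h2 m, Finset.sum_add_distrib,
          ← Finset.mul_sum, ← Finset.mul_sum]
      rw [h1, dot_eigenbasis, dot_eigenbasis]
    have hq : y ⬝ᵥ (E *ᵥ y) = hEherm.eigenvalues i * α^2 + hEherm.eigenvalues j * β^2 := by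
      rw [quadform_eigen hEherm y]
      have h2 : ∀ k, hEherm.eigenvalues k * ((⇑(hEherm.eigenvectorBasis k)) ⬝ᵥ y)^2
          = (if k = i then hEherm.eigenvalues i * α^2 else 0)
            + (if k = j then hEherm.eigenvalues j * β^2 else 0) := by
        intro k
        rw [hdot k]
        by_cases h : k = i <;> by_cases h' : k = j
        · exact absurd (h.symm.trans h') hij
        · subst h; simp [h']; try ring
        · subst h'; simp [h]; try ring
        · simp [h, h']; try ring
      rw [Finset.sum_congr rfl fun k _ => h2 k, Finset.sum_add_distrib,
        Finset.sum_ite_eq', Finset.sum_ite_eq']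
      simp
    have hpos : 0 < y ⬝ᵥ (E *ᵥ y) := by
      rw [hq]
      rcases not_and_or.mp hαβ with h | h
      · have hα2 : 0 < α^2 := (sq_nonneg α).lt_of_ne' (pow_ne_zero 2 h)
        nlinarith [mul_pos hi hα2, mul_nonneg hj.le (sq_nonneg β)]
      · have hβ2 : 0 < β^2 := (sq_nonneg β).lt_of_ne' (pow_ne_zero 2 h)
        nlinarith [mul_pos hj hβ2, mul_nonneg hi.le (sq_nonneg α)]
    exact absurd hpos (not_lt.mpr (hF1 y hysum))
  obtain ⟨i0, hi0⟩ := hex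
  rw [Finset.card_eq_one]
  refine ⟨i0, ?_⟩
  rw [Finset.eq_singleton_iff_unique_mem]
  constructor
  · simp [hi0]
  · intro j hj
    simp only [Finset.mem_filter, Finset.mem_univ, true_and] at hj
    exact huniq j i0 hj hi0
end

section
/- For a nonzero generalized Euclidean distance matrix D and any real r with 0 < r < 1, the matrix (ρ(D)I - D)^r (defined via diagonalization over the real eigenvalues of D) is an M-matrix. -/
open Matrix

/-- An M-matrix: a matrix of the form `ρ • I - S` with `S` entrywise nonnegative and
`ρ` at least the spectral radius of `S`. -/
def IsMMatrix {n : ℕ} (M : Matrix (Fin n) (Fin n) ℝ) : Prop :=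
  ∃ (ρ : ℝ) (S : Matrix (Fin n) (Fin n) ℝ), (∀ i j, 0 ≤ S i j) ∧
    M = ρ • (1 : Matrix (Fin n) (Fin n) ℝ) - S ∧
    ∀ μ ∈ spectrum ℂ (S.map Complex.ofReal), ‖μ‖ ≤ ρ


section BinomialSeries

noncomputable def bc (r : ℝ) : ℕ → ℝ
  | 0 => 0
  | 1 => r
  | (m+2) => bc r (m+1) * (((m:ℝ)+1) - r) / ((m:ℝ)+2)

variable {r : ℝ}

lemma bc_nonneg (hr0 : 0 < r) (hr1 : r < 1) : ∀ m, 0 ≤ bc r m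
  | 0 => le_rfl
  | 1 => hr0.le
  | (m+2) => by
      have h := bc_nonneg hr0 hr1 (m+1)
      have hm : (0:ℝ) ≤ (m:ℝ) := Nat.cast_nonneg m
      have h1 : (0:ℝ) ≤ ((m:ℝ)+1) - r := by linarith
      have h2 : (0:ℝ) < (m:ℝ)+2 := by linarith
      show 0 ≤ bc r (m+1) * (((m:ℝ)+1) - r) / ((m:ℝ)+2)
      positivity

lemma bc_le (hr0 : 0 < r) (hr1 : r < 1) : ∀ m, bc r m ≤ r
  | 0 => hr0.le
  | 1 => le_rfl
  | (m+2) => by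
      have h := bc_le hr0 hr1 (m+1)
      have h0 := bc_nonneg hr0 hr1 (m+1)
      show bc r (m+1) * (((m:ℝ)+1) - r) / ((m:ℝ)+2) ≤ r
      have hm : (0:ℝ) ≤ (m:ℝ) := Nat.cast_nonneg m
      have h1 : (0:ℝ) ≤ ((m:ℝ)+1) - r := by linarith
      have h2 : (0:ℝ) < (m:ℝ)+2 := by linarith
      have key : bc r (m+1) * (((m:ℝ)+1) - r) ≤ r * ((m:ℝ)+2) := by
        calc bc r (m+1) * (((m:ℝ)+1) - r) ≤ r * (((m:ℝ)+1) - r) := by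
              exact mul_le_mul_of_nonneg_right h h1
          _ ≤ r * ((m:ℝ)+2) := by
              apply mul_le_mul_of_nonneg_left _ hr0.le
              linarith
      exact (div_le_iff₀ h2).mpr key

lemma bc_rec (m : ℕ) :
    ((m:ℝ)+1) * bc r (m+1) = ((m:ℝ) - r) * bc r m + (if m = 0 then r else 0) := by
  cases m with
  | zero => simp [bc]
  | succ k =>
      have h2 : ((k:ℝ)+2) ≠ 0 := by positivity
      push_cast
      show ((k:ℝ)+1+1) * bc r (k+2) = (((k:ℝ)+1) - r) * bc r (k+1) + (if k+1 = 0 then r else 0)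
      rw [show bc r (k+2) = bc r (k+1) * (((k:ℝ)+1) - r) / ((k:ℝ)+2) from rfl]
      simp only [Nat.succ_ne_zero, if_false, add_zero]
      field_simp
      ring

lemma bc_summable (hr0 : 0 < r) (hr1 : r < 1) {u : ℝ} (hu : |u| < 1) :
    Summable (fun m => bc r m * u ^ m) := by
  apply Summable.of_norm_bounded
    (((summable_geometric_of_lt_one (abs_nonneg u) hu)).mul_left r)
  intro m
  rw [norm_mul, norm_pow, Real.norm_eq_abs, Real.norm_eq_abs,
    abs_of_nonneg (bc_nonneg hr0 hr1 m)]
  exact mul_le_mul_of_nonneg_right (bc_le hr0 hr1 m) (by positivity)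

lemma bc_hasSum (hr0 : 0 < r) (hr1 : r < 1) {u : ℝ} (hu : |u| < 1) :
    HasSum (fun m => bc r m * u ^ m) (1 - (1 - u) ^ r) := by
  classical
  set q : ℝ := (|u| + 1) / 2 with hqdef
  have hq0 : 0 < q := by positivity
  have hq1 : q < 1 := by rw [hqdef]; linarith
  have huq : |u| < q := by rw [hqdef]; linarith
  set t : Set ℝ := Metric.ball (0:ℝ) q with htdef
  have hmemq : ∀ {x : ℝ}, x ∈ t → |x| < q := by
    intro x hx
    rw [htdef, Metric.mem_ball, Real.dist_eq, sub_zero] at hx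
    exact hx
  have hmemt : ∀ {x : ℝ}, x ∈ t → |x| < 1 := fun hx => lt_trans (hmemq hx) hq1
  have hut : u ∈ t := by
    rw [htdef, Metric.mem_ball, Real.dist_eq, sub_zero]; exact huq
  have h0t : (0:ℝ) ∈ t := by
    rw [htdef, Metric.mem_ball, Real.dist_eq, sub_zero]; simpa using hq0
  set g : ℕ → ℝ → ℝ := fun m x => bc r m * x ^ m with hgdef
  set g' : ℕ → ℝ → ℝ := fun m x => bc r m * ((m:ℕ) * x ^ (m - 1)) with hg'def
  set w : ℕ → ℝ := fun m => r / q * ((m:ℝ) * q ^ m) with hwdef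
  have hw : Summable w := by
    have := summable_pow_mul_geometric_of_norm_lt_one 1 (by
      rw [Real.norm_eq_abs, abs_of_pos hq0]; exact hq1)
    simpa [pow_one] using this.mul_left (r / q)
  have hgd : ∀ m (x : ℝ), HasDerivAt (g m) (g' m x) x := fun m x =>
    (hasDerivAt_pow m x).const_mul (bc r m)
  have hbound : ∀ (m : ℕ), ∀ x ∈ t, ‖g' m x‖ ≤ w m := by
    intro m x hx
    cases m with
    | zero => simp [hg'def, hwdef]
    | succ k =>
        have hxq := (hmemq hx).le
        have hb0 := bc_nonneg hr0 hr1 (k+1)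
        have hbl := bc_le hr0 hr1 (k+1)
        have hgx : g' (k+1) x = bc r (k+1) * (((k:ℝ)+1) * x ^ k) := by
          simp only [hg'def, Nat.add_sub_cancel]
          push_cast
          ring
        have hk1 : (0:ℝ) ≤ (k:ℝ)+1 := by positivity
        rw [hgx, Real.norm_eq_abs, abs_mul, abs_of_nonneg hb0, abs_mul, abs_pow,
          abs_of_nonneg hk1]
        have hxk : |x| ^ k ≤ q ^ k := pow_le_pow_left₀ (abs_nonneg x) hxq k
        have hstep : bc r (k+1) * (((k:ℝ)+1) * |x| ^ k) ≤ r * (((k:ℝ)+1) * q ^ k) := by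
          apply mul_le_mul hbl _ (by positivity) hr0.le
          exact mul_le_mul_of_nonneg_left hxk (by positivity)
        refine hstep.trans (le_of_eq ?_)
        rw [hwdef]
        push_cast
        field_simp
        ring
  have hsummable : ∀ {x : ℝ}, x ∈ t → Summable (fun m => g m x) := by
    intro x hx
    exact bc_summable hr0 hr1 (hmemt hx)
  set F : ℝ → ℝ := fun x => ∑' m, g m x with hFdef
  have hF : ∀ x ∈ t, HasDerivAt F (∑' m, g' m x) x := by
    intro x hx
    exact hasDerivAt_tsum_of_isPreconnected hw Metric.isOpen_ball
      (convex_ball (0:ℝ) q).isPreconnected (fun m y hy => hgd m y)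
      hbound h0t (hsummable h0t) hx
  have hg'summ : ∀ {x : ℝ}, x ∈ t → Summable (fun m => g' m x) := by
    intro x hx
    exact Summable.of_norm_bounded hw (fun m => hbound m x hx)
  -- key ODE identity
  have hIdent : ∀ x ∈ t, (1 - x) * (∑' m, g' m x) = r * (1 - F x) := by
    intro x hx
    have hT : HasSum (fun m => g' m x) (∑' m, g' m x) := (hg'summ hx).hasSum
    set T := ∑' m, g' m x
    have hshift : HasSum (fun m => g' (m+1) x) T := by
      rw [hasSum_nat_add_iff (f := fun m => g' m x) 1]
      convert hT using 1
      · rfl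
      simp [hg'def]
    have hterm : ∀ m : ℕ, g' (m+1) x = x * g' m x - r * g m x + (if m = 0 then r else 0) := by
      intro m
      have hx1 : x * ((m:ℝ) * x ^ (m-1)) = (m:ℝ) * x ^ m := by
        cases m with
        | zero => simp
        | succ k =>
            simp only [Nat.add_sub_cancel]
            rw [pow_succ]
            ring
      have hg'1 : g' (m+1) x = (((m:ℝ)+1) * bc r (m+1)) * x ^ m := by
        simp only [hg'def, Nat.add_sub_cancel]
        push_cast
        ring
      have h2 : x * g' m x = bc r m * ((m:ℝ) * x ^ m) := by
        simp only [hg'def]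
        rw [← hx1]
        ring
      rw [hg'1, bc_rec, h2]
      simp only [hgdef]
      by_cases hm : m = 0
      · subst hm; simp [bc]
      · simp only [hm, if_false, add_zero]; ring
    have hrhs : HasSum (fun m => x * g' m x - r * g m x + (if m = 0 then r else 0))
        (x * T - r * F x + r) :=
      ((hT.mul_left x).sub ((hsummable hx).hasSum.mul_left r)).add (hasSum_ite_eq 0 r)
    have heq : T = x * T - r * F x + r := by
      have h := hshift.unique (by simpa only [← hterm] using hrhs)
      linarith [h]
    linarith [heq]
  -- constancy of φ
  set φ : ℝ → ℝ := fun x => (1 - F x) * (1 - x) ^ (-r) with hφdef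
  have hφd : ∀ x ∈ t, HasDerivWithinAt φ 0 t x := by
    intro x hx
    have hx1 : 0 < 1 - x := by
      have := hmemt hx
      cases abs_lt.mp this
      linarith
    have h2 : HasDerivAt (fun y : ℝ => (1 - y) ^ (-r)) (r * (1 - x) ^ (-r - 1)) x := by
      have hbase : HasDerivAt (fun y : ℝ => 1 - y) (-1) x := by
        simpa using (hasDerivAt_id x).const_sub 1
      have hpow := Real.hasDerivAt_rpow_const (x := 1 - x) (p := -r) (Or.inl hx1.ne')
      have := hpow.comp x hbase
      exact this.congr_deriv (by ring)
    have h1 : HasDerivAt (fun y => 1 - F y) (-(∑' m, g' m x)) x := by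
      simpa using (hF x hx).const_sub 1
    have hprod := h1.mul h2
    have hsplit : (1 - x) ^ (-r) = (1 - x) * (1 - x) ^ (-r - 1) := by
      have hh := Real.rpow_add hx1 1 (-r - 1)
      rw [Real.rpow_one] at hh
      rw [show (1:ℝ) + (-r - 1) = -r by ring] at hh
      exact hh
    have hid := hIdent x hx
    have hval : (-(∑' m, g' m x)) * (1 - x) ^ (-r)
        + (1 - F x) * (r * (1 - x) ^ (-r - 1)) = 0 := by
      rw [hsplit]
      linear_combination (-(1 - x) ^ (-r - 1)) * hid
    rw [hval] at hprod
    exact hprod.hasDerivWithinAt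
  have hconst : φ u = φ 0 := by
    have hmvt := Convex.norm_image_sub_le_of_norm_hasDerivWithin_le
      (f := φ) (f' := fun _ => (0:ℝ)) (C := 0) hφd (fun x hx => by simp)
      (convex_ball (0:ℝ) q) h0t hut
    rw [zero_mul] at hmvt
    exact norm_sub_eq_zero_iff.mp (le_antisymm hmvt (norm_nonneg _))
  have hF0 : F 0 = 0 := by
    have h1 : F 0 = ∑' m, g m (0:ℝ) := rfl
    have h2 : ∀ m : ℕ, m ≠ 0 → g m (0:ℝ) = 0 := by
      intro m hm
      simp [hgdef, zero_pow hm]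
    rw [h1, tsum_eq_single 0 h2]
    simp [hgdef, bc]
  have hφ0 : φ 0 = 1 := by
    have h1 : φ 0 = (1 - F 0) * (1 - 0 : ℝ) ^ (-r) := rfl
    rw [h1, hF0]
    norm_num
  have hu1 : 0 < 1 - u := by
    cases abs_lt.mp hu
    linarith
  have hfinal : 1 - F u = (1 - u) ^ r := by
    have h := hconst.trans hφ0
    have h1 : φ u = (1 - F u) * (1 - u) ^ (-r) := rfl
    rw [h1, Real.rpow_neg hu1.le] at h
    have hpos : (0:ℝ) < (1 - u) ^ r := Real.rpow_pos_of_pos hu1 r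
    field_simp at h
    linarith [h]
  have hfin : HasSum (fun m => g m u) (F u) := (hsummable hut).hasSum
  rw [show F u = 1 - (1 - u) ^ r by linarith] at hfin
  exact hfin

end BinomialSeries

/-- If `D` is a nonzero GEDM, diagonalized as `A⁻¹ D A = diag δ`, and `0 < r < 1`, then
`(ρ(D) I - D)^r := A diag((ρ(D) - δ i)^r) A⁻¹` is an M-matrix, where
`ρ(D) = ⨆ i, |δ i|` is the spectral radius of `D`. -/
theorem stmt6 (n : ℕ) (L D : Matrix (Fin n) (Fin n) ℝ) (hL : L.PosSemidef)
    (hL1 : L *ᵥ (fun _ => (1 : ℝ)) = 0) (hL0 : L ≠ 0)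
    (a b : ℝ) (ha : 0 < a) (hb : 0 < b)
    (hD : ∀ i j, D i j = a ^ 2 * L i i + b ^ 2 * L j j - 2 * a * b * L i j)
    (A : Matrix (Fin n) (Fin n) ℝ) (hA : IsUnit A) (δ : Fin n → ℝ)
    (hdiag : A⁻¹ * D * A = Matrix.diagonal δ)
    (r : ℝ) (hr0 : 0 < r) (hr1 : r < 1) :
    IsMMatrix (A * Matrix.diagonal (fun i => ((⨆ k, |δ k|) - δ i) ^ r) * A⁻¹) := by
  classical
  rcases Nat.eq_zero_or_pos n with hn | hn
  · subst hn
    refine ⟨0, 0, fun i j => le_rfl, ?_, ?_⟩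
    · ext i j
      exact i.elim0
    · intro μ hμ
      exfalso
      rw [spectrum.mem_iff] at hμ
      apply hμ
      rw [Matrix.isUnit_iff_isUnit_det, Matrix.det_fin_zero]
      exact isUnit_one
  haveI : Nonempty (Fin n) := ⟨⟨0, hn⟩⟩
  set ρ : ℝ := ⨆ k, |δ k| with hρdef
  have hδρ : ∀ k, |δ k| ≤ ρ := fun k =>
    le_ciSup (f := fun k => |δ k|) (Set.Finite.bddAbove (Set.finite_range _)) k
  have hρ0 : 0 ≤ ρ := (abs_nonneg _).trans (hδρ ⟨0, hn⟩)
  have hAdet : IsUnit A.det := (Matrix.isUnit_iff_isUnit_det A).mp hA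
  have hAinv : A * A⁻¹ = 1 := Matrix.mul_nonsing_inv A hAdet
  have hAinv' : A⁻¹ * A = 1 := Matrix.nonsing_inv_mul A hAdet
  have hDeq : D = A * Matrix.diagonal δ * A⁻¹ := by
    rw [← hdiag]
    rw [Matrix.mul_assoc A⁻¹ D A, ← Matrix.mul_assoc A A⁻¹ (D * A), hAinv, Matrix.one_mul,
      Matrix.mul_assoc D A A⁻¹, hAinv, Matrix.mul_one]
  have hpow : ∀ m : ℕ, D ^ m = A * Matrix.diagonal (fun k => δ k ^ m) * A⁻¹ := by
    intro m
    induction m with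
    | zero =>
        have h1 : (fun k : Fin n => δ k ^ 0) = fun _ => (1:ℝ) := by
          funext k; rw [pow_zero]
        have h2 : Matrix.diagonal (fun _ : Fin n => (1:ℝ)) = 1 := by
          ext i j
          by_cases h : i = j <;> simp [Matrix.diagonal_apply, Matrix.one_apply, h]
        rw [pow_zero, h1, h2, Matrix.mul_one, hAinv]
    | succ m ih =>
        rw [pow_succ, ih, hDeq]
        rw [Matrix.mul_assoc (A * Matrix.diagonal (fun k => δ k ^ m)) A⁻¹
          (A * Matrix.diagonal δ * A⁻¹)]
        rw [← Matrix.mul_assoc A⁻¹ (A * Matrix.diagonal δ) A⁻¹,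
          ← Matrix.mul_assoc A⁻¹ A (Matrix.diagonal δ), hAinv', Matrix.one_mul]
        rw [← Matrix.mul_assoc (A * Matrix.diagonal (fun k => δ k ^ m))
          (Matrix.diagonal δ) A⁻¹]
        rw [Matrix.mul_assoc A (Matrix.diagonal (fun k => δ k ^ m)) (Matrix.diagonal δ),
          Matrix.diagonal_mul_diagonal]
        have h3 : (fun k => δ k ^ m * δ k) = fun k => δ k ^ (m+1) := by
          funext k; rw [pow_succ]
        rw [h3]
  have entry : ∀ (v : Fin n → ℝ) i j,
      (A * Matrix.diagonal v * A⁻¹) i j = ∑ k, A i k * v k * A⁻¹ k j := by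
    intro v i j
    rw [Matrix.mul_apply]
    apply Finset.sum_congr rfl
    intro k _
    rw [Matrix.mul_diagonal]
  -- nonnegativity of D entries
  have hD0 : ∀ i j, 0 ≤ D i j := by
    intro i j
    have hsym : L j i = L i j := by
      have := congrFun (congrFun hL.1 i) j
      simpa [Matrix.conjTranspose_apply] using this
    set x : Fin n → ℝ := fun k => a * (if k = i then 1 else 0) - b * (if k = j then 1 else 0)
      with hxdef
    have hx := hL.dotProduct_mulVec_nonneg x
    rw [star_trivial] at hx
    have hcalc : dotProduct x (L *ᵥ x) =
        a ^ 2 * L i i + b ^ 2 * L j j - a * b * L i j - a * b * L j i := by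
      simp only [dotProduct, Matrix.mulVec, dotProduct, hxdef]
      simp only [mul_sub, sub_mul, mul_ite, ite_mul, mul_zero, zero_mul, mul_one, one_mul,
        Finset.sum_sub_distrib, Finset.sum_ite_eq', Finset.mem_univ, if_true]
      ring
    rw [hcalc, hsym] at hx
    rw [hD i j]
    linarith
  have hDm0 : ∀ (m : ℕ) i j, 0 ≤ (D ^ m) i j := by
    intro m
    induction m with
    | zero =>
        intro i j
        rw [pow_zero]
        by_cases h : i = j <;> simp [Matrix.one_apply, h]
    | succ m ih =>
        intro i j
        rw [pow_succ, Matrix.mul_apply]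
        apply Finset.sum_nonneg
        intro k _
        exact mul_nonneg (ih i k) (hD0 k j)
  -- the main entrywise inequality
  have hMle : ∀ i j, (A * Matrix.diagonal (fun k => (ρ - δ k) ^ r) * A⁻¹) i j ≤
      ρ ^ r * (1 : Matrix (Fin n) (Fin n) ℝ) i j := by
    intro i j
    set f : ℝ → ℝ := fun ε => (ρ + ε) ^ r * (1 : Matrix (Fin n) (Fin n) ℝ) i j -
      ∑ k, A i k * ((ρ + ε) - δ k) ^ r * A⁻¹ k j with hfdef
    have hclaim : ∀ ε : ℝ, 0 < ε → 0 ≤ f ε := by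
      intro ε hε
      set t : ℝ := ρ + ε with htdef
      have ht0 : 0 < t := by rw [htdef]; linarith
      have htk : ∀ k, |δ k| < t := fun k => lt_of_le_of_lt (hδρ k) (by rw [htdef]; linarith)
      have hterm : ∀ k : Fin n, HasSum
          (fun m => (t ^ r * (A i k * A⁻¹ k j)) * (bc r m * (δ k / t) ^ m))
          ((t ^ r * (A i k * A⁻¹ k j)) * (1 - (1 - δ k / t) ^ r)) := by
        intro k
        have habs : |δ k / t| < 1 := by
          rw [abs_div, abs_of_pos ht0, div_lt_one ht0]
          exact htk k
        exact (bc_hasSum hr0 hr1 habs).mul_left _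
      have hval : ∀ k : Fin n, (t ^ r * (A i k * A⁻¹ k j)) * (1 - (1 - δ k / t) ^ r)
          = A i k * A⁻¹ k j * (t ^ r - (t - δ k) ^ r) := by
        intro k
        have h1 : (0:ℝ) ≤ 1 - δ k / t := by
          have : δ k / t ≤ |δ k / t| := le_abs_self _
          have h2 : |δ k / t| ≤ 1 := by
            rw [abs_div, abs_of_pos ht0, div_le_one ht0]
            exact (htk k).le
          linarith
        have h2 : (t - δ k) ^ r = t ^ r * (1 - δ k / t) ^ r := by
          rw [← Real.mul_rpow ht0.le h1]
          congr 1
          field_simp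
        rw [h2]
        ring
      have hsum : HasSum
          (fun m => ∑ k, (t ^ r * (A i k * A⁻¹ k j)) * (bc r m * (δ k / t) ^ m))
          (∑ k, (t ^ r * (A i k * A⁻¹ k j)) * (1 - (1 - δ k / t) ^ r)) :=
        hasSum_sum fun k _ => hterm k
      have hsumval : (∑ k, (t ^ r * (A i k * A⁻¹ k j)) * (1 - (1 - δ k / t) ^ r)) = f ε := by
        rw [hfdef]
        have hAA : ∑ k, A i k * A⁻¹ k j = (1 : Matrix (Fin n) (Fin n) ℝ) i j := by
          rw [← Matrix.mul_apply, hAinv]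
        calc (∑ k, (t ^ r * (A i k * A⁻¹ k j)) * (1 - (1 - δ k / t) ^ r))
            = ∑ k, A i k * A⁻¹ k j * (t ^ r - (t - δ k) ^ r) := by
              exact Finset.sum_congr rfl fun k _ => hval k
          _ = t ^ r * (∑ k, A i k * A⁻¹ k j) - ∑ k, A i k * (t - δ k) ^ r * A⁻¹ k j := by
              rw [Finset.mul_sum, ← Finset.sum_sub_distrib]
              exact Finset.sum_congr rfl fun k _ => by ring
          _ = t ^ r * (1 : Matrix (Fin n) (Fin n) ℝ) i j
              - ∑ k, A i k * (t - δ k) ^ r * A⁻¹ k j := by rw [hAA]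
      have htermval : ∀ m : ℕ,
          (∑ k, (t ^ r * (A i k * A⁻¹ k j)) * (bc r m * (δ k / t) ^ m))
          = bc r m * t ^ r * (t⁻¹) ^ m * (D ^ m) i j := by
        intro m
        rw [hpow m, entry]
        rw [Finset.mul_sum]
        apply Finset.sum_congr rfl
        intro k _
        rw [div_pow, div_eq_mul_inv, ← inv_pow]
        ring
      have hterm0 : ∀ m : ℕ, 0 ≤
          (∑ k, (t ^ r * (A i k * A⁻¹ k j)) * (bc r m * (δ k / t) ^ m)) := by
        intro m
        rw [htermval m]
        have h1 := bc_nonneg hr0 hr1 m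
        have h2 : (0:ℝ) ≤ t ^ r := Real.rpow_nonneg ht0.le r
        have h3 : (0:ℝ) ≤ (t⁻¹) ^ m := by positivity
        have h4 := hDm0 m i j
        positivity
      have : 0 ≤ (∑ k, (t ^ r * (A i k * A⁻¹ k j)) * (1 - (1 - δ k / t) ^ r)) := by
        rw [← hsum.tsum_eq]
        exact tsum_nonneg hterm0
      rw [hsumval] at this
      exact this
    -- pass to the limit ε → 0⁺
    have hcont : ContinuousAt f 0 := by
      rw [hfdef]
      apply ContinuousAt.sub
      · apply ContinuousAt.mul _ continuousAt_const
        have : ContinuousAt (fun x : ℝ => x ^ r) (ρ + 0) :=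
          Real.continuousAt_rpow_const _ _ (Or.inr hr0.le)
        exact this.comp (by fun_prop)
      · apply tendsto_finset_sum
        intro k _
        apply ContinuousAt.mul (ContinuousAt.mul continuousAt_const _) continuousAt_const
        have hin : ContinuousAt (fun ε : ℝ => ρ + ε - δ k) 0 := by fun_prop
        have hout : ContinuousAt (fun x : ℝ => x ^ r) (ρ + 0 - δ k) :=
          Real.continuousAt_rpow_const _ _ (Or.inr hr0.le)
        have hcomp := ContinuousAt.comp (x := (0:ℝ)) (f := fun ε : ℝ => ρ + ε - δ k) hout hin
        exact hcomp
    have htend : Filter.Tendsto f (nhdsWithin 0 (Set.Ioi 0)) (nhds (f 0)) :=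
      hcont.continuousWithinAt.tendsto
    have hev : ∀ᶠ ε in nhdsWithin 0 (Set.Ioi 0), 0 ≤ f ε :=
      Filter.eventually_of_mem self_mem_nhdsWithin fun ε hε => hclaim ε hε
    have hf0 : 0 ≤ f 0 := ge_of_tendsto htend hev
    rw [hfdef] at hf0
    simp only [add_zero] at hf0
    rw [entry]
    linarith [hf0]
  -- assemble the M-matrix structure
  set M : Matrix (Fin n) (Fin n) ℝ :=
    A * Matrix.diagonal (fun i => (ρ - δ i) ^ r) * A⁻¹ with hMdef
  refine ⟨ρ ^ r, ρ ^ r • (1 : Matrix (Fin n) (Fin n) ℝ) - M, ?_, (sub_sub_cancel _ _).symm, ?_⟩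
  · intro i j
    rw [Matrix.sub_apply, Matrix.smul_apply, smul_eq_mul]
    have := hMle i j
    rw [hMdef]
    linarith [this]
  · -- spectral bound
    intro μ hμ
    by_contra hcon
    push_neg at hcon
    set g : Fin n → ℝ := fun k => ρ ^ r - (ρ - δ k) ^ r with hgdef
    have hgb : ∀ k, |g k| ≤ ρ ^ r := by
      intro k
      have h1 : 0 ≤ ρ - δ k := by
        have := abs_le.mp (hδρ k)
        linarith [this.2]
      have h2 : ρ - δ k ≤ 2 * ρ := by
        have := abs_le.mp (hδρ k)
        linarith [this.1]
      have h3 : (0:ℝ) ≤ (ρ - δ k) ^ r := Real.rpow_nonneg h1 r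
      have h4 : (ρ - δ k) ^ r ≤ (2 * ρ) ^ r := Real.rpow_le_rpow h1 h2 hr0.le
      have h5 : (2 * ρ) ^ r = 2 ^ r * ρ ^ r := Real.mul_rpow (by norm_num) hρ0
      have h6 : (2:ℝ) ^ r ≤ 2 := by
        have := Real.rpow_le_rpow_of_exponent_le (x := 2) (by norm_num) hr1.le
        rwa [Real.rpow_one] at this
      have h7 : (ρ - δ k) ^ r ≤ 2 * ρ ^ r := by
        have hρr : (0:ℝ) ≤ ρ ^ r := Real.rpow_nonneg hρ0 r
        calc (ρ - δ k) ^ r ≤ 2 ^ r * ρ ^ r := h5 ▸ h4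
          _ ≤ 2 * ρ ^ r := mul_le_mul_of_nonneg_right h6 hρr
      show |ρ ^ r - (ρ - δ k) ^ r| ≤ ρ ^ r
      rw [abs_le]
      exact ⟨by linarith, by linarith⟩
    have hSdiag : ρ ^ r • (1 : Matrix (Fin n) (Fin n) ℝ) - M = A * Matrix.diagonal g * A⁻¹ := by
      have h1 : Matrix.diagonal g = Matrix.diagonal (fun _ : Fin n => ρ ^ r)
          - Matrix.diagonal (fun k => (ρ - δ k) ^ r) := by
        rw [← Matrix.diagonal_sub]
      have h2 : Matrix.diagonal (fun _ : Fin n => ρ ^ r) =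
          ρ ^ r • (1 : Matrix (Fin n) (Fin n) ℝ) := by
        ext i j
        by_cases h : i = j <;> simp [Matrix.diagonal_apply, Matrix.one_apply, h]
      rw [h1, Matrix.mul_sub, Matrix.sub_mul, h2, Matrix.mul_smul, Matrix.mul_one,
        Matrix.smul_mul, hAinv, hMdef]
    rw [hSdiag] at hμ
    rw [spectrum.mem_iff] at hμ
    apply hμ
    -- show that the resolvent is invertible
    set P : Matrix (Fin n) (Fin n) ℂ := A.map Complex.ofReal with hPdef
    set Q : Matrix (Fin n) (Fin n) ℂ := A⁻¹.map Complex.ofReal with hQdef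
    have hmapmul : ∀ (X Y : Matrix (Fin n) (Fin n) ℝ),
        (X * Y).map Complex.ofReal = X.map Complex.ofReal * Y.map Complex.ofReal := by
      intro X Y
      ext i j
      simp [Matrix.map_apply, Matrix.mul_apply]
    have hPQ : P * Q = 1 := by
      rw [hPdef, hQdef, ← hmapmul, hAinv]
      ext i j
      by_cases h : i = j <;> simp [Matrix.map_apply, Matrix.one_apply, h]
    have hQP : Q * P = 1 := by
      rw [hPdef, hQdef, ← hmapmul, hAinv']
      ext i j
      by_cases h : i = j <;> simp [Matrix.map_apply, Matrix.one_apply, h]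
    have hPunit : IsUnit P := by
      rw [Matrix.isUnit_iff_isUnit_det]
      apply IsUnit.of_mul_eq_one Q.det
      rw [← Matrix.det_mul, hPQ, Matrix.det_one]
    have hQunit : IsUnit Q := by
      rw [Matrix.isUnit_iff_isUnit_det]
      apply IsUnit.of_mul_eq_one P.det
      rw [← Matrix.det_mul, hQP, Matrix.det_one]
    have hmapdiag : (A * Matrix.diagonal g * A⁻¹).map Complex.ofReal =
        P * Matrix.diagonal (fun k => (g k : ℂ)) * Q := by
      rw [hmapmul, hmapmul]
      congr 1
      congr 1
      ext i j
      by_cases h : i = j <;> simp [Matrix.map_apply, Matrix.diagonal_apply, h]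
    rw [hmapdiag]
    have halg : algebraMap ℂ (Matrix (Fin n) (Fin n) ℂ) μ = μ • 1 :=
      Algebra.algebraMap_eq_smul_one μ
    have hconj : algebraMap ℂ (Matrix (Fin n) (Fin n) ℂ) μ
        - P * Matrix.diagonal (fun k => (g k : ℂ)) * Q
        = P * Matrix.diagonal (fun k => μ - (g k : ℂ)) * Q := by
      have hd : Matrix.diagonal (fun k => μ - (g k : ℂ)) =
          μ • (1 : Matrix (Fin n) (Fin n) ℂ) - Matrix.diagonal (fun k => (g k : ℂ)) := by
        ext i j
        by_cases h : i = j <;>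
          simp [Matrix.diagonal_apply, Matrix.one_apply, Matrix.sub_apply, h]
      rw [hd, Matrix.mul_sub, Matrix.sub_mul, halg]
      congr 1
      rw [Matrix.mul_smul, Matrix.mul_one, Matrix.smul_mul, hPQ]
    rw [hconj]
    have hdunit : IsUnit (Matrix.diagonal (fun k => μ - (g k : ℂ))) := by
      rw [Matrix.isUnit_iff_isUnit_det, Matrix.det_diagonal]
      rw [isUnit_iff_ne_zero]
      apply Finset.prod_ne_zero_iff.mpr
      intro k _
      intro hzero
      have : μ = (g k : ℂ) := by
        have := sub_eq_zero.mp hzero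
        exact this
      rw [this] at hcon
      rw [Complex.norm_real, Real.norm_eq_abs] at hcon
      exact absurd (hgb k) (not_le.mpr hcon)
    exact (hPunit.mul hdunit).mul hQunit
end

section
/- The null space of a generalized Euclidean distance matrix D is contained in the orthogonal complement of the all-ones vector: if Dx = 0 then 1'x = 0. -/
open Matrix

lemma trace_pos_of_ne_zero {n : ℕ} {L : Matrix (Fin n) (Fin n) ℝ} (hL : L.PosSemidef)
    (hL0 : L ≠ 0) : 0 < ∑ i, L i i := by
  have h0 := hL.trace_nonneg
  have hne : L.trace ≠ 0 := fun h => hL0 ((hL.trace_eq_zero_iff).mp h)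
  exact lt_of_le_of_ne h0 (Ne.symm hne)

/-- The null space of a (nonzero) GEDM is contained in `1ᗮ`: if `D x = 0` then `1ᵀ x = 0`. -/
theorem stmt7 (n : ℕ) (L D : Matrix (Fin n) (Fin n) ℝ) (hL : L.PosSemidef)
    (hL1 : L *ᵥ (fun _ => (1 : ℝ)) = 0) (hL0 : L ≠ 0)
    (a b : ℝ) (ha : 0 < a) (hb : 0 < b)
    (hD : ∀ i j, D i j = a ^ 2 * L i i + b ^ 2 * L j j - 2 * a * b * L i j)
    (x : Fin n → ℝ) (hx : D *ᵥ x = 0) :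
    (fun _ => (1 : ℝ)) ⬝ᵥ x = 0 := by
  have hpos : 0 < n := by
    rcases Nat.eq_zero_or_pos n with h | h
    · exfalso; apply hL0; subst h; ext i; exact absurd i.2 (by omega)
    · exact h
  have hn : (0:ℝ) < n := by exact_mod_cast hpos
  set s : ℝ := ∑ i, x i with hs
  set t : ℝ := ∑ i, L i i * x i with ht
  set tr : ℝ := ∑ i, L i i with htr
  have htrpos : 0 < tr := trace_pos_of_ne_zero hL hL0
  have hsym : ∀ i j, L j i = L i j := by
    intro i j
    have := congrFun (congrFun hL.1 i) j
    simpa using this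
  -- rowwise equation
  have hrow : ∀ i, a ^ 2 * L i i * s + b ^ 2 * t - 2 * a * b * (L *ᵥ x) i = 0 := by
    intro i
    have h0 : (D *ᵥ x) i = 0 := by rw [hx]; rfl
    have hsum0 : ∑ j, D i j * x j = 0 := h0
    calc a ^ 2 * L i i * s + b ^ 2 * t - 2 * a * b * (L *ᵥ x) i
        = ∑ j, (a ^ 2 * L i i + b ^ 2 * L j j - 2 * a * b * L i j) * x j := by
          simp only [hs, ht, Matrix.mulVec, dotProduct, Finset.mul_sum,
            ← Finset.sum_sub_distrib, ← Finset.sum_add_distrib]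
          refine Finset.sum_congr rfl fun j _ => by ring
      _ = ∑ j, D i j * x j := Finset.sum_congr rfl fun j _ => by rw [hD i j]
      _ = 0 := hsum0
  -- L1 = 0 gives row sums zero
  have hrowsum : ∀ i, ∑ j, L i j = 0 := by
    intro i
    have := congrFun hL1 i
    simpa [Matrix.mulVec, dotProduct] using this
  -- sum of (Lx)_i over i is zero
  have hsumLx : ∑ i, (L *ᵥ x) i = 0 := by
    simp only [Matrix.mulVec, dotProduct]
    rw [Finset.sum_comm]
    refine Finset.sum_eq_zero fun j _ => ?_
    rw [← Finset.sum_mul]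
    have hcol : ∑ i, L i j = 0 := by
      rw [← hrowsum j]
      exact Finset.sum_congr rfl fun i _ => hsym j i
    rw [hcol, zero_mul]
  -- sum over i of hrow
  have heq1 : a ^ 2 * s * tr + b ^ 2 * t * n = 0 := by
    have hsum : ∑ i, (a ^ 2 * L i i * s + b ^ 2 * t - 2 * a * b * (L *ᵥ x) i) = 0 :=
      Finset.sum_eq_zero fun i _ => hrow i
    have e1 : ∑ i, a ^ 2 * L i i * s = a ^ 2 * s * tr := by
      rw [htr, Finset.mul_sum]
      exact Finset.sum_congr rfl fun i _ => by ring
    have e2 : ∑ _i : Fin n, (b ^ 2 * t : ℝ) = b ^ 2 * t * n := by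
      rw [Finset.sum_const, Finset.card_univ, Fintype.card_fin, nsmul_eq_mul]; ring
    have e3 : ∑ i, 2 * a * b * (L *ᵥ x) i = 0 := by
      rw [← Finset.mul_sum, hsumLx, mul_zero]
    rw [Finset.sum_sub_distrib, Finset.sum_add_distrib, e1, e2, e3] at hsum
    linarith
  -- dot with x
  have hquad : 0 ≤ x ⬝ᵥ (L *ᵥ x) := by
    have := hL.dotProduct_mulVec_nonneg x
    simpa using this
  have heq2 : (a ^ 2 + b ^ 2) * (s * t) = 2 * a * b * (x ⬝ᵥ (L *ᵥ x)) := by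
    have hsum : ∑ i, (x i * (a ^ 2 * L i i * s) + x i * (b ^ 2 * t)
        - x i * (2 * a * b * (L *ᵥ x) i)) = 0 :=
      Finset.sum_eq_zero fun i _ => by linear_combination x i * hrow i
    have f1 : ∑ i, x i * (a ^ 2 * L i i * s) = a ^ 2 * s * t := by
      rw [ht, Finset.mul_sum]
      exact Finset.sum_congr rfl fun i _ => by ring
    have f2 : ∑ i, x i * (b ^ 2 * t) = b ^ 2 * t * s := by
      rw [← Finset.sum_mul, ← hs]; ring
    have f3 : ∑ i, x i * (2 * a * b * (L *ᵥ x) i) = 2 * a * b * (x ⬝ᵥ (L *ᵥ x)) := by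
      rw [dotProduct, Finset.mul_sum]
      exact Finset.sum_congr rfl fun i _ => by ring
    rw [Finset.sum_sub_distrib, Finset.sum_add_distrib, f1, f2, f3] at hsum
    linear_combination hsum
  have h1 : a ^ 2 * s ^ 2 * tr + b ^ 2 * (s * t) * n = 0 := by
    linear_combination s * heq1
  have hst_nonpos : s * t ≤ 0 := by
    nlinarith [h1, mul_nonneg (mul_nonneg (pow_pos ha 2).le (sq_nonneg s)) htrpos.le,
      mul_pos (pow_pos hb 2) hn]
  have hst_nonneg : 0 ≤ s * t := by
    nlinarith [heq2, hquad, mul_pos ha hb, pow_pos ha 2, pow_pos hb 2]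
  have hst : s * t = 0 := le_antisymm hst_nonpos hst_nonneg
  have hszero : s = 0 := by
    rw [hst] at h1
    have hs2 : s ^ 2 = 0 := by nlinarith [h1, mul_pos (pow_pos ha 2) htrpos, sq_nonneg s]
    exact pow_eq_zero_iff (by norm_num) |>.mp hs2
  simpa [dotProduct, hs] using hszero
end

section
/- For a nonzero generalized Euclidean distance matrix D, one has 1'D†1 = 0 if and only if there exists a vector f orthogonal to 1 with Df = 1, where D† denotes the Moore-Penrose inverse. -/
open Matrix

/-- `Dp` is the Moore-Penrose inverse of `D`. -/
def IsMoorePenrose {n : ℕ} (D Dp : Matrix (Fin n) (Fin n) ℝ) : Prop :=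
  D * Dp * D = D ∧ Dp * D * Dp = Dp ∧ (D * Dp)ᵀ = D * Dp ∧ (Dp * D)ᵀ = Dp * D

/-- For a nonzero GEDM `D`, `1ᵀ D† 1 = 0` iff some `f ⊥ 1` satisfies `D f = 1`. -/
theorem stmt9 (n : ℕ) (L D : Matrix (Fin n) (Fin n) ℝ) (hL : L.PosSemidef)
    (hL1 : L *ᵥ (fun _ => (1 : ℝ)) = 0) (hL0 : L ≠ 0)
    (a b : ℝ) (ha : 0 < a) (hb : 0 < b)
    (hD : ∀ i j, D i j = a ^ 2 * L i i + b ^ 2 * L j j - 2 * a * b * L i j)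
    (Dp : Matrix (Fin n) (Fin n) ℝ) (hDp : IsMoorePenrose D Dp) :
    (fun _ => (1 : ℝ)) ⬝ᵥ (Dp *ᵥ fun _ => (1 : ℝ)) = 0 ↔
    ∃ f : Fin n → ℝ, (fun _ => (1 : ℝ)) ⬝ᵥ f = 0 ∧ D *ᵥ f = fun _ => (1 : ℝ) := by
  rcases Nat.eq_zero_or_pos n with hn | hn
  · subst hn
    constructor
    · intro _
      exact ⟨0, by simp [dotProduct], by funext i; exact i.elim0⟩
    · intro _
      simp [dotProduct]
  set e : Fin n → ℝ := fun _ => (1 : ℝ) with he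
  set c : Fin n → ℝ := fun i => L i i with hc
  have hnpos : (0 : ℝ) < (n : ℝ) := by exact_mod_cast hn
  have hLsym : Lᵀ = L := hL.1
  have hq : ∀ z : Fin n → ℝ, 0 ≤ z ⬝ᵥ (L *ᵥ z) := fun z => by simpa using hL.dotProduct_mulVec_nonneg z
  have hLz : ∀ z : Fin n → ℝ, e ⬝ᵥ (L *ᵥ z) = 0 := by
    intro z
    rw [dotProduct_mulVec]
    have h0 : e ᵥ* L = 0 := by
      have := mulVec_transpose L e
      rw [hLsym] at this
      rw [← this, hL1]
    rw [h0, zero_dotProduct]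
  have hee : e ⬝ᵥ e = (n : ℝ) := by simp [he, dotProduct]
  -- trace positivity
  have ht : 0 < e ⬝ᵥ c := by
    obtain ⟨B, hB⟩ : ∃ B : Matrix (Fin n) (Fin n) ℝ, L = Bᵀ * B := by
      open scoped MatrixOrder in
      obtain ⟨B, hB⟩ := CStarAlgebra.nonneg_iff_eq_star_mul_self.mp hL.nonneg
      exact ⟨B, by rw [hB, star_eq_conjTranspose, conjTranspose_eq_transpose_of_trivial]⟩
    have hdiag : ∀ i, L i i = ∑ k, B k i * B k i := by
      intro i
      rw [hB]
      simp [Matrix.mul_apply]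
    have hec : e ⬝ᵥ c = ∑ i, ∑ k, B k i * B k i := by
      simp only [dotProduct, he, hc, one_mul]
      exact Finset.sum_congr rfl fun i _ => hdiag i
    have hnn : 0 ≤ e ⬝ᵥ c := by
      rw [hec]
      exact Finset.sum_nonneg fun i _ => Finset.sum_nonneg fun k _ => mul_self_nonneg _
    rcases lt_or_eq_of_le hnn with h | h
    · exact h
    · exfalso
      apply hL0
      have hB0 : B = 0 := by
        ext k i
        have h1 : ∑ i, ∑ k, B k i * B k i = 0 := by rw [← hec, ← h]
        have h2 := (Finset.sum_eq_zero_iff_of_nonneg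
          (fun i _ => Finset.sum_nonneg fun k _ => mul_self_nonneg (B k i))).mp h1 i
          (Finset.mem_univ i)
        have h3 := (Finset.sum_eq_zero_iff_of_nonneg
          (fun k _ => mul_self_nonneg (B k i))).mp h2 k (Finset.mem_univ k)
        simpa [mul_self_eq_zero] using h3
      rw [hB, hB0]
      simp
  -- matrix decomposition of D
  have hDmat : D = a ^ 2 • vecMulVec c e + b ^ 2 • vecMulVec e c - (2 * a * b) • L := by
    ext i j
    simp [vecMulVec_apply, hD, hc, he]
  have hDTmat : Dᵀ = a ^ 2 • vecMulVec e c + b ^ 2 • vecMulVec c e - (2 * a * b) • L := by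
    ext i j
    have hsym : L j i = L i j := congrFun (congrFun hLsym i) j
    simp [vecMulVec_apply, hD, hc, he, hsym]
  have hvmv : ∀ (x y z : Fin n → ℝ), (vecMulVec x y) *ᵥ z = (y ⬝ᵥ z) • x := by
    intro x y z
    funext i
    simp only [vecMulVec_apply, mulVec, dotProduct, Pi.smul_apply, smul_eq_mul,
      Finset.sum_mul, Finset.mul_sum]
    exact Finset.sum_congr rfl fun j _ => by ring
  have hdot : ∀ w z : Fin n → ℝ, w ⬝ᵥ (D *ᵥ z) =
      a ^ 2 * ((e ⬝ᵥ z) * (w ⬝ᵥ c)) + b ^ 2 * ((c ⬝ᵥ z) * (w ⬝ᵥ e))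
        - 2 * a * b * (w ⬝ᵥ (L *ᵥ z)) := by
    intro w z
    rw [hDmat]
    rw [sub_mulVec, add_mulVec, smul_mulVec, smul_mulVec, smul_mulVec,
      hvmv, hvmv, dotProduct_sub, dotProduct_add]
    simp only [dotProduct_smul, smul_eq_mul]
  have hdotT : ∀ w z : Fin n → ℝ, w ⬝ᵥ (Dᵀ *ᵥ z) =
      a ^ 2 * ((c ⬝ᵥ z) * (w ⬝ᵥ e)) + b ^ 2 * ((e ⬝ᵥ z) * (w ⬝ᵥ c))
        - 2 * a * b * (w ⬝ᵥ (L *ᵥ z)) := by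
    intro w z
    rw [hDTmat]
    rw [sub_mulVec, add_mulVec, smul_mulVec, smul_mulVec, smul_mulVec,
      hvmv, hvmv, dotProduct_sub, dotProduct_add]
    simp only [dotProduct_smul, smul_eq_mul]
  -- kernel of D is orthogonal to e
  have kerD : ∀ z : Fin n → ℝ, D *ᵥ z = 0 → e ⬝ᵥ z = 0 := by
    intro z hz
    have h1 := hdot e z
    rw [hz, dotProduct_zero, hLz z, hee] at h1
    have h2 := hdot z z
    rw [hz, dotProduct_zero, dotProduct_comm z c, dotProduct_comm z e] at h2
    set s := e ⬝ᵥ z with hs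
    set u := c ⬝ᵥ z with hu
    set t := e ⬝ᵥ c with htt
    set q := z ⬝ᵥ (L *ᵥ z) with hqq
    have hqnn : 0 ≤ q := hq z
    have key : (a ^ 2 + b ^ 2) * a ^ 2 * t * s ^ 2 = -(2 * a * b * ((n : ℝ) * b ^ 2) * q) := by
      linear_combination (-((a ^ 2 + b ^ 2) * s)) * h1 + ((n : ℝ) * b ^ 2) * h2
    have hC : 0 < (a ^ 2 + b ^ 2) * a ^ 2 * t := by positivity
    have hrhs : 0 < 2 * a * b * ((n : ℝ) * b ^ 2) := by positivity
    have hs2 : s ^ 2 ≤ 0 := by nlinarith [key, hC, hrhs, hqnn, sq_nonneg s]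
    have : s ^ 2 = 0 := le_antisymm hs2 (sq_nonneg s)
    exact sq_eq_zero_iff.mp this
  have kerDT : ∀ z : Fin n → ℝ, Dᵀ *ᵥ z = 0 → e ⬝ᵥ z = 0 := by
    intro z hz
    have h1 := hdotT e z
    rw [hz, dotProduct_zero, hLz z, hee] at h1
    have h2 := hdotT z z
    rw [hz, dotProduct_zero, dotProduct_comm z c, dotProduct_comm z e] at h2
    set s := e ⬝ᵥ z with hs
    set u := c ⬝ᵥ z with hu
    set t := e ⬝ᵥ c with htt
    set q := z ⬝ᵥ (L *ᵥ z) with hqq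
    have hqnn : 0 ≤ q := hq z
    have key : (a ^ 2 + b ^ 2) * b ^ 2 * t * s ^ 2 = -(2 * a * b * ((n : ℝ) * a ^ 2) * q) := by
      linear_combination (-((a ^ 2 + b ^ 2) * s)) * h1 + ((n : ℝ) * a ^ 2) * h2
    have hC : 0 < (a ^ 2 + b ^ 2) * b ^ 2 * t := by positivity
    have hrhs : 0 < 2 * a * b * ((n : ℝ) * a ^ 2) := by positivity
    have hs2 : s ^ 2 ≤ 0 := by nlinarith [key, hC, hrhs, hqnn, sq_nonneg s]
    have : s ^ 2 = 0 := le_antisymm hs2 (sq_nonneg s)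
    exact sq_eq_zero_iff.mp this
  constructor
  · intro h
    refine ⟨Dp *ᵥ e, h, ?_⟩
    set z := e - D *ᵥ (Dp *ᵥ e) with hzdef
    have hDz : Dᵀ *ᵥ z = 0 := by
      rw [hzdef, mulVec_sub, mulVec_mulVec, mulVec_mulVec]
      have hkey : Dᵀ * D * Dp = Dᵀ := by
        calc Dᵀ * D * Dp = Dᵀ * (D * Dp) := by rw [mul_assoc]
          _ = Dᵀ * (D * Dp)ᵀ := by rw [hDp.2.2.1]
          _ = (D * Dp * D)ᵀ := by rw [← transpose_mul]
          _ = Dᵀ := by rw [hDp.1]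
      rw [hkey, sub_self]
    have hez : e ⬝ᵥ z = 0 := kerDT z hDz
    have hwz : (D *ᵥ (Dp *ᵥ e)) ⬝ᵥ z = 0 := by
      rw [dotProduct_comm, dotProduct_mulVec]
      have : z ᵥ* D = Dᵀ *ᵥ z := (mulVec_transpose D z).symm
      rw [this, hDz, zero_dotProduct]
    have hzz : z ⬝ᵥ z = 0 := by
      have h1 : (e - D *ᵥ (Dp *ᵥ e)) ⬝ᵥ z = 0 := by
        rw [sub_dotProduct, hez, hwz, sub_zero]
      rw [← hzdef] at h1
      exact h1
    have hz0 : z = 0 := dotProduct_self_eq_zero.mp hzz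
    have : e - D *ᵥ (Dp *ᵥ e) = 0 := hzdef ▸ hz0
    have := sub_eq_zero.mp this
    exact this.symm
  · rintro ⟨f, hf0, hfD⟩
    have hg : Dp *ᵥ e = (Dp * D) *ᵥ f := by rw [← hfD, mulVec_mulVec]
    have hker : D *ᵥ (f - (Dp * D) *ᵥ f) = 0 := by
      rw [mulVec_sub, mulVec_mulVec]
      have : D * (Dp * D) = D := by rw [← mul_assoc, hDp.1]
      rw [this, sub_self]
    have h2 := kerD _ hker
    rw [dotProduct_sub] at h2
    rw [hg]
    linarith [hf0, h2]
end

section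
/- For a nonzero generalized Euclidean distance matrix D, the following are equivalent: (a) 1'D†1 ≠ 0; (b) null(D) = null(D') = null(L) ∩ 1⊥. -/
open Matrix

section Aux

variable {n : ℕ} {L D : Matrix (Fin n) (Fin n) ℝ} {a b : ℝ}

lemma gedm_mulVec_apply
    (hD : ∀ i j, D i j = a ^ 2 * L i i + b ^ 2 * L j j - 2 * a * b * L i j)
    (x : Fin n → ℝ) (i : Fin n) :
    (D *ᵥ x) i = a ^ 2 * L i i * (∑ j, x j) + b ^ 2 * (∑ j, L j j * x j)
      - 2 * a * b * ((L *ᵥ x) i) := by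
  simp only [mulVec, dotProduct]
  calc ∑ j, D i j * x j
      = ∑ j, (a ^ 2 * L i i * x j + b ^ 2 * (L j j * x j) - 2 * a * b * (L i j * x j)) :=
        Finset.sum_congr rfl fun j _ => by rw [hD]; ring
    _ = _ := by
        rw [Finset.sum_sub_distrib, Finset.sum_add_distrib, ← Finset.mul_sum, ← Finset.mul_sum,
          ← Finset.mul_sum]

lemma gedm_trace_pos (hL : L.PosSemidef) (hL0 : L ≠ 0) : 0 < ∑ i, L i i := by
  classical
  have hdiag : ∀ i, 0 ≤ L i i := fun i => by
    have h := hL.dotProduct_mulVec_nonneg (Pi.single i 1)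
    simpa [dotProduct, mulVec, Pi.single_apply] using h
  have hne : ∃ i, L i i ≠ 0 := by
    by_contra hc
    push_neg at hc
    apply hL0
    ext i j
    have h0 : star (Pi.single j (1:ℝ)) ⬝ᵥ L *ᵥ (Pi.single j 1) = 0 := by
      simpa [dotProduct, mulVec, Pi.single_apply] using hc j
    have h1 : L *ᵥ Pi.single j (1:ℝ) = 0 := (hL.dotProduct_mulVec_zero_iff _).mp h0
    have h2 := congrFun h1 i
    simpa [mulVec, dotProduct, Pi.single_apply] using h2
  obtain ⟨i, hi⟩ := hne
  exact Finset.sum_pos' (fun j _ => hdiag j)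
    ⟨i, Finset.mem_univ i, lt_of_le_of_ne (hdiag i) (Ne.symm hi)⟩

lemma gedm_quad
    (hD : ∀ i j, D i j = a ^ 2 * L i i + b ^ 2 * L j j - 2 * a * b * L i j)
    (v : Fin n → ℝ) :
    v ⬝ᵥ (D *ᵥ v) = (a ^ 2 + b ^ 2) * ((∑ j, v j) * (∑ j, L j j * v j))
      - 2 * a * b * (v ⬝ᵥ (L *ᵥ v)) := by
  simp only [dotProduct]
  calc ∑ i, v i * (D *ᵥ v) i
      = ∑ i, ((a ^ 2 * ((∑ j, v j)) * (L i i * v i) + b ^ 2 * (∑ j, L j j * v j) * v i)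
          - 2 * a * b * (v i * (L *ᵥ v) i)) :=
        Finset.sum_congr rfl fun i _ => by rw [gedm_mulVec_apply hD]; ring
    _ = _ := by
        rw [Finset.sum_sub_distrib, Finset.sum_add_distrib, ← Finset.mul_sum, ← Finset.mul_sum,
          ← Finset.mul_sum]
        ring

lemma gedm_col_sum (hL : L.PosSemidef) (hL1 : L *ᵥ (fun _ => (1 : ℝ)) = 0) (j : Fin n) :
    ∑ i, L i j = 0 := by
  have hsymm : ∀ i k : Fin n, L i k = L k i := fun i k => by
    have h := congrFun (congrFun hL.1 i) k
    simpa [conjTranspose_apply] using h.symm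
  have hrow : ∑ k, L j k = 0 := by
    have h := congrFun hL1 j
    simpa [mulVec, dotProduct] using h
  calc ∑ i, L i j = ∑ i, L j i := Finset.sum_congr rfl fun i _ => hsymm i j
    _ = 0 := hrow

lemma gedm_sum (hL : L.PosSemidef) (hL1 : L *ᵥ (fun _ => (1 : ℝ)) = 0)
    (hD : ∀ i j, D i j = a ^ 2 * L i i + b ^ 2 * L j j - 2 * a * b * L i j)
    (v : Fin n → ℝ) :
    ∑ i, (D *ᵥ v) i = a ^ 2 * (∑ i, L i i) * (∑ j, v j)
      + b ^ 2 * n * (∑ j, L j j * v j) := by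
  have hLsum : ∑ i, (L *ᵥ v) i = 0 := by
    simp only [mulVec, dotProduct]
    calc ∑ i, ∑ j, L i j * v j = ∑ j, ∑ i, L i j * v j := Finset.sum_comm
      _ = ∑ j, (∑ i, L i j) * v j := by simp [Finset.sum_mul]
      _ = 0 := by simp [gedm_col_sum hL hL1]
  have e1 : ∑ i, (a ^ 2 * (∑ j, v j) * L i i) = a ^ 2 * (∑ i, L i i) * (∑ j, v j) := by
    rw [← Finset.mul_sum]; ring
  have e2 : ∑ _i : Fin n, (b ^ 2 * (∑ j, L j j * v j)) = b ^ 2 * n * (∑ j, L j j * v j) := by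
    rw [Finset.sum_const, Finset.card_univ, Fintype.card_fin, nsmul_eq_mul]; ring
  have e3 : ∑ i, (2 * a * b * ((L *ᵥ v) i)) = 0 := by
    rw [← Finset.mul_sum, hLsum, mul_zero]
  calc ∑ i, (D *ᵥ v) i
      = ∑ i, (a ^ 2 * (∑ j, v j) * L i i + b ^ 2 * (∑ j, L j j * v j)
          - 2 * a * b * ((L *ᵥ v) i)) :=
        Finset.sum_congr rfl fun i _ => by rw [gedm_mulVec_apply hD]; ring
    _ = _ := by
        rw [Finset.sum_sub_distrib, Finset.sum_add_distrib, e1, e2, e3, sub_zero]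

lemma gedm_kernel (hL : L.PosSemidef) (hL1 : L *ᵥ (fun _ => (1 : ℝ)) = 0)
    (ha : 0 < a) (hb : 0 < b) (hτ : 0 < ∑ i, L i i)
    (hD : ∀ i j, D i j = a ^ 2 * L i i + b ^ 2 * L j j - 2 * a * b * L i j)
    (x : Fin n → ℝ) :
    D *ᵥ x = 0 ↔ L *ᵥ x = 0 ∧ (∑ j, x j) = 0 ∧ (∑ j, L j j * x j) = 0 := by
  have hn : 0 < n := Nat.pos_of_ne_zero (fun h => by subst h; simp at hτ)
  constructor
  · intro h
    have hE1 : a ^ 2 * (∑ i, L i i) * (∑ j, x j) + b ^ 2 * n * (∑ j, L j j * x j) = 0 := by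
      rw [← gedm_sum hL hL1 hD x, h]
      simp
    have hE2 : (a ^ 2 + b ^ 2) * ((∑ j, x j) * (∑ j, L j j * x j))
        - 2 * a * b * (x ⬝ᵥ (L *ᵥ x)) = 0 := by
      rw [← gedm_quad hD x, h]
      simp
    have hq : 0 ≤ x ⬝ᵥ (L *ᵥ x) := by
      have h2 := hL.dotProduct_mulVec_nonneg x
      simpa using h2
    set S := ∑ j, x j with hS
    set T := ∑ j, L j j * x j with hT
    set τ := ∑ i, L i i with hτ'
    set q := x ⬝ᵥ (L *ᵥ x) with hqd
    have hbn : (0:ℝ) < b ^ 2 * (n : ℝ) := by positivity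
    have hST : b ^ 2 * (n : ℝ) * (S * T) = - (a ^ 2 * τ * S ^ 2) := by
      linear_combination S * hE1
    have hS2 : 0 ≤ a ^ 2 * τ * S ^ 2 := by positivity
    have hSTle : S * T ≤ 0 := by nlinarith
    have hqle : q ≤ 0 := by nlinarith [sq_nonneg a, sq_nonneg b, mul_pos ha hb]
    have hq0 : q = 0 := le_antisymm hqle hq
    have hST0 : S * T = 0 := by
      have h5 : (a ^ 2 + b ^ 2) * (S * T) = 0 := by rw [hq0] at hE2; linarith
      have h6 : a ^ 2 + b ^ 2 ≠ 0 := by positivity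
      exact (mul_eq_zero.mp h5).resolve_left h6
    have hS0 : S = 0 := by
      have h5 : a ^ 2 * τ * S ^ 2 = 0 := by rw [hST0, mul_zero] at hST; linarith
      have h6 : S ^ 2 = 0 := by
        have h7 : a ^ 2 * τ ≠ 0 := by positivity
        exact (mul_eq_zero.mp h5).resolve_left h7
      exact pow_eq_zero_iff two_ne_zero |>.mp h6
    have hT0 : T = 0 := by
      rw [hS0] at hE1
      have h5 : b ^ 2 * (n : ℝ) * T = 0 := by linear_combination hE1
      exact (mul_eq_zero.mp h5).resolve_left hbn.ne'
    have hLx : L *ᵥ x = 0 := by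
      apply (hL.dotProduct_mulVec_zero_iff x).mp
      simpa using hq0
    exact ⟨hLx, hS0, hT0⟩
  · rintro ⟨h1, h2, h3⟩
    funext i
    rw [gedm_mulVec_apply hD, h2, h3, congrFun h1 i]
    simp

end Aux

/-- For a nonzero GEDM `D`: `1ᵀ D† 1 ≠ 0` iff
`null(D) = null(Dᵀ) = null(L) ∩ 1ᗮ`. -/
theorem stmt10 (n : ℕ) (L D : Matrix (Fin n) (Fin n) ℝ) (hL : L.PosSemidef)
    (hL1 : L *ᵥ (fun _ => (1 : ℝ)) = 0) (hL0 : L ≠ 0)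
    (a b : ℝ) (ha : 0 < a) (hb : 0 < b)
    (hD : ∀ i j, D i j = a ^ 2 * L i i + b ^ 2 * L j j - 2 * a * b * L i j)
    (Dp : Matrix (Fin n) (Fin n) ℝ) (hDp : IsMoorePenrose D Dp) :
    (fun _ => (1 : ℝ)) ⬝ᵥ (Dp *ᵥ fun _ => (1 : ℝ)) ≠ 0 ↔
    ({x : Fin n → ℝ | D *ᵥ x = 0} = {x : Fin n → ℝ | Dᵀ *ᵥ x = 0} ∧
     {x : Fin n → ℝ | D *ᵥ x = 0} =
       {x : Fin n → ℝ | L *ᵥ x = 0 ∧ (fun _ => (1 : ℝ)) ⬝ᵥ x = 0}) := by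
  obtain ⟨h1, h2, h3, h4⟩ := hDp
  have hτ : 0 < ∑ i, L i i := gedm_trace_pos hL hL0
  have hn : 0 < n := Nat.pos_of_ne_zero (fun h => by subst h; simp at hτ)
  have hsymm : ∀ i j : Fin n, L i j = L j i := fun i j => by
    have h := congrFun (congrFun hL.1 i) j
    simpa [conjTranspose_apply] using h.symm
  have hDT : ∀ i j, Dᵀ i j = b ^ 2 * L i i + a ^ 2 * L j j - 2 * b * a * L i j := fun i j => by
    rw [transpose_apply, hD, hsymm j i]; ring
  have charD := gedm_kernel hL hL1 ha hb hτ hD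
  have charT := gedm_kernel hL hL1 hb ha hτ hDT
  set e : Fin n → ℝ := fun _ => (1 : ℝ) with he
  have hdot : ∀ v : Fin n → ℝ, e ⬝ᵥ v = ∑ j, v j := fun v => by simp [dotProduct, he]
  have hdot' : ∀ v : Fin n → ℝ, v ⬝ᵥ e = ∑ j, v j := fun v => by simp [dotProduct, he]
  constructor
  · intro hα
    constructor
    · ext x
      simp only [Set.mem_setOf_eq]
      rw [charD x, charT x]
    · ext x
      simp only [Set.mem_setOf_eq, charD x, hdot x]
      constructor
      · rintro ⟨hx1, hx2, -⟩
        exact ⟨hx1, hx2⟩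
      · rintro ⟨hx1, hx2⟩
        refine ⟨hx1, hx2, ?_⟩
        by_contra hδ
        set δ := ∑ j, L j j * x j with hδdef
        have hDz : D *ᵥ x = fun _ => b ^ 2 * δ := by
          funext i
          rw [gedm_mulVec_apply hD, hx2, congrFun hx1 i, Pi.zero_apply, ← hδdef]
          ring
        have hDTz : Dᵀ *ᵥ x = fun _ => a ^ 2 * δ := by
          funext i
          rw [gedm_mulVec_apply hDT, hx2, congrFun hx1 i, Pi.zero_apply, ← hδdef]
          ring
        have e1 : (Dᵀ *ᵥ x) ⬝ᵥ (Dp *ᵥ (D *ᵥ x)) = x ⬝ᵥ (D *ᵥ x) := by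
          rw [mulVec_transpose, ← dotProduct_mulVec, mulVec_mulVec, mulVec_mulVec, h1]
        have e2 : (Dᵀ *ᵥ x) ⬝ᵥ (Dp *ᵥ (D *ᵥ x))
            = (a ^ 2 * δ) * ((b ^ 2 * δ) * (e ⬝ᵥ (Dp *ᵥ e))) := by
          rw [hDz, hDTz]
          have h5 : (fun _ : Fin n => a ^ 2 * δ) = (a ^ 2 * δ) • e := by funext i; simp [he]
          have h6 : (fun _ : Fin n => b ^ 2 * δ) = (b ^ 2 * δ) • e := by funext i; simp [he]
          rw [h5, h6, smul_dotProduct, mulVec_smul, dotProduct_smul, smul_eq_mul, smul_eq_mul]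
        have e3 : x ⬝ᵥ (D *ᵥ x) = 0 := by
          rw [hDz]
          simp only [dotProduct]
          rw [← Finset.sum_mul, hx2, zero_mul]
        have hzero : (a ^ 2 * δ) * ((b ^ 2 * δ) * (e ⬝ᵥ (Dp *ᵥ e))) = 0 := by
          rw [← e2, e1, e3]
        have hc1 : a ^ 2 * δ ≠ 0 := mul_ne_zero (by positivity) hδ
        have hc2 : b ^ 2 * δ ≠ 0 := mul_ne_zero (by positivity) hδ
        have hzero2 : b ^ 2 * δ * (e ⬝ᵥ (Dp *ᵥ e)) = 0 :=
          (mul_eq_zero.mp hzero).resolve_left hc1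
        exact hα ((mul_eq_zero.mp hzero2).resolve_left hc2)
  · rintro ⟨-, hset2⟩ hα0
    have hi : ∀ v : Fin n → ℝ, L *ᵥ v = 0 → (∑ j, v j) = 0 → (∑ j, L j j * v j) = 0 := by
      intro v hv1 hv2
      have hv : v ∈ {x : Fin n → ℝ | L *ᵥ x = 0 ∧ e ⬝ᵥ x = 0} := ⟨hv1, by rw [hdot v]; exact hv2⟩
      rw [← hset2] at hv
      exact ((charD v).mp hv).2.2
    set y := Dp *ᵥ e with hy
    set ρ := e - D *ᵥ y with hρ
    have hSy : ∑ j, y j = 0 := by rw [← hdot y]; exact hα0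
    have hDTρ : Dᵀ *ᵥ ρ = 0 := by
      have hm : Dᵀ * (D * Dp) = Dᵀ := by
        calc Dᵀ * (D * Dp) = Dᵀ * (D * Dp)ᵀ := by rw [h3]
          _ = Dᵀ * (Dpᵀ * Dᵀ) := by rw [transpose_mul]
          _ = (D * Dp * D)ᵀ := by rw [transpose_mul, transpose_mul]
          _ = Dᵀ := by rw [h1]
      rw [hρ, mulVec_sub, hy, mulVec_mulVec, mulVec_mulVec, Matrix.mul_assoc, hm, sub_self]
    obtain ⟨hLρ, hSρ, hTρ⟩ := (charT ρ).mp hDTρ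
    have hDρ : D *ᵥ ρ = 0 := (charD ρ).mpr ⟨hLρ, hSρ, hTρ⟩
    have hDpTρ : Dpᵀ *ᵥ ρ = 0 := by
      have hm : Dpᵀ = Dpᵀ * (Dp * D) := by
        calc Dpᵀ = (Dp * D * Dp)ᵀ := by rw [h2]
          _ = Dpᵀ * (Dp * D)ᵀ := by rw [transpose_mul]
          _ = Dpᵀ * (Dp * D) := by rw [h4]
      rw [hm, ← mulVec_mulVec, ← mulVec_mulVec, hDρ, mulVec_zero, mulVec_zero]
    have hyρ : y ⬝ᵥ ρ = 0 := by
      rw [dotProduct_comm, hy, dotProduct_mulVec]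
      have : ρ ᵥ* Dp = 0 := by rw [← mulVec_transpose, hDpTρ]
      rw [this, zero_dotProduct]
    have hyDy : y ⬝ᵥ (D *ᵥ y) = 0 := by
      have hde : D *ᵥ y = e - ρ := by rw [hρ]; abel
      rw [hde, dotProduct_sub, hyρ, hdot' y, hSy, sub_zero]
    have hq : y ⬝ᵥ (L *ᵥ y) = 0 := by
      have hqd := gedm_quad hD y
      rw [hyDy, hSy] at hqd
      have hab : (0:ℝ) < 2 * a * b := by positivity
      nlinarith
    have hLy : L *ᵥ y = 0 := by
      apply (hL.dotProduct_mulVec_zero_iff y).mp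
      simpa using hq
    have hTy : ∑ j, L j j * y j = 0 := hi y hLy hSy
    have h7 : ∑ i, (D *ᵥ y) i = 0 := by
      rw [gedm_sum hL hL1 hD y, hSy, hTy]
      ring
    have h8 : (n : ℝ) = 0 := by
      have h9 : ∑ i, ρ i = (n : ℝ) - ∑ i, (D *ᵥ y) i := by
        rw [hρ]
        simp only [Pi.sub_apply]
        rw [Finset.sum_sub_distrib]
        congr 1
        simp [he]
      rw [hSρ, h7, sub_zero] at h9
      exact h9.symm
    exact absurd (Nat.cast_eq_zero.mp h8) hn.ne'
end

section
/- For a generalized Euclidean distance matrix D built from L with parameters a, b, the null space of D equals the null space of E := L̃J + JL̃ - 2L, where L̃ = Diag(diag(L)) and J = 11'. In particular null(D) is independent of a and b. -/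
open Matrix

/-- Key characterization: the null space of `a²·s·d + b²·t·1 - 2ab·Lx` is independent of `a,b`. -/
lemma gedm_key {n : ℕ} {L : Matrix (Fin n) (Fin n) ℝ} (hL : L.PosSemidef)
    (hL1 : L *ᵥ (fun _ => (1 : ℝ)) = 0) (a b : ℝ) (ha : 0 < a) (hb : 0 < b)
    (x : Fin n → ℝ) :
    (∀ i, a ^ 2 * ((∑ j, x j) * L i i) + b ^ 2 * (∑ j, L j j * x j)
        - 2 * a * b * (L *ᵥ x) i = 0)
    ↔ (L *ᵥ x = 0 ∧ (∀ i, (∑ j, x j) * L i i = 0) ∧ ∀ _ : Fin n, (∑ j, L j j * x j) = 0) := by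
  constructor
  · intro h
    set s : ℝ := ∑ j, x j with hs
    set t : ℝ := ∑ j, L j j * x j with ht
    set T : ℝ := ∑ i, L i i with hT
    clear_value s t T
    -- diagonal entries are nonnegative
    have hd : ∀ i, 0 ≤ L i i := by
      intro i
      have := hL.dotProduct_mulVec_nonneg (Pi.single i 1)
      simpa [Matrix.mulVec, dotProduct, Pi.single_apply, Finset.mul_sum,
        Finset.sum_ite_eq, Finset.sum_ite_eq'] using this
    have hT0 : 0 ≤ T := by rw [hT]; exact Finset.sum_nonneg fun i _ => hd i
    -- quadratic form is nonnegative
    have hq : 0 ≤ x ⬝ᵥ (L *ᵥ x) := by simpa using hL.dotProduct_mulVec_nonneg x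
    -- ∑ i (L x) i = 0
    have hrow : ∑ i, (L *ᵥ x) i = 0 := by
      have h1 : (fun _ => (1 : ℝ)) ⬝ᵥ (L *ᵥ x) = 0 := by
        rw [Matrix.dotProduct_mulVec]
        have hv : (fun _ => (1 : ℝ)) ᵥ* L = 0 := by
          have hsymm : Lᵀ = L := hL.1
          rw [← Matrix.mulVec_transpose, hsymm, hL1]
        rw [hv, zero_dotProduct]
      simpa [dotProduct] using h1
    -- sum the equations over i
    have eq1 : a ^ 2 * s * T + (n : ℝ) * (b ^ 2 * t) = 0 := by
      have hsum : ∑ i : Fin n, (a ^ 2 * (s * L i i) + b ^ 2 * t - 2 * a * b * (L *ᵥ x) i)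
          = 0 := Finset.sum_eq_zero fun i _ => h i
      have e1 : ∑ i : Fin n, a ^ 2 * (s * L i i) = a ^ 2 * s * T := by
        rw [hT, Finset.mul_sum]
        exact Finset.sum_congr rfl fun i _ => by ring
      have e2 : ∑ _i : Fin n, b ^ 2 * t = (n : ℝ) * (b ^ 2 * t) := by
        simp [Finset.sum_const, nsmul_eq_mul]
      have e3 : ∑ i : Fin n, 2 * a * b * (L *ᵥ x) i = 0 := by
        rw [← Finset.mul_sum, hrow, mul_zero]
      rw [Finset.sum_sub_distrib, Finset.sum_add_distrib, e1, e2, e3] at hsum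
      linarith
    -- dot with x
    have eq2 : a ^ 2 * s * t + b ^ 2 * t * s = 2 * a * b * (x ⬝ᵥ (L *ᵥ x)) := by
      have hsum : ∑ i : Fin n,
          x i * (a ^ 2 * (s * L i i) + b ^ 2 * t - 2 * a * b * (L *ᵥ x) i) = 0 :=
        Finset.sum_eq_zero fun i _ => by rw [h i, mul_zero]
      simp only [mul_sub, mul_add, Finset.sum_sub_distrib, Finset.sum_add_distrib] at hsum
      have e1 : ∑ i : Fin n, x i * (a ^ 2 * (s * L i i)) = a ^ 2 * s * t := by
        rw [ht, Finset.mul_sum]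
        exact Finset.sum_congr rfl fun i _ => by ring
      have e2 : ∑ i : Fin n, x i * (b ^ 2 * t) = b ^ 2 * t * s := by
        rw [hs, Finset.mul_sum]
        exact Finset.sum_congr rfl fun i _ => by ring
      have e3 : ∑ i : Fin n, x i * (2 * a * b * (L *ᵥ x) i)
          = 2 * a * b * (x ⬝ᵥ (L *ᵥ x)) := by
        rw [dotProduct, Finset.mul_sum]
        exact Finset.sum_congr rfl fun i _ => by ring
      rw [e1, e2, e3] at hsum
      linarith
    -- combine: (a²+b²)·a²·s²·T + 2ab·b²·n·q = 0
    have eq3 : (a ^ 2 + b ^ 2) * a ^ 2 * (s ^ 2 * T)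
        + 2 * a * b * b ^ 2 * ((n : ℝ) * (x ⬝ᵥ (L *ᵥ x))) = 0 := by
      linear_combination ((a ^ 2 + b ^ 2) * s) * eq1 - (b ^ 2 * (n : ℝ)) * eq2
    have h1 : 0 ≤ s ^ 2 * T := mul_nonneg (sq_nonneg s) hT0
    have h2 : 0 ≤ (n : ℝ) * (x ⬝ᵥ (L *ᵥ x)) := mul_nonneg (Nat.cast_nonneg n) hq
    have c1 : (0 : ℝ) < (a ^ 2 + b ^ 2) * a ^ 2 := by positivity
    have c2 : (0 : ℝ) < 2 * a * b * b ^ 2 := by positivity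
    have hu : s ^ 2 * T = 0 := by
      have h3 : (a ^ 2 + b ^ 2) * a ^ 2 * (s ^ 2 * T) = 0 := by
        nlinarith [mul_nonneg c1.le h1, mul_nonneg c2.le h2]
      exact (mul_eq_zero.mp h3).resolve_left (by positivity)
    have hv : (n : ℝ) * (x ⬝ᵥ (L *ᵥ x)) = 0 := by
      have h3 : 2 * a * b * b ^ 2 * ((n : ℝ) * (x ⬝ᵥ (L *ᵥ x))) = 0 := by
        nlinarith [mul_nonneg c1.le h1, mul_nonneg c2.le h2]
      exact (mul_eq_zero.mp h3).resolve_left (by positivity)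
    rcases Nat.eq_zero_or_pos n with hn | hn
    · subst hn
      exact ⟨funext fun i => i.elim0, fun i => i.elim0, fun i => i.elim0⟩
    · have hnpos : (0 : ℝ) < n := by exact_mod_cast hn
      have hqzero : x ⬝ᵥ (L *ᵥ x) = 0 :=
        (mul_eq_zero.mp hv).resolve_left (ne_of_gt hnpos)
      have hLx : L *ᵥ x = 0 :=
        (hL.dotProduct_mulVec_zero_iff x).mp (by simpa using hqzero)
      refine ⟨hLx, ?_, ?_⟩
      · intro i
        rcases mul_eq_zero.mp hu with hcase | hcase
        · rw [pow_eq_zero_iff (by norm_num : (2:ℕ) ≠ 0)] at hcase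
          rw [hcase, zero_mul]
        · have : L i i = 0 :=
            (Finset.sum_eq_zero_iff_of_nonneg (fun j _ => hd j)).mp (hT.symm.trans hcase) i (Finset.mem_univ i)
          rw [this, mul_zero]
      · intro i
        have hi := h i
        rw [hLx] at hi
        simp only [Pi.zero_apply, mul_zero, sub_zero] at hi
        rcases mul_eq_zero.mp hu with hcase | hcase
        · rw [pow_eq_zero_iff (by norm_num : (2:ℕ) ≠ 0)] at hcase
          rw [hcase] at hi
          simp only [zero_mul, mul_zero, zero_add] at hi
          have hb2 : b ^ 2 ≠ 0 := by positivity
          exact (mul_eq_zero.mp hi).resolve_left hb2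
        · have hall : ∀ j, L j j = 0 := fun j =>
            (Finset.sum_eq_zero_iff_of_nonneg (fun j _ => hd j)).mp (hT.symm.trans hcase) j (Finset.mem_univ j)
          rw [ht]
          exact Finset.sum_eq_zero fun j _ => by rw [hall j, zero_mul]
  · rintro ⟨hLx, hsd, ht⟩ i
    rw [hLx, hsd i, ht i]
    simp

/-- The null space of the GEDM `D = a²L̃J + b²JL̃ - 2abL` equals the null space of
`E = L̃J + JL̃ - 2L`; in particular it does not depend on `a` and `b`. -/
theorem stmt11 (n : ℕ) (L : Matrix (Fin n) (Fin n) ℝ) (hL : L.PosSemidef)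
    (hL1 : L *ᵥ (fun _ => (1 : ℝ)) = 0)
    (a b : ℝ) (ha : 0 < a) (hb : 0 < b)
    (J Lt D E : Matrix (Fin n) (Fin n) ℝ)
    (hJ : J = Matrix.of fun _ _ => (1 : ℝ))
    (hLt : Lt = Matrix.diagonal fun i => L i i)
    (hDdef : D = a ^ 2 • (Lt * J) + b ^ 2 • (J * Lt) - (2 * a * b) • L)
    (hE : E = Lt * J + J * Lt - 2 • L) :
    {x : Fin n → ℝ | D *ᵥ x = 0} = {x : Fin n → ℝ | E *ᵥ x = 0} := by
  have h2L : (2 : ℕ) • L = (2 : ℝ) • L := by ext i j; simp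
  subst hJ hLt hDdef hE
  rw [h2L]
  ext x
  simp only [Set.mem_setOf_eq]
  have hD : ∀ i, (((a ^ 2 • (Matrix.diagonal (fun i => L i i) * Matrix.of (fun _ _ => (1:ℝ)))
      + b ^ 2 • (Matrix.of (fun _ _ => (1:ℝ)) * Matrix.diagonal (fun i => L i i))
      - (2 * a * b) • L)) *ᵥ x) i
      = a ^ 2 * ((∑ j, x j) * L i i) + b ^ 2 * (∑ j, L j j * x j)
        - 2 * a * b * (L *ᵥ x) i := by
    intro i
    simp [Matrix.mulVec, dotProduct, Matrix.mul_apply, Matrix.diagonal_apply, mul_sub, mul_add,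
      Finset.sum_sub_distrib, Finset.sum_add_distrib, Finset.mul_sum, mul_comm, mul_left_comm,
      mul_assoc]
  have hEe : ∀ i, (((Matrix.diagonal (fun i => L i i) * Matrix.of (fun _ _ => (1:ℝ)))
      + (Matrix.of (fun _ _ => (1:ℝ)) * Matrix.diagonal (fun i => L i i))
      - (2 : ℝ) • L) *ᵥ x) i
      = 1 ^ 2 * ((∑ j, x j) * L i i) + 1 ^ 2 * (∑ j, L j j * x j)
        - 2 * 1 * 1 * (L *ᵥ x) i := by
    intro i
    simp [Matrix.mulVec, dotProduct, Matrix.mul_apply, Matrix.diagonal_apply, mul_sub, mul_add,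
      Finset.sum_sub_distrib, Finset.sum_add_distrib, Finset.mul_sum, mul_comm, mul_left_comm,
      mul_assoc]
  rw [funext_iff, funext_iff]
  simp only [Pi.zero_apply, hD, hEe]
  rw [gedm_key hL hL1 a b ha hb x, gedm_key hL hL1 1 1 one_pos one_pos x]
end

section
/- If D is a nonzero generalized Euclidean distance matrix and D⁻ is any generalized inverse of D (i.e., DD⁻D = D), then 1'D⁻1 = 1'D†1, where D† is the Moore-Penrose inverse. -/
open Matrix

/-- Auxiliary scalar fact. -/
lemma stmt12_scal (c d S T tr N : ℝ) (hc : 0 < c) (hd : 0 < d) (htr : 0 < tr) (hN : 0 < N)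
    (h1 : c * tr * S + d * N * T = 0) (h2 : 0 ≤ (c + d) * S * T) : S = 0 := by
  have e1 : d * N * T = -(c * tr * S) := by linarith
  have e2 : 0 ≤ (c + d) * S * T * (d * N) := mul_nonneg h2 (by positivity)
  have e3 : (c + d) * S * T * (d * N) = -((c + d) * c * tr * S ^ 2) := by
    calc (c + d) * S * T * (d * N) = (c + d) * S * (d * N * T) := by ring
    _ = (c + d) * S * (-(c * tr * S)) := by rw [e1]
    _ = -((c + d) * c * tr * S ^ 2) := by ring
  have e4 : (c + d) * c * tr * S ^ 2 ≤ 0 := by linarith [e3 ▸ e2]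
  have hpos : 0 < (c + d) * c * tr := by positivity
  have hS2 : S ^ 2 ≤ 0 := by nlinarith [sq_nonneg S]
  have : S ^ 2 = 0 := le_antisymm hS2 (sq_nonneg S)
  exact pow_eq_zero_iff two_ne_zero |>.mp this

/-- Quadratic form expansion for a GEDM. -/
lemma stmt12_dot_form {n : ℕ} (L D : Matrix (Fin n) (Fin n) ℝ) (a b : ℝ)
    (hD : ∀ i j, D i j = a ^ 2 * L i i + b ^ 2 * L j j - 2 * a * b * L i j)
    (v w : Fin n → ℝ) :
    v ⬝ᵥ (D *ᵥ w) =
      a ^ 2 * ((fun i => L i i) ⬝ᵥ v) * ((fun _ => (1 : ℝ)) ⬝ᵥ w)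
        + b ^ 2 * ((fun _ => (1 : ℝ)) ⬝ᵥ v) * ((fun i => L i i) ⬝ᵥ w)
        - 2 * a * b * (v ⬝ᵥ (L *ᵥ w)) := by
  have key : ∀ (x y : Fin n → ℝ), (x ⬝ᵥ v) * (y ⬝ᵥ w) = ∑ i, ∑ j, x i * v i * (y j * w j) := by
    intro x y
    rw [dotProduct, dotProduct, Finset.sum_mul_sum]
  rw [mul_assoc (a ^ 2), key, mul_assoc (b ^ 2), key, dotProduct, dotProduct]
  simp only [mulVec, dotProduct, Finset.mul_sum]
  rw [← Finset.sum_add_distrib, ← Finset.sum_sub_distrib]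
  refine Finset.sum_congr rfl fun i _ => ?_
  rw [← Finset.sum_add_distrib, ← Finset.sum_sub_distrib]
  refine Finset.sum_congr rfl fun j _ => ?_
  rw [hD]
  ring

/-- `(M *ᵥ v) ⬝ᵥ x = v ⬝ᵥ (Mᵀ *ᵥ x)`. -/
lemma stmt12_mv_dot {n : ℕ} (M : Matrix (Fin n) (Fin n) ℝ) (v x : Fin n → ℝ) :
    (M *ᵥ v) ⬝ᵥ x = v ⬝ᵥ (Mᵀ *ᵥ x) := by
  rw [dotProduct_mulVec, vecMul_transpose, dotProduct_comm]

/-- For a nonzero GEDM `D` and any generalized inverse `Dm` of `D`,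
`1ᵀ Dm 1 = 1ᵀ D† 1`. -/
theorem stmt12 (n : ℕ) (L D : Matrix (Fin n) (Fin n) ℝ) (hL : L.PosSemidef)
    (hL1 : L *ᵥ (fun _ => (1 : ℝ)) = 0) (hL0 : L ≠ 0)
    (a b : ℝ) (ha : 0 < a) (hb : 0 < b)
    (hD : ∀ i j, D i j = a ^ 2 * L i i + b ^ 2 * L j j - 2 * a * b * L i j)
    (Dp : Matrix (Fin n) (Fin n) ℝ) (hDp : IsMoorePenrose D Dp)
    (Dm : Matrix (Fin n) (Fin n) ℝ) (hDm : D * Dm * D = D) :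
    (fun _ => (1 : ℝ)) ⬝ᵥ (Dm *ᵥ fun _ => (1 : ℝ)) =
      (fun _ => (1 : ℝ)) ⬝ᵥ (Dp *ᵥ fun _ => (1 : ℝ)) := by
  set e : Fin n → ℝ := fun _ => (1 : ℝ) with he
  set l : Fin n → ℝ := fun i => L i i with hl
  have hn : 0 < n := by
    rcases Nat.eq_zero_or_pos n with h | h
    · exfalso; apply hL0; subst h; ext i; exact i.elim0
    · exact h
  have hsym : Lᵀ = L := by
    have := hL.1
    rwa [Matrix.IsHermitian, conjTranspose_eq_transpose_of_trivial] at this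
  have hdiag : ∀ i, Pi.single i (1 : ℝ) ⬝ᵥ (L *ᵥ Pi.single i (1 : ℝ)) = L i i := by
    intro i
    rw [mulVec_single, single_dotProduct]
    simp
  have hdiag_nonneg : ∀ i, 0 ≤ L i i := by
    intro i
    have := hL.dotProduct_mulVec_nonneg (Pi.single i (1 : ℝ))
    rwa [star_trivial, hdiag i] at this
  -- the trace is positive
  have htr : 0 < l ⬝ᵥ e := by
    have hnn : 0 ≤ l ⬝ᵥ e := by
      apply Finset.sum_nonneg
      intro i _
      simp only [hl, he, mul_one]
      exact hdiag_nonneg i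
    rcases lt_or_eq_of_le hnn with h | h
    · exact h
    · exfalso
      apply hL0
      have hzero : ∀ i, L i i = 0 := by
        have h0 : ∑ i, l i * e i = 0 := h.symm
        have hz := (Finset.sum_eq_zero_iff_of_nonneg (by
          intro i _; simp only [hl, he, mul_one]; exact hdiag_nonneg i)).mp h0
        intro i
        have := hz i (Finset.mem_univ i)
        simpa [hl, he] using this
      have hcol : ∀ i, L *ᵥ Pi.single i (1 : ℝ) = 0 := by
        intro i
        rw [← hL.dotProduct_mulVec_zero_iff, star_trivial, hdiag i]
        exact hzero i
      ext i j
      simpa [mulVec_single] using congrFun (hcol j) i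
  have hee : e ⬝ᵥ e = (n : ℝ) := by simp [he, dotProduct]
  have hn' : (0 : ℝ) < n := by exact_mod_cast hn
  have hLe : ∀ v : Fin n → ℝ, v ⬝ᵥ (L *ᵥ e) = 0 := by
    intro v; rw [hL1, dotProduct_zero]
  have heL : ∀ w : Fin n → ℝ, e ⬝ᵥ (L *ᵥ w) = 0 := by
    intro w
    rw [dotProduct_mulVec, ← mulVec_transpose, hsym, hL1, zero_dotProduct]
  -- key lemma B : D *ᵥ w = 0 → e ⬝ᵥ w = 0
  have kB : ∀ w : Fin n → ℝ, D *ᵥ w = 0 → e ⬝ᵥ w = 0 := by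
    intro w hw
    have hf := stmt12_dot_form L D a b hD e w
    rw [hw, dotProduct_zero, heL w] at hf
    have h1 : a ^ 2 * (l ⬝ᵥ e) * (e ⬝ᵥ w) + b ^ 2 * (n : ℝ) * (l ⬝ᵥ w) = 0 := by
      have h2 : (fun i => L i i) ⬝ᵥ e = l ⬝ᵥ e := rfl
      have h3 : (fun i => L i i) ⬝ᵥ w = l ⬝ᵥ w := rfl
      rw [h2, h3, hee] at hf
      linarith [hf]
    have hq := hL.dotProduct_mulVec_nonneg w
    rw [star_trivial] at hq
    have hg := stmt12_dot_form L D a b hD w w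
    rw [hw, dotProduct_zero] at hg
    have h4 : (fun i => L i i) ⬝ᵥ w = l ⬝ᵥ w := rfl
    have h5 : (fun _ => (1:ℝ)) ⬝ᵥ w = e ⬝ᵥ w := rfl
    have h6 : w ⬝ᵥ ((fun _ => (1:ℝ)) : Fin n → ℝ) = e ⬝ᵥ w := dotProduct_comm w e
    rw [h4] at hg
    have h2' : 0 ≤ (a ^ 2 + b ^ 2) * (e ⬝ᵥ w) * (l ⬝ᵥ w) := by
      have hwl : l ⬝ᵥ w = w ⬝ᵥ l := dotProduct_comm l w
      have hwe : (fun i => L i i) ⬝ᵥ w = l ⬝ᵥ w := rfl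
      nlinarith [hg, hq, mul_pos ha hb, dotProduct_comm w e, dotProduct_comm w l]
    exact stmt12_scal (a ^ 2) (b ^ 2) (e ⬝ᵥ w) (l ⬝ᵥ w) (l ⬝ᵥ e) (n : ℝ)
      (by positivity) (by positivity) htr hn' h1 h2'
  -- key lemma A : Dᵀ *ᵥ w = 0 → e ⬝ᵥ w = 0
  have kA : ∀ w : Fin n → ℝ, Dᵀ *ᵥ w = 0 → e ⬝ᵥ w = 0 := by
    intro w hw
    have hv : ∀ v : Fin n → ℝ, w ⬝ᵥ (D *ᵥ v) = 0 := by
      intro v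
      rw [dotProduct_mulVec, ← mulVec_transpose, hw, zero_dotProduct]
    have hf := stmt12_dot_form L D a b hD w e
    rw [hv e, hLe w] at hf
    have h1 : b ^ 2 * (l ⬝ᵥ e) * (e ⬝ᵥ w) + a ^ 2 * (n : ℝ) * (l ⬝ᵥ w) = 0 := by
      have h2 : (fun i => L i i) ⬝ᵥ w = l ⬝ᵥ w := rfl
      have h3 : (fun i => L i i) ⬝ᵥ e = l ⬝ᵥ e := rfl
      have h4 : ((fun _ => (1:ℝ)) : Fin n → ℝ) ⬝ᵥ w = e ⬝ᵥ w := rfl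
      have h5 : ((fun _ => (1:ℝ)) : Fin n → ℝ) ⬝ᵥ e = (n : ℝ) := hee
      rw [h2, h4, h5] at hf
      linarith [hf]
    have hq := hL.dotProduct_mulVec_nonneg w
    rw [star_trivial] at hq
    have hg := stmt12_dot_form L D a b hD w w
    rw [hv w] at hg
    have h2' : 0 ≤ (b ^ 2 + a ^ 2) * (e ⬝ᵥ w) * (l ⬝ᵥ w) := by
      nlinarith [hg, hq, mul_pos ha hb, dotProduct_comm w e, dotProduct_comm w l]
    exact stmt12_scal (b ^ 2) (a ^ 2) (e ⬝ᵥ w) (l ⬝ᵥ w) (l ⬝ᵥ e) (n : ℝ)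
      (by positivity) (by positivity) htr hn' h1 h2'
  obtain ⟨hDp1, hDp2, hDp3, hDp4⟩ := hDp
  -- e is in the column space of D
  have hx : D *ᵥ (Dp *ᵥ e) = e := by
    set P : Matrix (Fin n) (Fin n) ℝ := D * Dp with hP
    have hPsym : Pᵀ = P := hDp3
    have hPP : P * P = P := by
      calc P * P = D * Dp * D * Dp := by rw [hP, ← Matrix.mul_assoc]
      _ = P := by rw [hDp1, hP]
    have hDTP : Dᵀ * P = Dᵀ := by
      calc Dᵀ * P = Dᵀ * Pᵀ := by rw [hPsym]
      _ = (P * D)ᵀ := (transpose_mul P D).symm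
      _ = Dᵀ := by rw [hP, hDp1]
    set u : Fin n → ℝ := P *ᵥ e with hu
    have hDTw : Dᵀ *ᵥ (e - u) = 0 := by
      rw [mulVec_sub, hu, mulVec_mulVec, hDTP, sub_self]
    have hew : e ⬝ᵥ (e - u) = 0 := kA (e - u) hDTw
    have huu : u ⬝ᵥ u = e ⬝ᵥ u := by
      calc u ⬝ᵥ u = e ⬝ᵥ (Pᵀ *ᵥ u) := stmt12_mv_dot P e u
      _ = e ⬝ᵥ ((P * P) *ᵥ e) := by rw [hPsym, hu, mulVec_mulVec]
      _ = e ⬝ᵥ u := by rw [hPP, ← hu]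
    have hww : (e - u) ⬝ᵥ (e - u) = 0 := by
      have h1 : e ⬝ᵥ e - e ⬝ᵥ u = 0 := by
        rw [← dotProduct_sub]; exact hew
      have hue : u ⬝ᵥ e = e ⬝ᵥ u := dotProduct_comm u e
      rw [sub_dotProduct, dotProduct_sub, dotProduct_sub, huu, hue]
      linarith
    have : e - u = 0 := dotProduct_self_eq_zero.mp hww
    have hue : u = e := by
      have := sub_eq_zero.mp this
      exact this.symm
    rw [mulVec_mulVec, ← hP, ← hu, hue]
  -- e is in the column space of Dᵀ
  have hy : Dᵀ *ᵥ (Dpᵀ *ᵥ e) = e := by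
    set Q : Matrix (Fin n) (Fin n) ℝ := Dp * D with hQ
    have hQsym : Qᵀ = Q := hDp4
    have hQQ : Q * Q = Q := by
      calc Q * Q = Dp * D * Dp * D := by rw [hQ, ← Matrix.mul_assoc]
      _ = Q := by rw [hDp2, hQ]
    have hDQ : D * Q = D := by
      calc D * Q = D * Dp * D := by rw [hQ, Matrix.mul_assoc]
      _ = D := hDp1
    set u : Fin n → ℝ := Q *ᵥ e with hu
    have hDw : D *ᵥ (e - u) = 0 := by
      rw [mulVec_sub, hu, mulVec_mulVec, hDQ, sub_self]
    have hew : e ⬝ᵥ (e - u) = 0 := kB (e - u) hDw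
    have huu : u ⬝ᵥ u = e ⬝ᵥ u := by
      calc u ⬝ᵥ u = e ⬝ᵥ (Qᵀ *ᵥ u) := stmt12_mv_dot Q e u
      _ = e ⬝ᵥ ((Q * Q) *ᵥ e) := by rw [hQsym, hu, mulVec_mulVec]
      _ = e ⬝ᵥ u := by rw [hQQ, ← hu]
    have hww : (e - u) ⬝ᵥ (e - u) = 0 := by
      have h1 : e ⬝ᵥ e - e ⬝ᵥ u = 0 := by
        rw [← dotProduct_sub]; exact hew
      have hue : u ⬝ᵥ e = e ⬝ᵥ u := dotProduct_comm u e
      rw [sub_dotProduct, dotProduct_sub, dotProduct_sub, huu, hue]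
      linarith
    have : e - u = 0 := dotProduct_self_eq_zero.mp hww
    have hue : u = e := (sub_eq_zero.mp this).symm
    have hT : Dᵀ * Dpᵀ = Qᵀ := (transpose_mul Dp D).symm
    rw [mulVec_mulVec, hT, hQsym, ← hu, hue]
  -- main computation
  have main : ∀ M : Matrix (Fin n) (Fin n) ℝ, D * M * D = D →
      e ⬝ᵥ (M *ᵥ e) = (Dpᵀ *ᵥ e) ⬝ᵥ (D *ᵥ (Dp *ᵥ e)) := by
    intro M hM
    calc e ⬝ᵥ (M *ᵥ e)
        = (Dᵀ *ᵥ (Dpᵀ *ᵥ e)) ⬝ᵥ (M *ᵥ (D *ᵥ (Dp *ᵥ e))) := by rw [hy, hx]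
      _ = (Dpᵀ *ᵥ e) ⬝ᵥ (Dᵀᵀ *ᵥ (M *ᵥ (D *ᵥ (Dp *ᵥ e)))) :=
          stmt12_mv_dot Dᵀ (Dpᵀ *ᵥ e) (M *ᵥ (D *ᵥ (Dp *ᵥ e)))
      _ = (Dpᵀ *ᵥ e) ⬝ᵥ ((D * M * D) *ᵥ (Dp *ᵥ e)) := by
          rw [transpose_transpose, mulVec_mulVec, mulVec_mulVec]
      _ = (Dpᵀ *ᵥ e) ⬝ᵥ (D *ᵥ (Dp *ᵥ e)) := by rw [hM]
  rw [main Dm hDm, main Dp hDp1]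
end

section
/- For a nonzero generalized Euclidean distance matrix D, one has 1'D†1 ≥ 0. -/
open Matrix

lemma mem_range_of_orth {n : ℕ} {L : Matrix (Fin n) (Fin n) ℝ} (hL : L.IsHermitian)
    {x : Fin n → ℝ} (hx : ∀ k, L *ᵥ k = 0 → x ⬝ᵥ k = 0) : ∃ z, L *ᵥ z = x := by
  have hsym := (Matrix.isHermitian_iff_isSymmetric).mp hL
  set f := Matrix.toEuclideanLin L with hf
  have hle : LinearMap.range f ≤ (LinearMap.ker f)ᗮ := by
    rintro y ⟨u, rfl⟩
    rw [Submodule.mem_orthogonal]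
    intro k hk
    have h0 : f k = 0 := hk
    calc inner ℝ k (f u) = inner ℝ (f k) u := (hsym k u).symm
      _ = (0:ℝ) := by rw [h0]; simp
  have hfin : Module.finrank ℝ (LinearMap.range f) = Module.finrank ℝ ((LinearMap.ker f)ᗮ) := by
    have h1 := LinearMap.finrank_range_add_finrank_ker f
    have h2 := Submodule.finrank_add_finrank_orthogonal (LinearMap.ker f)
    omega
  have heq : LinearMap.range f = (LinearMap.ker f)ᗮ :=
    Submodule.eq_of_le_of_finrank_eq hle hfin
  have hxmem : (WithLp.equiv 2 (Fin n → ℝ)).symm x ∈ (LinearMap.ker f)ᗮ := by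
    rw [Submodule.mem_orthogonal]
    intro k hk
    have hk' : L *ᵥ (WithLp.equiv 2 (Fin n → ℝ)) k = 0 := by
      have : f k = 0 := hk
      rw [hf, Matrix.toEuclideanLin_apply] at this
      simpa using congrArg (WithLp.equiv 2 (Fin n → ℝ)) this
    have := hx _ hk'
    simpa [EuclideanSpace.inner_eq_star_dotProduct, dotProduct, mul_comm] using this
  rw [← heq] at hxmem
  obtain ⟨z, hz⟩ := hxmem
  refine ⟨(WithLp.equiv 2 (Fin n → ℝ)) z, ?_⟩
  have := congrArg (WithLp.equiv 2 (Fin n → ℝ)) hz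
  rw [hf, Matrix.toEuclideanLin_apply] at this
  simpa using this

/-- For a nonzero GEDM `D`, `1ᵀ D† 1 ≥ 0`. -/
theorem stmt13 (n : ℕ) (L D : Matrix (Fin n) (Fin n) ℝ) (hL : L.PosSemidef)
    (hL1 : L *ᵥ (fun _ => (1 : ℝ)) = 0) (hL0 : L ≠ 0)
    (a b : ℝ) (ha : 0 < a) (hb : 0 < b)
    (hD : ∀ i j, D i j = a ^ 2 * L i i + b ^ 2 * L j j - 2 * a * b * L i j)
    (Dp : Matrix (Fin n) (Fin n) ℝ) (hDp : IsMoorePenrose D Dp) :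
    0 ≤ (fun _ => (1 : ℝ)) ⬝ᵥ (Dp *ᵥ fun _ => (1 : ℝ)) := by
  classical
  obtain ⟨hDpD, -, -, -⟩ := hDp
  set e : Fin n → ℝ := (fun _ => (1:ℝ)) with he
  set d : Fin n → ℝ := (fun i => L i i) with hd
  have hn : 0 < n := by
    rcases Nat.eq_zero_or_pos n with h0 | h0
    · exfalso; apply hL0; subst h0; ext i j; exact i.elim0
    · exact h0
  have hnR : (0:ℝ) < (n:ℝ) := by exact_mod_cast hn
  have hsymm : ∀ i j, L j i = L i j := fun i j => by
    have := congrFun (congrFun hL.1 i) j; simpa using this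
  have hτ : (0:ℝ) < ∑ i, L i i := trace_pos_of_ne_zero hL hL0
  set τ : ℝ := ∑ i, L i i with hτdef
  have hee : e ⬝ᵥ e = (n:ℝ) := by simp [dotProduct, he]
  have hed : e ⬝ᵥ d = τ := by simp [dotProduct, he, hd, hτdef]
  have hde : d ⬝ᵥ e = τ := by simp [dotProduct, he, hd, hτdef]
  have hsum : ∀ f g h : Fin n → ℝ,
      (∑ j, f j) + (∑ j, g j) - ∑ j, h j = ∑ j, (f j + g j - h j) := by
    intro f g h; rw [← Finset.sum_add_distrib, ← Finset.sum_sub_distrib]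
  have hDv : ∀ x : Fin n → ℝ, D *ᵥ x
      = (a^2 * (e ⬝ᵥ x)) • d + (b^2 * (d ⬝ᵥ x)) • e - (2*a*b) • (L *ᵥ x) := by
    intro x; funext i
    simp only [mulVec, dotProduct, hD, Pi.add_apply, Pi.sub_apply, Pi.smul_apply,
      smul_eq_mul, he, hd, one_mul, Finset.mul_sum]
    rw [Finset.sum_mul, Finset.sum_mul, hsum]
    exact Finset.sum_congr rfl fun j _ => by ring
  have hvD : ∀ x : Fin n → ℝ, x ᵥ* D
      = (b^2 * (e ⬝ᵥ x)) • d + (a^2 * (d ⬝ᵥ x)) • e - (2*a*b) • (L *ᵥ x) := by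
    intro x; funext j
    simp only [vecMul, mulVec, dotProduct, hD, Pi.add_apply, Pi.sub_apply, Pi.smul_apply,
      smul_eq_mul, he, hd, one_mul, Finset.mul_sum]
    rw [Finset.sum_mul, Finset.sum_mul, hsum]
    exact Finset.sum_congr rfl fun i _ => by rw [hsymm j i]; ring
  -- key reduction
  have key : ∀ v w : Fin n → ℝ, D *ᵥ v = e → w ᵥ* D = e →
      e ⬝ᵥ (Dp *ᵥ e) = e ⬝ᵥ v := by
    intro v w hv hw
    calc e ⬝ᵥ (Dp *ᵥ e) = (w ᵥ* D) ⬝ᵥ (Dp *ᵥ (D *ᵥ v)) := by rw [hv, hw]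
      _ = w ⬝ᵥ (D *ᵥ (Dp *ᵥ (D *ᵥ v))) := by rw [← dotProduct_mulVec]
      _ = w ⬝ᵥ ((D * Dp * D) *ᵥ v) := by rw [← mulVec_mulVec, ← mulVec_mulVec]
      _ = w ⬝ᵥ (D *ᵥ v) := by rw [hDpD]
      _ = (w ᵥ* D) ⬝ᵥ v := by rw [dotProduct_mulVec]
      _ = e ⬝ᵥ v := by rw [hw]
  suffices hmain : ∃ v w : Fin n → ℝ, D *ᵥ v = e ∧ w ᵥ* D = e ∧ 0 ≤ e ⬝ᵥ v by
    obtain ⟨v, w, hv, hw, hnn⟩ := hmain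
    have := key v w hv hw
    show 0 ≤ e ⬝ᵥ (Dp *ᵥ e)
    rw [this]; exact hnn
  by_cases hcase : ∃ k, L *ᵥ k = 0 ∧ e ⬝ᵥ k = 0 ∧ d ⬝ᵥ k ≠ 0
  · -- Case A
    obtain ⟨k, hk0, hek, hdk⟩ := hcase
    refine ⟨(1/(b^2 * (d ⬝ᵥ k))) • k, (1/(a^2 * (d ⬝ᵥ k))) • k, ?_, ?_, ?_⟩
    · rw [hDv]
      simp only [dotProduct_smul, mulVec_smul, hk0, smul_zero, smul_smul, hek]
      funext i
      simp only [Pi.add_apply, Pi.sub_apply, Pi.smul_apply, smul_eq_mul]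
      field_simp
      simp
    · rw [hvD]
      simp only [dotProduct_smul, mulVec_smul, hk0, smul_zero, smul_smul, hek]
      funext i
      simp only [Pi.add_apply, Pi.sub_apply, Pi.smul_apply, smul_eq_mul]
      field_simp
      simp
    · simp [dotProduct_smul, hek]
  · -- Case B
    push_neg at hcase
    have hperp : ∀ k, L *ᵥ k = 0 → (d - (τ/n) • e) ⬝ᵥ k = 0 := by
      intro k hk
      have hk' : L *ᵥ (k - ((e ⬝ᵥ k)/n) • e) = 0 := by
        rw [mulVec_sub, mulVec_smul, hL1, hk]; simp
      have hek' : e ⬝ᵥ (k - ((e ⬝ᵥ k)/n) • e) = 0 := by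
        rw [dotProduct_sub, dotProduct_smul, hee, smul_eq_mul]
        field_simp
        ring
      have hdk' := hcase _ hk' hek'
      rw [dotProduct_sub, dotProduct_smul, hde, smul_eq_mul] at hdk'
      rw [sub_dotProduct, smul_dotProduct, smul_eq_mul]
      linear_combination hdk'
    obtain ⟨z₀, hz₀⟩ := mem_range_of_orth hL.1 hperp
    set z : Fin n → ℝ := z₀ - ((e ⬝ᵥ z₀)/n) • e with hzdef
    have hLz : L *ᵥ z = d - (τ/n) • e := by
      rw [hzdef, mulVec_sub, mulVec_smul, hL1, hz₀]; simp
    have hez : e ⬝ᵥ z = 0 := by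
      rw [hzdef, dotProduct_sub, dotProduct_smul, hee, smul_eq_mul]; field_simp; ring
    set q : ℝ := d ⬝ᵥ z with hqdef
    have hq0 : 0 ≤ q := by
      have h1 : q = z ⬝ᵥ (L *ᵥ z) := by
        rw [hLz, dotProduct_sub, dotProduct_smul, dotProduct_comm z d, dotProduct_comm z e, hez]
        simp [hqdef]
      have := hL.dotProduct_mulVec_nonneg z
      rw [h1]; simpa using this
    set den : ℝ := (a*b/2)*q + (a^2+b^2)*τ/n with hden
    have hdenpos : 0 < den := by
      have h1 : 0 ≤ (a*b/2)*q := by positivity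
      have h2 : 0 < (a^2+b^2)*τ/n := by positivity
      rw [hden]; linarith
    set α : ℝ := 1/den with hα
    have hαpos : 0 < α := by rw [hα]; positivity
    have hαden : den * α = 1 := by rw [hα]; field_simp
    have hden2 : a*b*q*α*(n:ℝ) + 2*(a^2+b^2)*τ*α = 2*(n:ℝ) := by
      rw [hα, hden]; field_simp
    clear_value q den α
    refine ⟨(a*α/(2*b)) • z + (α/n) • e, (b*α/(2*a)) • z + (α/n) • e, ?_, ?_, ?_⟩
    · rw [hDv]
      simp only [dotProduct_add, dotProduct_smul, mulVec_add, mulVec_smul, hLz, hL1,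
        hee, hez, hed, hde, smul_zero, add_zero, smul_eq_mul, mul_zero, zero_add]
      funext i
      simp only [Pi.add_apply, Pi.sub_apply, Pi.smul_apply, smul_eq_mul, he]
      rw [← hqdef]
      field_simp [hb.ne', ha.ne', hnR.ne']
      linear_combination hden2
    · rw [hvD]
      simp only [dotProduct_add, dotProduct_smul, mulVec_add, mulVec_smul, hLz, hL1,
        hee, hez, hed, hde, smul_zero, add_zero, smul_eq_mul, mul_zero, zero_add]
      funext i
      simp only [Pi.add_apply, Pi.sub_apply, Pi.smul_apply, smul_eq_mul, he]
      rw [← hqdef]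
      field_simp [hb.ne', ha.ne', hnR.ne']
      linear_combination hden2
    · rw [dotProduct_add, dotProduct_smul, dotProduct_smul, hez, hee]
      rw [smul_eq_mul, smul_eq_mul, mul_zero, zero_add]
      positivity
end

section
/- For a nonzero generalized Euclidean distance matrix D, the matrix -PD†P is symmetric positive semidefinite, where P = I - (1/n)J is the orthogonal projection onto 1⊥. Consequently x'D†x ≤ 0 for every x orthogonal to 1. -/
open Matrix

/-- For a nonzero GEDM `D`, the matrix `-P D† P` is symmetric positive semidefinite,
where `P = I - (1/n) J`; consequently `xᵀ D† x ≤ 0` whenever `x ⊥ 1`. -/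
theorem stmt14 (n : ℕ) (L D : Matrix (Fin n) (Fin n) ℝ) (hL : L.PosSemidef)
    (hL1 : L *ᵥ (fun _ => (1 : ℝ)) = 0) (hL0 : L ≠ 0)
    (a b : ℝ) (ha : 0 < a) (hb : 0 < b)
    (hD : ∀ i j, D i j = a ^ 2 * L i i + b ^ 2 * L j j - 2 * a * b * L i j)
    (Dp : Matrix (Fin n) (Fin n) ℝ) (hDp : IsMoorePenrose D Dp)
    (P : Matrix (Fin n) (Fin n) ℝ)
    (hP : P = (1 : Matrix (Fin n) (Fin n) ℝ) - (n : ℝ)⁻¹ • Matrix.of fun _ _ => (1 : ℝ)) :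
    (-(P * Dp * P)).PosSemidef ∧
    ∀ x : Fin n → ℝ, (fun _ => (1 : ℝ)) ⬝ᵥ x = 0 → x ⬝ᵥ (Dp *ᵥ x) ≤ 0 := by
  obtain ⟨h1, h2, h3, h4⟩ := hDp
  have hn0 : n ≠ 0 := by
    rintro rfl
    exact hL0 (Subsingleton.elim _ _)
  have hn : (0 : ℝ) < (n : ℝ) := by
    exact_mod_cast Nat.pos_of_ne_zero hn0
  have hsym : ∀ i j, L i j = L j i := by
    intro i j
    have := congrFun (congrFun hL.1 i) j
    simpa [Matrix.conjTranspose_apply] using this.symm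
  have hT : Lᵀ = L := by
    ext i j
    exact hsym j i
  have hq : ∀ x : Fin n → ℝ, 0 ≤ x ⬝ᵥ L *ᵥ x := fun x => by simpa using hL.dotProduct_mulVec_nonneg x
  have hqz : ∀ x : Fin n → ℝ, x ⬝ᵥ L *ᵥ x = 0 → L *ᵥ x = 0 := fun x hx =>
    (hL.dotProduct_mulVec_zero_iff x).mp (by simpa using hx)
  -- row sums of L vanish
  have hrow : ∀ i, ∑ j, L i j = 0 := by
    intro i
    have := congrFun hL1 i
    simpa [Matrix.mulVec, dotProduct] using this
  have hcol : ∀ j, ∑ i, L i j = 0 := by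
    intro j
    have hc : ∑ i : Fin n, L i j = ∑ i : Fin n, L j i :=
      Finset.sum_congr rfl fun i _ => hsym i j
    rw [hc]
    exact hrow j
  have heLx : ∀ x : Fin n → ℝ, ∑ i, (L *ᵥ x) i = 0 := by
    intro x
    have h0 : ∑ i, (L *ᵥ x) i = ∑ j, (∑ i, L i j * x j) := by
      simp only [Matrix.mulVec, dotProduct]
      exact Finset.sum_comm
    rw [h0]
    apply Finset.sum_eq_zero
    intro j _
    rw [← Finset.sum_mul, hcol j, zero_mul]
  -- diagonal entries, trace
  have hqsingle : ∀ i, (Pi.single i 1 : Fin n → ℝ) ⬝ᵥ L *ᵥ Pi.single i 1 = L i i := by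
    intro i
    rw [Matrix.mulVec_single]
    simp [dotProduct, Pi.single_apply]
  have hdiag : ∀ i, 0 ≤ L i i := fun i => by
    have := hq (Pi.single i 1); rwa [hqsingle i] at this
  have hτ : 0 < ∑ i, L i i := by
    rcases lt_or_ge 0 (∑ i, L i i) with h | h
    · exact h
    · exfalso
      have hz : ∀ i, L i i = 0 := by
        intro i
        have hsum : ∑ i, L i i = 0 :=
          le_antisymm h (Finset.sum_nonneg fun i _ => hdiag i)
        exact (Finset.sum_eq_zero_iff_of_nonneg fun i _ => hdiag i).mp hsum i (Finset.mem_univ i)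
      apply hL0
      ext i j
      have hcol : L *ᵥ Pi.single j 1 = 0 := by
        apply hqz
        rw [hqsingle j, hz j]
      have := congrFun hcol i
      rw [Matrix.mulVec_single] at this
      simpa using this
  set τ : ℝ := ∑ i, L i i with hτdef
  -- expansion of a GEDM applied to a vector
  have expand : ∀ (M : Matrix (Fin n) (Fin n) ℝ) (α β : ℝ),
      (∀ i j, M i j = α ^ 2 * L i i + β ^ 2 * L j j - 2 * α * β * L i j) →
      ∀ (x : Fin n → ℝ) (i),
        (M *ᵥ x) i = α ^ 2 * L i i * (∑ j, x j) + β ^ 2 * (∑ j, L j j * x j)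
          - 2 * α * β * ((L *ᵥ x) i) := by
    intro M α β hM x i
    have h1' : (M *ᵥ x) i = ∑ j, (α ^ 2 * L i i * x j + β ^ 2 * (L j j * x j)
        - 2 * α * β * (L i j * x j)) := by
      simp only [Matrix.mulVec, dotProduct, hM]
      exact Finset.sum_congr rfl fun j _ => by ring
    rw [h1', Finset.sum_sub_distrib, Finset.sum_add_distrib, ← Finset.mul_sum,
      ← Finset.mul_sum, ← Finset.mul_sum]
    simp [Matrix.mulVec, dotProduct]
  -- sum of entries of M *ᵥ x
  have esum : ∀ (M : Matrix (Fin n) (Fin n) ℝ) (α β : ℝ),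
      (∀ i j, M i j = α ^ 2 * L i i + β ^ 2 * L j j - 2 * α * β * L i j) →
      ∀ x : Fin n → ℝ,
        ∑ i, (M *ᵥ x) i = α ^ 2 * τ * (∑ j, x j) + β ^ 2 * (∑ j, L j j * x j) * n := by
    intro M α β hM x
    have h0 : ∑ i, (M *ᵥ x) i = ∑ i, (α ^ 2 * L i i * (∑ j, x j)
        + β ^ 2 * (∑ j, L j j * x j) - 2 * α * β * ((L *ᵥ x) i)) :=
      Finset.sum_congr rfl fun i _ => expand M α β hM x i
    have hA : ∑ i, α ^ 2 * L i i * (∑ j, x j) = α ^ 2 * τ * (∑ j, x j) := by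
      rw [← Finset.sum_mul, ← Finset.mul_sum, ← hτdef]
    have hB : ∑ _i : Fin n, β ^ 2 * (∑ j, L j j * x j)
        = β ^ 2 * (∑ j, L j j * x j) * n := by
      rw [Finset.sum_const, Finset.card_univ, Fintype.card_fin, nsmul_eq_mul]
      ring
    have hC : ∑ i, 2 * α * β * ((L *ᵥ x) i) = 0 := by
      rw [← Finset.mul_sum, heLx, mul_zero]
    rw [h0, Finset.sum_sub_distrib, Finset.sum_add_distrib, hA, hB, hC]
    ring
  -- (M *ᵥ z) ⬝ᵥ w
  have wsum : ∀ (M : Matrix (Fin n) (Fin n) ℝ) (α β : ℝ),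
      (∀ i j, M i j = α ^ 2 * L i i + β ^ 2 * L j j - 2 * α * β * L i j) →
      ∀ z w : Fin n → ℝ,
        (M *ᵥ z) ⬝ᵥ w = α ^ 2 * (∑ j, z j) * (∑ j, L j j * w j)
          + β ^ 2 * (∑ j, L j j * z j) * (∑ j, w j) - 2 * α * β * ((L *ᵥ z) ⬝ᵥ w) := by
    intro M α β hM z w
    have h0 : ∀ i : Fin n, (M *ᵥ z) i * w i = α ^ 2 * (∑ j, z j) * (L i i * w i)
        + β ^ 2 * (∑ j, L j j * z j) * w i - 2 * α * β * ((L *ᵥ z) i * w i) := by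
      intro i
      rw [expand M α β hM z i]
      ring
    have h1' : (M *ᵥ z) ⬝ᵥ w = ∑ i, (α ^ 2 * (∑ j, z j) * (L i i * w i)
        + β ^ 2 * (∑ j, L j j * z j) * w i - 2 * α * β * ((L *ᵥ z) i * w i)) := by
      simp only [dotProduct]
      exact Finset.sum_congr rfl fun i _ => h0 i
    rw [h1', Finset.sum_sub_distrib, Finset.sum_add_distrib, ← Finset.mul_sum, ← Finset.mul_sum,
      ← Finset.mul_sum]
    simp only [dotProduct]
  -- the kernel lemma
  have hker : ∀ (M : Matrix (Fin n) (Fin n) ℝ) (α β : ℝ), 0 < α → 0 < β →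
      (∀ i j, M i j = α ^ 2 * L i i + β ^ 2 * L j j - 2 * α * β * L i j) →
      ∀ x : Fin n → ℝ, M *ᵥ x = 0 →
        (∑ j, x j) = 0 ∧ (∑ j, L j j * x j) = 0 ∧ L *ᵥ x = 0 := by
    intro M α β hα hβ hM x hx
    set s : ℝ := ∑ j, x j with hs
    set m : ℝ := ∑ j, L j j * x j with hm
    have hE1 : α ^ 2 * τ * s + β ^ 2 * m * n = 0 := by
      have := esum M α β hM x
      rw [hx] at this
      simpa using this.symm
    have hE2 : α ^ 2 * s * m + β ^ 2 * m * s - 2 * α * β * (x ⬝ᵥ L *ᵥ x) = 0 := by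
      have := wsum M α β hM x x
      rw [hx, dotProduct_comm (L *ᵥ x) x] at this
      simpa using this.symm
    have hsm : s * m * (β ^ 2 * (n : ℝ)) = -(α ^ 2 * τ * s ^ 2) := by
      linear_combination s * hE1
    have hsmle : s * m ≤ 0 := by
      nlinarith [hsm, sq_nonneg s, mul_pos (pow_pos hα 2) hτ, mul_pos (pow_pos hβ 2) hn]
    have hxLx : x ⬝ᵥ L *ᵥ x = 0 := by
      have hle : x ⬝ᵥ L *ᵥ x ≤ 0 := by
        nlinarith [hE2, hsmle, mul_pos hα hβ, sq_nonneg α, sq_nonneg β]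
      exact le_antisymm hle (hq x)
    have hLx : L *ᵥ x = 0 := hqz x hxLx
    have hsm0 : s * m = 0 := by
      have hs2 : (s * m) * (α ^ 2 + β ^ 2) = 0 := by
        linear_combination hE2 + 2 * α * β * hxLx
      have hab : (α ^ 2 + β ^ 2) ≠ 0 := by positivity
      exact (mul_eq_zero.mp hs2).resolve_right hab
    have hs0 : s = 0 := by
      have hss : α ^ 2 * τ * s ^ 2 = 0 := by
        linear_combination hsm - (β ^ 2 * (n : ℝ)) * hsm0
      have hne : α ^ 2 * τ ≠ 0 := by positivity
      have hss2 : s ^ 2 = 0 := by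
        rcases mul_eq_zero.mp hss with h | h
        · exact absurd h hne
        · exact h
      exact pow_eq_zero_iff two_ne_zero |>.mp hss2
    have hm0 : m = 0 := by
      have : β ^ 2 * m * n = 0 := by
        rw [hs0] at hE1; linarith [hE1]
      have hβn : β ^ 2 * (n : ℝ) ≠ 0 := by positivity
      have : m * (β ^ 2 * (n : ℝ)) = 0 := by linarith [this]
      exact (mul_eq_zero.mp this).resolve_right hβn
    exact ⟨hs0, hm0, hLx⟩
  -- D and Dᵀ are both GEDMs
  have hDT : ∀ i j, Dᵀ i j = b ^ 2 * L i i + a ^ 2 * L j j - 2 * b * a * L i j := by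
    intro i j
    rw [Matrix.transpose_apply, hD j i, hsym j i]
    ring
  -- kernel facts
  have hkDT := hker Dᵀ b a hb ha hDT
  have hkD := hker D a b ha hb hD
  have triple_to_zero : ∀ (M : Matrix (Fin n) (Fin n) ℝ) (α β : ℝ),
      (∀ i j, M i j = α ^ 2 * L i i + β ^ 2 * L j j - 2 * α * β * L i j) →
      ∀ x : Fin n → ℝ, (∑ j, x j) = 0 → (∑ j, L j j * x j) = 0 → L *ᵥ x = 0 →
        M *ᵥ x = 0 := by
    intro M α β hM x hs hm hLx
    ext i
    rw [expand M α β hM x i, hs, hm, hLx]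
    simp
  -- MP algebra
  have hA1 : Dᵀ * (D * Dp) = Dᵀ := by
    have h := congrArg Matrix.transpose h1
    rw [Matrix.transpose_mul, h3] at h
    exact h
  have hA2 : D * (Dp * D) = D := by
    rw [← Matrix.mul_assoc, h1]
  -- columns of (1 - D*Dp) are in ker Dᵀ, hence in ker D
  have hQcol : ∀ x : Fin n → ℝ, Dᵀ *ᵥ (x - (D * Dp) *ᵥ x) = 0 := by
    intro x
    rw [Matrix.mulVec_sub, Matrix.mulVec_mulVec, hA1, sub_self]
  have hRcol : ∀ x : Fin n → ℝ, D *ᵥ (x - (Dp * D) *ᵥ x) = 0 := by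
    intro x
    rw [Matrix.mulVec_sub, Matrix.mulVec_mulVec, hA2, sub_self]
  -- transfer through the common kernel
  have hQcolD : ∀ x : Fin n → ℝ, D *ᵥ (x - (D * Dp) *ᵥ x) = 0 := by
    intro x
    obtain ⟨hs, hm, hLx⟩ := hkDT _ (hQcol x)
    exact triple_to_zero D a b hD _ hs hm hLx
  have hRcolDT : ∀ x : Fin n → ℝ, Dᵀ *ᵥ (x - (Dp * D) *ᵥ x) = 0 := by
    intro x
    obtain ⟨hs, hm, hLx⟩ := hkD _ (hRcol x)
    exact triple_to_zero Dᵀ b a hDT _ hs hm hLx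
  -- matrix-level identities
  have hDQ : D * (D * Dp) = D := by
    ext i j
    have h := congrFun (hQcolD (Pi.single j 1)) i
    rw [Matrix.mulVec_sub, Matrix.mulVec_mulVec] at h
    have h' : (D *ᵥ Pi.single j 1) i - ((D * (D * Dp)) *ᵥ Pi.single j 1) i = 0 := by
      simpa using h
    rw [Matrix.mulVec_single, Matrix.mulVec_single] at h'
    simp only [MulOpposite.op_one, one_smul, Matrix.col_apply] at h'
    have hgoal : (D * (D * Dp)) i j = D i j := by linarith
    simpa using hgoal
  have hDTR : Dᵀ * (Dp * D) = Dᵀ := by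
    ext i j
    have h := congrFun (hRcolDT (Pi.single j 1)) i
    rw [Matrix.mulVec_sub, Matrix.mulVec_mulVec] at h
    have h' : (Dᵀ *ᵥ Pi.single j 1) i - ((Dᵀ * (Dp * D)) *ᵥ Pi.single j 1) i = 0 := by
      simpa using h
    rw [Matrix.mulVec_single, Matrix.mulVec_single] at h'
    simp only [MulOpposite.op_one, one_smul, Matrix.col_apply] at h'
    have hgoal : (Dᵀ * (Dp * D)) i j = Dᵀ i j := by
      simp only [Matrix.transpose_apply] at h' ⊢
      linarith
    simpa using hgoal
  have hRD : (Dp * D) * D = D := by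
    have h := congrArg Matrix.transpose hDTR
    rw [Matrix.transpose_mul, h4, Matrix.transpose_transpose] at h
    exact h
  have hQR : D * Dp = Dp * D := by
    have e1 : (Dp * D) * (D * Dp) = D * Dp := by
      rw [← Matrix.mul_assoc, Matrix.mul_assoc Dp D D, ← Matrix.mul_assoc, hRD]
    have e2 : (Dp * D) * (D * Dp) = Dp * D := by
      rw [Matrix.mul_assoc, hDQ]
    rw [← e1, e2]
  have hkeyM : Dpᵀ * Dᵀ * Dp = Dp := by
    rw [← Matrix.transpose_mul, h3, hQR, h2]
  -- vector-level key identity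
  have key1 : ∀ x y : Fin n → ℝ,
      x ⬝ᵥ (Dp *ᵥ y) = (D *ᵥ (Dp *ᵥ x)) ⬝ᵥ (Dp *ᵥ y) := by
    intro x y
    calc x ⬝ᵥ (Dp *ᵥ y) = x ⬝ᵥ ((Dpᵀ * Dᵀ * Dp) *ᵥ y) := by rw [hkeyM]
      _ = x ⬝ᵥ (Dpᵀ *ᵥ ((Dᵀ * Dp) *ᵥ y)) := by
          rw [Matrix.mulVec_mulVec, Matrix.mul_assoc]
      _ = (Dp *ᵥ x) ⬝ᵥ ((Dᵀ * Dp) *ᵥ y) := by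
          rw [Matrix.dotProduct_mulVec, Matrix.vecMul_transpose]
      _ = (Dp *ᵥ x) ⬝ᵥ (Dᵀ *ᵥ (Dp *ᵥ y)) := by rw [Matrix.mulVec_mulVec]
      _ = (D *ᵥ (Dp *ᵥ x)) ⬝ᵥ (Dp *ᵥ y) := by
          rw [Matrix.dotProduct_mulVec, Matrix.vecMul_transpose]
  -- sums are preserved by the projection D * Dp
  have hQe : ∀ y : Fin n → ℝ, (∑ j, y j) = 0 → ∑ i, (D *ᵥ (Dp *ᵥ y)) i = 0 := by
    intro y hy
    obtain ⟨hs, -, -⟩ := hkDT _ (hQcol y)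
    simp only [Pi.sub_apply] at hs
    rw [Finset.sum_sub_distrib] at hs
    have h' : ∑ i, ((D * Dp) *ᵥ y) i = 0 := by linarith
    rw [← Matrix.mulVec_mulVec] at h'
    exact h'
  -- the basic quadratic computation
  have hLzw : ∀ z w : Fin n → ℝ, (L *ᵥ z) ⬝ᵥ w = (L *ᵥ w) ⬝ᵥ z := by
    intro z w
    calc (L *ᵥ z) ⬝ᵥ w = w ⬝ᵥ (L *ᵥ z) := dotProduct_comm _ _
      _ = (w ᵥ* L) ⬝ᵥ z := Matrix.dotProduct_mulVec w L z
      _ = (Lᵀ *ᵥ w) ⬝ᵥ z := by rw [Matrix.mulVec_transpose]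
      _ = (L *ᵥ w) ⬝ᵥ z := by rw [hT]
  have ptS : ∀ z w : Fin n → ℝ, ∑ i, (D *ᵥ z) i = 0 → ∑ i, (D *ᵥ w) i = 0 →
      (D *ᵥ z) ⬝ᵥ w = (D *ᵥ w) ⬝ᵥ z := by
    intro z w hz hw
    have hz' : a ^ 2 * τ * (∑ j, z j) + b ^ 2 * (∑ j, L j j * z j) * n = 0 :=
      (esum D a b hD z).symm.trans hz
    have hw' : a ^ 2 * τ * (∑ j, w j) + b ^ 2 * (∑ j, L j j * w j) * n = 0 :=
      (esum D a b hD w).symm.trans hw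
    rw [wsum D a b hD z w, wsum D a b hD w z, hLzw z w]
    have key2 : ((∑ j, z j) * (∑ j, L j j * w j) - (∑ j, w j) * (∑ j, L j j * z j))
        * (b ^ 2 * (n : ℝ)) = 0 := by
      linear_combination (∑ j, z j) * hw' - (∑ j, w j) * hz'
    have hbn : (b ^ 2 * (n : ℝ)) ≠ 0 := by positivity
    have key : (∑ j, z j) * (∑ j, L j j * w j) - (∑ j, w j) * (∑ j, L j j * z j) = 0 :=
      (mul_eq_zero.mp key2).resolve_right hbn
    linear_combination (a ^ 2 - b ^ 2) * key
  have ptN : ∀ z : Fin n → ℝ, ∑ i, (D *ᵥ z) i = 0 → (D *ᵥ z) ⬝ᵥ z ≤ 0 := by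
    intro z hz
    have hz' : a ^ 2 * τ * (∑ j, z j) + b ^ 2 * (∑ j, L j j * z j) * n = 0 :=
      (esum D a b hD z).symm.trans hz
    rw [wsum D a b hD z z, dotProduct_comm (L *ᵥ z) z]
    have h1' : (∑ j, z j) * (∑ j, L j j * z j) * (b ^ 2 * (n : ℝ))
        = -(a ^ 2 * τ * (∑ j, z j) ^ 2) := by
      linear_combination (∑ j, z j) * hz'
    have hpos1 : (0 : ℝ) < b ^ 2 * (n : ℝ) := by positivity
    have hpos2 : (0 : ℝ) ≤ a ^ 2 * τ * (∑ j, z j) ^ 2 := by positivity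
    have hsm : (∑ j, z j) * (∑ j, L j j * z j) ≤ 0 := by nlinarith [h1', hpos1, hpos2]
    nlinarith [hq z, hsm, mul_pos ha hb, sq_nonneg a, sq_nonneg b]
  -- the two main claims
  have claimS : ∀ x y : Fin n → ℝ, (∑ j, x j) = 0 → (∑ j, y j) = 0 →
      x ⬝ᵥ (Dp *ᵥ y) = y ⬝ᵥ (Dp *ᵥ x) := by
    intro x y hx hy
    rw [key1 x y, key1 y x]
    exact ptS (Dp *ᵥ x) (Dp *ᵥ y) (hQe x hx) (hQe y hy)
  have claimN : ∀ x : Fin n → ℝ, (∑ j, x j) = 0 → x ⬝ᵥ (Dp *ᵥ x) ≤ 0 := by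
    intro x hx
    rw [key1 x x]
    exact ptN (Dp *ᵥ x) (hQe x hx)
  -- facts about P
  have hPapp : ∀ i j, P i j = (if i = j then (1 : ℝ) else 0) - (n : ℝ)⁻¹ := by
    intro i j
    rw [hP]
    simp [Matrix.one_apply]
  have hPsym : ∀ i j, P i j = P j i := by
    intro i j
    rw [hPapp, hPapp]
    simp [eq_comm]
  have hPT : Pᵀ = P := by
    ext i j
    exact hPsym j i
  have hProw : ∀ i, ∑ k, P i k = 0 := by
    intro i
    have hninv : (n : ℝ) * (n : ℝ)⁻¹ = 1 := mul_inv_cancel₀ hn.ne'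
    simp only [hPapp, Finset.sum_sub_distrib, Finset.sum_ite_eq, Finset.mem_univ, if_true,
      Finset.sum_const, Finset.card_univ, Fintype.card_fin, nsmul_eq_mul]
    rw [hninv]
    ring
  have hPcol : ∀ k, ∑ i, P i k = 0 := by
    intro k
    have hc : ∑ i : Fin n, P i k = ∑ i : Fin n, P k i :=
      Finset.sum_congr rfl fun i _ => hPsym i k
    rw [hc]
    exact hProw k
  have hPsum : ∀ x : Fin n → ℝ, ∑ i, (P *ᵥ x) i = 0 := by
    intro x
    have h1' : ∑ i, (P *ᵥ x) i = ∑ k, (∑ i, P i k * x k) := by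
      simp only [Matrix.mulVec, dotProduct]
      exact Finset.sum_comm
    rw [h1']
    apply Finset.sum_eq_zero
    intro k _
    rw [← Finset.sum_mul, hPcol k, zero_mul]
  -- entries of P * M * P as dot products
  have hPDP : ∀ (M : Matrix (Fin n) (Fin n) ℝ) (i j : Fin n),
      (P * M * P) i j = (fun k => P i k) ⬝ᵥ (M *ᵥ fun k => P j k) := by
    intro M i j
    simp only [Matrix.mul_apply, dotProduct, Matrix.mulVec]
    rw [Finset.sum_congr rfl fun l (_ : l ∈ Finset.univ) => Finset.sum_mul _ _ (P l j)]
    rw [Finset.sum_comm]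
    apply Finset.sum_congr rfl
    intro k _
    rw [Finset.mul_sum]
    apply Finset.sum_congr rfl
    intro l _
    rw [hPsym l j]
    ring
  constructor
  · refine Matrix.PosSemidef.of_dotProduct_mulVec_nonneg ?_ ?_
    · -- IsHermitian
      have hsymm : (P * Dp * P)ᵀ = P * Dp * P := by
        ext i j
        rw [Matrix.transpose_apply, hPDP Dp j i, hPDP Dp i j]
        exact claimS (fun k => P j k) (fun k => P i k) (hProw j) (hProw i)
      show (-(P * Dp * P))ᴴ = -(P * Dp * P)
      rw [Matrix.conjTranspose_neg, Matrix.conjTranspose_eq_transpose_of_trivial, hsymm]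
    · intro x
      have hstar : star x = x := by
        funext i
        simp
      rw [hstar, Matrix.neg_mulVec, dotProduct_neg]
      have hx : x ⬝ᵥ (P * Dp * P) *ᵥ x = (P *ᵥ x) ⬝ᵥ (Dp *ᵥ (P *ᵥ x)) := by
        rw [← Matrix.mulVec_mulVec, ← Matrix.mulVec_mulVec,
          Matrix.dotProduct_mulVec x P]
        congr 1
        rw [← Matrix.mulVec_transpose, hPT]
      rw [hx]
      have := claimN (P *ᵥ x) (hPsum x)
      linarith
  · intro x hx
    have hx' : (∑ j, x j) = 0 := by
      simpa [dotProduct] using hx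
    exact claimN x hx'
end

section
/- Let D be the GEDM built from a nonzero generalized Laplacian L with parameters a, b, and let E = L̃J + JL̃ - 2L. Then 1'D†1 > 0 if and only if 1'E†1 > 0. -/
open Matrix

section Aux

variable {n : ℕ}

/-- For a symmetric real matrix, a vector orthogonal to the kernel is in the range. -/
lemma exists_mulVec_eq (L : Matrix (Fin n) (Fin n) ℝ) (hsym : Lᵀ = L)
    (v : Fin n → ℝ) (h : ∀ w, L *ᵥ w = 0 → v ⬝ᵥ w = 0) : ∃ q, L *ᵥ q = v := by
  classical
  set f : EuclideanSpace ℝ (Fin n) →ₗ[ℝ] EuclideanSpace ℝ (Fin n) := Matrix.toEuclideanLin L with hf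
  have hinner : ∀ p q : EuclideanSpace ℝ (Fin n),
      (inner ℝ p q : ℝ) = (WithLp.equiv 2 (Fin n → ℝ) p) ⬝ᵥ (WithLp.equiv 2 (Fin n → ℝ) q) := by
    intro p q
    simp [PiLp.inner_apply, RCLike.inner_apply, dotProduct, conj_trivial, mul_comm]
  have hkerL : ∀ w : EuclideanSpace ℝ (Fin n), w ∈ LinearMap.ker f →
      L *ᵥ (WithLp.equiv 2 (Fin n → ℝ) w) = 0 := by
    intro w hw
    have : WithLp.equiv 2 (Fin n → ℝ) (f w) = 0 := by
      rw [LinearMap.mem_ker.mp hw]; rfl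
    simpa [hf, Matrix.ofLp_toEuclideanLin_apply] using this
  have hle : LinearMap.range f ≤ (LinearMap.ker f)ᗮ := by
    rintro y ⟨z, rfl⟩
    rw [Submodule.mem_orthogonal]
    intro w hw
    rw [hinner]
    have h1 : WithLp.equiv 2 (Fin n → ℝ) (f z) = L *ᵥ (WithLp.equiv 2 (Fin n → ℝ) z) := rfl
    rw [h1, Matrix.dotProduct_mulVec, ← Matrix.mulVec_transpose, hsym, hkerL w hw,
      zero_dotProduct]
  have heq : LinearMap.range f = (LinearMap.ker f)ᗮ := by
    apply Submodule.eq_of_le_of_finrank_le hle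
    have h1 := LinearMap.finrank_range_add_finrank_ker f
    have h2 := Submodule.finrank_add_finrank_orthogonal (K := LinearMap.ker f)
    omega
  have hv : (WithLp.equiv 2 (Fin n → ℝ)).symm v ∈ (LinearMap.ker f)ᗮ := by
    rw [Submodule.mem_orthogonal]
    intro w hw
    rw [hinner]
    have := h _ (hkerL w hw)
    simpa [dotProduct_comm] using this
  rw [← heq] at hv
  obtain ⟨z, hz⟩ := hv
  refine ⟨WithLp.equiv 2 (Fin n → ℝ) z, ?_⟩
  have : WithLp.equiv 2 (Fin n → ℝ) (f z) = L *ᵥ (WithLp.equiv 2 (Fin n → ℝ) z) := rfl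
  rw [← this, hz]
  rfl

lemma diag_nonneg' {L : Matrix (Fin n) (Fin n) ℝ} (hL : L.PosSemidef) (i : Fin n) :
    0 ≤ L i i := by
  have := hL.dotProduct_mulVec_nonneg (Pi.single i 1)
  simpa [single_dotProduct, Matrix.mulVec_single] using this

lemma sum_diag_pos' {L : Matrix (Fin n) (Fin n) ℝ} (hL : L.PosSemidef) (hL0 : L ≠ 0) :
    0 < ∑ i, L i i := by
  rcases (Finset.sum_nonneg (fun i _ => diag_nonneg' hL i)).lt_or_eq with h | h
  · exact h
  · exfalso
    apply hL0
    have hz : ∀ i, L i i = 0 := by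
      intro i
      have := (Finset.sum_eq_zero_iff_of_nonneg (fun i _ => diag_nonneg' hL i)).mp h.symm
      exact this i (Finset.mem_univ i)
    ext k i
    have h0 : star (Pi.single i (1:ℝ)) ⬝ᵥ L *ᵥ (Pi.single i 1) = 0 := by
      simp [single_dotProduct, Matrix.mulVec_single, hz i]
    have := (hL.dotProduct_mulVec_zero_iff (Pi.single i 1)).mp h0
    have := congr_fun this k
    simpa [Matrix.mulVec_single] using this

/-- The action of a generalized EDM on a vector. -/
lemma mulVec_form {L A : Matrix (Fin n) (Fin n) ℝ} {a b : ℝ}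
    (hA : ∀ i j, A i j = a ^ 2 * L i i + b ^ 2 * L j j - 2 * a * b * L i j) (y : Fin n → ℝ) :
    A *ᵥ y = (a ^ 2 * ((fun _ => (1:ℝ)) ⬝ᵥ y)) • (fun i => L i i)
      + (b ^ 2 * ((fun i => L i i) ⬝ᵥ y)) • (fun _ => (1:ℝ))
      - (2 * a * b) • (L *ᵥ y) := by
  funext i
  simp only [Matrix.mulVec, dotProduct, Pi.add_apply, Pi.sub_apply, Pi.smul_apply,
    smul_eq_mul, hA]
  rw [Finset.mul_sum, Finset.mul_sum, Finset.mul_sum, mul_one, Finset.sum_mul,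
    ← Finset.sum_add_distrib, ← Finset.sum_sub_distrib]
  exact Finset.sum_congr rfl fun j _ => by ring

/-- Transposed form. -/
lemma mulVec_form_T {L A : Matrix (Fin n) (Fin n) ℝ} {a b : ℝ} (hsym : Lᵀ = L)
    (hA : ∀ i j, A i j = a ^ 2 * L i i + b ^ 2 * L j j - 2 * a * b * L i j) :
    ∀ i j, Aᵀ i j = b ^ 2 * L i i + a ^ 2 * L j j - 2 * b * a * L i j := by
  intro i j
  have hL : L j i = L i j := by
    conv_lhs => rw [← hsym]
    rfl
  rw [Matrix.transpose_apply, hA j i, hL]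
  ring

lemma dot_one_one : ((fun _ => (1:ℝ)) : Fin n → ℝ) ⬝ᵥ ((fun _ => (1:ℝ)) : Fin n → ℝ) = (n : ℝ) := by
  simp [dotProduct]

/-- Case 1: a kernel vector orthogonal to 1 but not to diag L forces the quadratic form to
vanish. -/
lemma quad_zero {L A Ap : Matrix (Fin n) (Fin n) ℝ} {a b : ℝ} (ha : a ≠ 0) (hb : b ≠ 0)
    (hsym : Lᵀ = L)
    (hA : ∀ i j, A i j = a ^ 2 * L i i + b ^ 2 * L j j - 2 * a * b * L i j)
    (hAp : A * Ap * A = A)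
    (w : Fin n → ℝ) (hw : L *ᵥ w = 0) (hwu : (fun _ => (1:ℝ)) ⬝ᵥ w = 0)
    (hxw : (fun i => L i i) ⬝ᵥ w ≠ 0) :
    (fun _ => (1:ℝ)) ⬝ᵥ (Ap *ᵥ (fun _ => (1:ℝ))) = 0 := by
  set u : Fin n → ℝ := fun _ => (1:ℝ) with hu
  set x : Fin n → ℝ := fun i => L i i with hx
  set c : ℝ := x ⬝ᵥ w with hc
  have hbc : b ^ 2 * c ≠ 0 := mul_ne_zero (pow_ne_zero 2 hb) hxw
  have hac : a ^ 2 * c ≠ 0 := mul_ne_zero (pow_ne_zero 2 ha) hxw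
  have hAw : A *ᵥ w = (b ^ 2 * c) • u := by
    rw [mulVec_form hA w, hwu, hw, ← hc]
    simp
    rfl
  have hATw : Aᵀ *ᵥ w = (a ^ 2 * c) • u := by
    rw [mulVec_form (mulVec_form_T hsym hA) w, hwu, hw, ← hc]
    simp
    rfl
  have hu1 : u = (b ^ 2 * c)⁻¹ • (A *ᵥ w) := by
    rw [hAw, smul_smul, inv_mul_cancel₀ hbc, one_smul]
  have hu2 : u = (a ^ 2 * c)⁻¹ • (Aᵀ *ᵥ w) := by
    rw [hATw, smul_smul, inv_mul_cancel₀ hac, one_smul]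
  have h1 : A *ᵥ (Ap *ᵥ u) = u := by
    conv_lhs => rw [hu1]
    rw [Matrix.mulVec_smul, Matrix.mulVec_smul, Matrix.mulVec_mulVec, Matrix.mulVec_mulVec,
      hAp, ← hu1]
  calc u ⬝ᵥ (Ap *ᵥ u) = ((a ^ 2 * c)⁻¹ • (Aᵀ *ᵥ w)) ⬝ᵥ (Ap *ᵥ u) := by rw [← hu2]
    _ = (a ^ 2 * c)⁻¹ * ((Aᵀ *ᵥ w) ⬝ᵥ (Ap *ᵥ u)) := by rw [smul_dotProduct]; rfl
    _ = (a ^ 2 * c)⁻¹ * (w ⬝ᵥ (A *ᵥ (Ap *ᵥ u))) := by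
        rw [Matrix.mulVec_transpose, ← Matrix.dotProduct_mulVec]
    _ = (a ^ 2 * c)⁻¹ * (w ⬝ᵥ u) := by rw [h1]
    _ = 0 := by rw [dotProduct_comm, hwu, mul_zero]

/-- Existence of an explicit solution of `A y = 1` with known positive `1 ⬝ y`. -/
lemma exists_sol {L A : Matrix (Fin n) (Fin n) ℝ} {a b α : ℝ} (ha : 0 < a) (hb : 0 < b)
    (hn : 0 < n) (hα : 0 < α)
    (hA : ∀ i j, A i j = a ^ 2 * L i i + b ^ 2 * L j j - 2 * a * b * L i j)
    (hL1 : L *ᵥ (fun _ => (1:ℝ)) = 0)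
    (hxu : (fun i => L i i) ⬝ᵥ (fun _ => (1:ℝ)) = (n : ℝ) * α)
    (q : Fin n → ℝ) (hq : L *ᵥ q = (fun i => L i i) - α • (fun _ => (1:ℝ)))
    (hqu : (fun _ => (1:ℝ)) ⬝ᵥ q = 0) (hκ : 0 ≤ q ⬝ᵥ (L *ᵥ q)) :
    ∃ y, A *ᵥ y = (fun _ => (1:ℝ)) ∧ 0 < (fun _ => (1:ℝ)) ⬝ᵥ y := by
  set u : Fin n → ℝ := fun _ => (1:ℝ) with hu
  set x : Fin n → ℝ := fun i => L i i with hx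
  set κ : ℝ := q ⬝ᵥ (L *ᵥ q) with hκdef
  have hnR : (0:ℝ) < (n:ℝ) := by exact_mod_cast hn
  set Z : ℝ := 2 * b * ((n : ℝ) * ((a ^ 2 + b ^ 2) * α + a * b * κ / 2)) with hZ
  have hZpos : 0 < Z := by
    have h1 : 0 < (a ^ 2 + b ^ 2) * α := by positivity
    have h2 : 0 ≤ a * b * κ / 2 := by positivity
    have : 0 < (a ^ 2 + b ^ 2) * α + a * b * κ / 2 := by linarith
    positivity
  set τ : ℝ := Z⁻¹ with hτdef
  have hτpos : 0 < τ := inv_pos.mpr hZpos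
  have hτ : τ * Z = 1 := inv_mul_cancel₀ (ne_of_gt hZpos)
  set y : Fin n → ℝ := (a * n * τ) • q + (2 * b * τ) • u with hy
  have huu : u ⬝ᵥ u = (n : ℝ) := dot_one_one
  have hxq : x ⬝ᵥ q = κ := by
    have : q ⬝ᵥ (L *ᵥ q) = q ⬝ᵥ x - α * (q ⬝ᵥ u) := by
      rw [hq, dotProduct_sub, dotProduct_smul]; rfl
    rw [hκdef, this, dotProduct_comm q u, hqu, mul_zero, sub_zero, dotProduct_comm]
  have h1 : u ⬝ᵥ y = 2 * b * τ * (n : ℝ) := by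
    rw [hy, dotProduct_add, dotProduct_smul, dotProduct_smul, hqu, huu]
    simp
  have h2 : x ⬝ᵥ y = a * n * τ * κ + 2 * b * τ * ((n:ℝ) * α) := by
    rw [hy, dotProduct_add, dotProduct_smul, dotProduct_smul, hxq, hxu]
    simp [smul_eq_mul]
  have h3 : L *ᵥ y = (a * n * τ) • (x - α • u) := by
    rw [hy, Matrix.mulVec_add, Matrix.mulVec_smul, Matrix.mulVec_smul, hq, hL1, smul_zero,
      add_zero]
  refine ⟨y, ?_, ?_⟩
  · rw [mulVec_form hA y, h1, h2, h3]
    funext i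
    simp only [Pi.add_apply, Pi.sub_apply, Pi.smul_apply, smul_eq_mul, hx, hu]
    have hZ' : τ * Z = 1 := hτ
    rw [hZ] at hZ'
    linear_combination hZ'
  · rw [h1]
    positivity

/-- Case 2: positivity of the quadratic form. -/
lemma quad_pos {L A Ap : Matrix (Fin n) (Fin n) ℝ} {a b α : ℝ} (ha : 0 < a) (hb : 0 < b)
    (hn : 0 < n) (hα : 0 < α) (hsym : Lᵀ = L)
    (hA : ∀ i j, A i j = a ^ 2 * L i i + b ^ 2 * L j j - 2 * a * b * L i j)
    (hAp : A * Ap * A = A)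
    (hL1 : L *ᵥ (fun _ => (1:ℝ)) = 0)
    (hxu : (fun i => L i i) ⬝ᵥ (fun _ => (1:ℝ)) = (n : ℝ) * α)
    (q : Fin n → ℝ) (hq : L *ᵥ q = (fun i => L i i) - α • (fun _ => (1:ℝ)))
    (hqu : (fun _ => (1:ℝ)) ⬝ᵥ q = 0) (hκ : 0 ≤ q ⬝ᵥ (L *ᵥ q)) :
    0 < (fun _ => (1:ℝ)) ⬝ᵥ (Ap *ᵥ (fun _ => (1:ℝ))) := by
  obtain ⟨y, hy, _⟩ := exists_sol ha hb hn hα hA hL1 hxu q hq hqu hκ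
  have hAT : ∀ i j, Aᵀ i j = b ^ 2 * L i i + a ^ 2 * L j j - 2 * b * a * L i j :=
    mulVec_form_T hsym hA
  obtain ⟨y', hy', hy'pos⟩ := exists_sol hb ha hn hα hAT hL1 hxu q hq hqu hκ
  set u : Fin n → ℝ := fun _ => (1:ℝ) with hu
  have h1 : A *ᵥ (Ap *ᵥ u) = u := by
    conv_lhs => rw [← hy]
    rw [Matrix.mulVec_mulVec, Matrix.mulVec_mulVec, hAp, hy]
  calc u ⬝ᵥ (Ap *ᵥ u) = (Aᵀ *ᵥ y') ⬝ᵥ (Ap *ᵥ u) := by rw [hy']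
    _ = y' ⬝ᵥ (A *ᵥ (Ap *ᵥ u)) := by rw [Matrix.mulVec_transpose, ← Matrix.dotProduct_mulVec]
    _ = y' ⬝ᵥ u := by rw [h1]
    _ = u ⬝ᵥ y' := dotProduct_comm _ _
    _ > 0 := hy'pos

end Aux

/-- With `E = L̃J + JL̃ - 2L`: `1ᵀ D† 1 > 0` iff `1ᵀ E† 1 > 0`. -/
theorem stmt15 (n : ℕ) (L D : Matrix (Fin n) (Fin n) ℝ) (hL : L.PosSemidef)
    (hL1 : L *ᵥ (fun _ => (1 : ℝ)) = 0) (hL0 : L ≠ 0)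
    (a b : ℝ) (ha : 0 < a) (hb : 0 < b)
    (hD : ∀ i j, D i j = a ^ 2 * L i i + b ^ 2 * L j j - 2 * a * b * L i j)
    (Dp : Matrix (Fin n) (Fin n) ℝ) (hDp : IsMoorePenrose D Dp)
    (E : Matrix (Fin n) (Fin n) ℝ)
    (hE : E = (Matrix.diagonal fun i => L i i) * (Matrix.of fun _ _ => (1 : ℝ)) +
        (Matrix.of fun _ _ => (1 : ℝ)) * (Matrix.diagonal fun i => L i i) - 2 • L)
    (Ep : Matrix (Fin n) (Fin n) ℝ) (hEp : IsMoorePenrose E Ep) :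
    0 < (fun _ => (1 : ℝ)) ⬝ᵥ (Dp *ᵥ fun _ => (1 : ℝ)) ↔
    0 < (fun _ => (1 : ℝ)) ⬝ᵥ (Ep *ᵥ fun _ => (1 : ℝ)) := by
  classical
  have hn : 0 < n := by
    rcases Nat.eq_zero_or_pos n with h | h
    · exfalso; apply hL0; subst h; ext i j; exact i.elim0
    · exact h
  have hnR : (0:ℝ) < (n:ℝ) := by exact_mod_cast hn
  have hsym : Lᵀ = L := by
    ext i j
    have h := congr_fun (congr_fun hL.1 i) j
    simpa [Matrix.conjTranspose_apply] using h
  have hs : 0 < ∑ i, L i i := sum_diag_pos' hL hL0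
  set u : Fin n → ℝ := fun _ => (1:ℝ) with hu
  set x : Fin n → ℝ := fun i => L i i with hx
  set α : ℝ := (∑ i, L i i) / n with hα
  have hαpos : 0 < α := div_pos hs hnR
  have hxu : x ⬝ᵥ u = (n : ℝ) * α := by
    rw [hα]
    field_simp
    simp [dotProduct, hx, hu]
  have huu : u ⬝ᵥ u = (n : ℝ) := dot_one_one
  have hE' : ∀ i j, E i j = 1 ^ 2 * L i i + 1 ^ 2 * L j j - 2 * 1 * 1 * L i j := by
    intro i j
    subst hE
    simp only [Matrix.sub_apply, Matrix.add_apply, Matrix.smul_apply, Matrix.diagonal_mul,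
      Matrix.mul_diagonal, Matrix.of_apply, smul_eq_mul]
    ring
  set v : Fin n → ℝ := x - α • u with hv
  have hvu : v ⬝ᵥ u = 0 := by
    rw [hv, sub_dotProduct, smul_dotProduct, hxu, huu, smul_eq_mul]
    ring
  by_cases hcase : ∀ w, L *ᵥ w = 0 → v ⬝ᵥ w = 0
  · -- both positive
    obtain ⟨q₀, hq₀⟩ := exists_mulVec_eq L hsym v hcase
    set q : Fin n → ℝ := q₀ - ((u ⬝ᵥ q₀) / n) • u with hqdef
    have hq : L *ᵥ q = v := by
      rw [hqdef, Matrix.mulVec_sub, Matrix.mulVec_smul, hL1, smul_zero, sub_zero, hq₀]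
    have hqu : u ⬝ᵥ q = 0 := by
      rw [hqdef, dotProduct_sub, dotProduct_smul, huu, smul_eq_mul]
      field_simp
      ring
    have hκ : 0 ≤ q ⬝ᵥ (L *ᵥ q) := by
      have := hL.dotProduct_mulVec_nonneg q
      simpa using this
    have hq' : L *ᵥ q = (fun i => L i i) - α • (fun _ => (1:ℝ)) := hq
    exact iff_of_true
      (quad_pos ha hb hn hαpos hsym hD hDp.1 hL1 hxu q hq' hqu hκ)
      (quad_pos one_pos one_pos hn hαpos hsym hE' hEp.1 hL1 hxu q hq' hqu hκ)
  · -- both zero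
    push_neg at hcase
    obtain ⟨w, hw, hvw⟩ := hcase
    set w₀ : Fin n → ℝ := w - ((u ⬝ᵥ w) / n) • u with hw₀def
    have hw₀ : L *ᵥ w₀ = 0 := by
      rw [hw₀def, Matrix.mulVec_sub, Matrix.mulVec_smul, hL1, hw, smul_zero, sub_zero]
    have hw₀u : u ⬝ᵥ w₀ = 0 := by
      rw [hw₀def, dotProduct_sub, dotProduct_smul, huu, smul_eq_mul]
      field_simp
      ring
    have hvw₀ : v ⬝ᵥ w₀ = v ⬝ᵥ w := by
      rw [hw₀def, dotProduct_sub, dotProduct_smul, hvu, smul_zero, sub_zero]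
    have hxw₀ : x ⬝ᵥ w₀ ≠ 0 := by
      have hxv : x ⬝ᵥ w₀ = v ⬝ᵥ w₀ + α * (u ⬝ᵥ w₀) := by
        rw [hv, sub_dotProduct, smul_dotProduct, smul_eq_mul]
        ring
      rw [hxv, hw₀u, mul_zero, add_zero, hvw₀]
      exact hvw
    have hD0 := quad_zero (ne_of_gt ha) (ne_of_gt hb) hsym hD hDp.1 w₀ hw₀ hw₀u hxw₀
    have hE0 := quad_zero (one_ne_zero) (one_ne_zero) hsym hE' hEp.1 w₀ hw₀ hw₀u hxw₀
    rw [hD0, hE0]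
end

section
/- A nonzero GEDM D satisfies 1'D†1 > 0 if and only if D is a circum GEDM, i.e., there exist a, b > 0 and vectors x^1,...,x^n lying on a common hypersphere with sum x^i = 0 such that d_ij = ||a x^i - b x^j||². -/
open Matrix

section Aux

open RealInnerProductSpace

lemma expand_norm {m : ℕ} (a b : ℝ) (p q : EuclideanSpace ℝ (Fin m)) :
    ‖a • p - b • q‖^2 = a^2*‖p‖^2 + b^2*‖q‖^2 - 2*(a*b)*⟪p, q⟫ := by
  rw [norm_sub_sq_real, real_inner_smul_left, real_inner_smul_right, norm_smul, norm_smul]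
  simp only [mul_pow, Real.norm_eq_abs, sq_abs]
  ring

lemma spos {n m : ℕ} (a b : ℝ) (x : Fin n → EuclideanSpace ℝ (Fin m))
    (D : Matrix (Fin n) (Fin n) ℝ) (hform : ∀ i j, D i j = ‖a • x i - b • x j‖^2)
    (hD0 : D ≠ 0) : 0 < ∑ i, ‖x i‖^2 := by
  by_contra hns
  push_neg at hns
  have h1 : ∑ i, ‖x i‖^2 = 0 :=
    le_antisymm hns (Finset.sum_nonneg fun i _ => by positivity)
  have hall : ∀ i, x i = 0 := by
    intro i
    have h2 := (Finset.sum_eq_zero_iff_of_nonneg (fun i _ => by positivity)).1 h1 i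
      (Finset.mem_univ i)
    have h3 : ‖x i‖ = 0 := by nlinarith [norm_nonneg (x i)]
    exact norm_eq_zero.mp h3
  apply hD0
  ext i j
  simp [hform, hall]

lemma mulVec_formula {n m : ℕ} (a b : ℝ) (x : Fin n → EuclideanSpace ℝ (Fin m))
    (D : Matrix (Fin n) (Fin n) ℝ) (hform : ∀ i j, D i j = ‖a • x i - b • x j‖^2)
    (w : Fin n → ℝ) (i : Fin n) :
    (D *ᵥ w) i = a^2*‖x i‖^2*(∑ j, w j) + b^2*(∑ j, ‖x j‖^2 * w j)
      - 2*(a*b)*⟪x i, ∑ j, w j • x j⟫ := by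
  have h1 : ⟪x i, ∑ j, w j • x j⟫ = ∑ j, w j * ⟪x i, x j⟫ := by
    rw [inner_sum]
    exact Finset.sum_congr rfl fun j _ => real_inner_smul_right _ _ _
  rw [h1]
  show ∑ j, D i j * w j = _
  have h2 : ∀ j, D i j * w j
      = a^2*‖x i‖^2*w j + b^2*(‖x j‖^2 * w j) - 2*(a*b)*(w j * ⟪x i, x j⟫) := by
    intro j; rw [hform, expand_norm]; ring
  simp_rw [h2]
  rw [Finset.sum_sub_distrib, Finset.sum_add_distrib, ← Finset.mul_sum, ← Finset.mul_sum,
    ← Finset.mul_sum]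

lemma mulVecT_formula {n m : ℕ} (a b : ℝ) (x : Fin n → EuclideanSpace ℝ (Fin m))
    (D : Matrix (Fin n) (Fin n) ℝ) (hform : ∀ i j, D i j = ‖a • x i - b • x j‖^2)
    (w : Fin n → ℝ) (i : Fin n) :
    (Dᵀ *ᵥ w) i = b^2*‖x i‖^2*(∑ j, w j) + a^2*(∑ j, ‖x j‖^2 * w j)
      - 2*(b*a)*⟪x i, ∑ j, w j • x j⟫ := by
  have h1 : ⟪x i, ∑ j, w j • x j⟫ = ∑ j, w j * ⟪x i, x j⟫ := by
    rw [inner_sum]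
    exact Finset.sum_congr rfl fun j _ => real_inner_smul_right _ _ _
  rw [h1]
  show ∑ j, D j i * w j = _
  have h2 : ∀ j, D j i * w j
      = b^2*‖x i‖^2*w j + a^2*(‖x j‖^2 * w j) - 2*(b*a)*(w j * ⟪x i, x j⟫) := by
    intro j; rw [hform, expand_norm, real_inner_comm]; ring
  simp_rw [h2]
  rw [Finset.sum_sub_distrib, Finset.sum_add_distrib, ← Finset.mul_sum, ← Finset.mul_sum,
    ← Finset.mul_sum]

lemma affine_of_eq {n m : ℕ} (a b c W S : ℝ) (ha : a ≠ 0) (hW : W ≠ 0)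
    (x : Fin n → EuclideanSpace ℝ (Fin m)) (p : EuclideanSpace ℝ (Fin m))
    (h : ∀ i, a^2*‖x i‖^2*W + b^2*S - 2*(a*b)*⟪x i, p⟫ = c) :
    ∃ u t, ∀ i, ‖x i‖^2 = 2*⟪x i, u⟫ + t := by
  refine ⟨(b/(a*W)) • p, (c - b^2*S)/(a^2*W), fun i => ?_⟩
  have hi := h i
  rw [real_inner_smul_right]
  set I : ℝ := ⟪x i, p⟫ with hI
  set N : ℝ := ‖x i‖^2
  field_simp
  linear_combination hi

lemma sphere_aux {n m : ℕ} (hn : 0 < n) (x : Fin n → EuclideanSpace ℝ (Fin m))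
    (hsum : ∑ j, x j = 0) (hs : 0 < ∑ i, ‖x i‖^2)
    (u : EuclideanSpace ℝ (Fin m)) (t : ℝ) (hu : ∀ i, ‖x i‖^2 = 2*⟪x i, u⟫ + t) :
    ∃ v r, 0 < r ∧ ∀ i, ‖x i - v‖^2 = r := by
  have hsum_inner : ∑ i, ⟪x i, u⟫ = 0 := by
    have : ⟪∑ i, x i, u⟫ = (0:ℝ) := by rw [hsum, inner_zero_left]
    rw [sum_inner] at this
    exact this
  have ht : ∑ i, ‖x i‖^2 = n * t := by
    calc ∑ i, ‖x i‖^2 = ∑ i, (2*⟪x i, u⟫ + t) := Finset.sum_congr rfl fun i _ => hu i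
    _ = 2 * ∑ i, ⟪x i, u⟫ + (n : ℝ) * t := by
        rw [Finset.sum_add_distrib, ← Finset.mul_sum, Finset.sum_const, Finset.card_univ,
          Fintype.card_fin, nsmul_eq_mul]
    _ = (n : ℝ) * t := by rw [hsum_inner]; ring
  have hnR : (0:ℝ) < n := by exact_mod_cast hn
  have htpos : 0 < t := by nlinarith
  refine ⟨u, t + ‖u‖^2, by positivity, fun i => ?_⟩
  rw [norm_sub_sq_real, hu i]
  ring

end Aux

section Main

open RealInnerProductSpace

/-- A nonzero GEDM `D` satisfies `1ᵀ D† 1 > 0` iff `D` is a circum GEDM, i.e.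
`d_ij = ‖a x^i - b x^j‖²` for points `x^i` summing to zero and lying on a common
hypersphere. -/
theorem stmt16 (n : ℕ) (D : Matrix (Fin n) (Fin n) ℝ)
    (hD : ∃ a b : ℝ, 0 < a ∧ 0 < b ∧
      ∃ (m : ℕ) (x : Fin n → EuclideanSpace ℝ (Fin m)),
        (∑ j, x j) = 0 ∧ ∀ i j, D i j = ‖a • x i - b • x j‖ ^ 2)
    (hD0 : D ≠ 0)
    (Dp : Matrix (Fin n) (Fin n) ℝ) (hDp : IsMoorePenrose D Dp) :
    0 < (fun _ => (1 : ℝ)) ⬝ᵥ (Dp *ᵥ fun _ => (1 : ℝ)) ↔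
    ∃ a b : ℝ, 0 < a ∧ 0 < b ∧
      ∃ (m : ℕ) (x : Fin n → EuclideanSpace ℝ (Fin m)),
        (∑ j, x j) = 0 ∧
        (∃ (v : EuclideanSpace ℝ (Fin m)) (r : ℝ), 0 < r ∧ ∀ i, ‖x i - v‖ ^ 2 = r) ∧
        ∀ i j, D i j = ‖a • x i - b • x j‖ ^ 2 := by
  classical
  obtain ⟨a, b, ha, hb, m, x, hsum, hform⟩ := hD
  obtain ⟨hDD, hDpDp, hPsymm, hQsymm⟩ := hDp
  have hn : 0 < n := by
    rcases Nat.eq_zero_or_pos n with h | h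
    · exfalso; apply hD0; subst h; ext i j; exact i.elim0
    · exact h
  set e : Fin n → ℝ := (fun _ => (1:ℝ)) with he
  constructor
  · -- forward direction
    intro hpos
    have hs : 0 < ∑ i, ‖x i‖^2 := spos a b x D hform hD0
    refine ⟨a, b, ha, hb, m, x, hsum, ?_, hform⟩
    set l : Fin n → ℝ := e - (D * Dp) *ᵥ e with hl
    have hDtl : Dᵀ *ᵥ l = 0 := by
      have h2 : Dᵀ * (D * Dp) = Dᵀ := by
        calc Dᵀ * (D * Dp) = Dᵀ * (D * Dp)ᵀ := by rw [hPsymm]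
        _ = ((D * Dp) * D)ᵀ := by rw [← Matrix.transpose_mul]
        _ = Dᵀ := by rw [hDD]
      rw [hl, Matrix.mulVec_sub, Matrix.mulVec_mulVec, h2, sub_self]
    by_cases hL : ∑ j, l j = 0
    · -- l = 0, so e ∈ col(D); use z = Dp *ᵥ e
      have hPP : (D * Dp) * (D * Dp) = D * Dp := by
        calc (D * Dp) * (D * Dp) = ((D * Dp) * D) * Dp := by rw [mul_assoc (D*Dp) D Dp]
        _ = D * Dp := by rw [hDD]
      have hPl : (D * Dp) *ᵥ l = 0 := by
        rw [hl, Matrix.mulVec_sub, Matrix.mulVec_mulVec, hPP, sub_self]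
      have hll : l ⬝ᵥ l = 0 := by
        have h1 : l ⬝ᵥ l = e ⬝ᵥ l - ((D * Dp) *ᵥ e) ⬝ᵥ l := by
          rw [hl, sub_dotProduct]
        have h2 : e ⬝ᵥ l = ∑ j, l j := by simp [dotProduct, he]
        have h3 : ((D * Dp) *ᵥ e) ⬝ᵥ l = 0 := by
          rw [dotProduct_comm, Matrix.dotProduct_mulVec, ← Matrix.mulVec_transpose,
            hPsymm, hPl, zero_dotProduct]
        rw [h1, h2, h3, hL, sub_zero]
      have hl0 : l = 0 := by
        funext i
        have hnn : ∀ j ∈ Finset.univ, (0:ℝ) ≤ l j * l j := fun j _ => mul_self_nonneg _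
        have h4 : ∑ j, l j * l j = 0 := hll
        have h5 := (Finset.sum_eq_zero_iff_of_nonneg hnn).1 h4 i (Finset.mem_univ i)
        exact mul_self_eq_zero.mp h5
      rw [hl] at hl0
      have hPe : (D * Dp) *ᵥ e = e := (sub_eq_zero.mp hl0).symm
      set z : Fin n → ℝ := Dp *ᵥ e with hz
      have hDz : D *ᵥ z = e := by rw [hz, Matrix.mulVec_mulVec, hPe]
      have hW : (∑ j, z j) ≠ 0 := by
        have h6 : e ⬝ᵥ z = ∑ j, z j := by simp [dotProduct, he]
        have h7 : 0 < e ⬝ᵥ z := hpos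
        rw [h6] at h7
        exact ne_of_gt h7
      have heq : ∀ i, a^2*‖x i‖^2*(∑ j, z j) + b^2*(∑ j, ‖x j‖^2 * z j)
          - 2*(a*b)*⟪x i, ∑ j, z j • x j⟫ = 1 := by
        intro i
        have h8 := congrFun hDz i
        rw [mulVec_formula a b x D hform z i] at h8
        exact h8
      obtain ⟨u, t, hu⟩ := affine_of_eq a b 1 (∑ j, z j) (∑ j, ‖x j‖^2 * z j)
        (ne_of_gt ha) hW x (∑ j, z j • x j) heq
      exact sphere_aux hn x hsum hs u t hu
    · -- ∑ l ≠ 0 : use the transpose equation Dᵀ l = 0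
      have heq : ∀ i, b^2*‖x i‖^2*(∑ j, l j) + a^2*(∑ j, ‖x j‖^2 * l j)
          - 2*(b*a)*⟪x i, ∑ j, l j • x j⟫ = 0 := by
        intro i
        have h8 := congrFun hDtl i
        rw [mulVecT_formula a b x D hform l i] at h8
        exact h8
      obtain ⟨u, t, hu⟩ := affine_of_eq b a 0 (∑ j, l j) (∑ j, ‖x j‖^2 * l j)
        (ne_of_gt hb) hL x (∑ j, l j • x j) heq
      exact sphere_aux hn x hsum hs u t hu
  · -- reverse direction
    rintro ⟨a', b', ha', hb', m', x', hsum', ⟨v, r, hr, hsph⟩, hform'⟩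
    have hs' : 0 < ∑ i, ‖x' i‖^2 := spos a' b' x' D hform' hD0
    have hnR : (0:ℝ) < n := by exact_mod_cast hn
    set K : Submodule ℝ (EuclideanSpace ℝ (Fin m')) := Submodule.span ℝ (Set.range x') with hK
    have hxK : ∀ i, x' i ∈ K := fun i => Submodule.subset_span ⟨i, rfl⟩
    set v1 : EuclideanSpace ℝ (Fin m') := (Submodule.orthogonalProjection K v : EuclideanSpace ℝ (Fin m'))
      with hv1
    have hinner : ∀ i, ⟪x' i, v⟫ = ⟪x' i, v1⟫ := by
      intro i
      have hperp := Submodule.sub_starProjection_mem_orthogonal (K := K) v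
      have h0 : ⟪x' i, v - v1⟫ = 0 := (Submodule.mem_orthogonal K _).1 hperp (x' i) (hxK i)
      rw [inner_sub_right] at h0
      linarith
    obtain ⟨q, hq⟩ : ∃ q : Fin n → ℝ, ∑ j, q j • x' j = v1 :=
      (Submodule.mem_span_range_iff_exists_fun ℝ).1 (by rw [hv1]; exact (Submodule.orthogonalProjection K v).2)
    set t : ℝ := r - ‖v‖^2 with htdef
    have hδ : ∀ i, ‖x' i‖^2 = 2*⟪x' i, v1⟫ + t := by
      intro i
      have h1 := hsph i
      rw [norm_sub_sq_real] at h1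
      have h2 := hinner i
      rw [htdef]
      linarith
    have hsum_inner : ∑ i, ⟪x' i, v1⟫ = 0 := by
      have : ⟪∑ i, x' i, v1⟫ = (0:ℝ) := by rw [hsum', inner_zero_left]
      rw [sum_inner] at this
      exact this
    have hts : ∑ i, ‖x' i‖^2 = n * t := by
      calc ∑ i, ‖x' i‖^2 = ∑ i, (2*⟪x' i, v1⟫ + t) := Finset.sum_congr rfl fun i _ => hδ i
      _ = 2 * ∑ i, ⟪x' i, v1⟫ + (n : ℝ) * t := by
          rw [Finset.sum_add_distrib, ← Finset.mul_sum, Finset.sum_const, Finset.card_univ,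
            Fintype.card_fin, nsmul_eq_mul]
      _ = (n : ℝ) * t := by rw [hsum_inner]; ring
    have htpos : 0 < t := by nlinarith
    set γ : ℝ := (a'^2+b'^2)*t + 2*(a'*b')*‖v1‖^2 with hγdef
    have hγ : 0 < γ := by
      have h1 : 0 < (a'^2+b'^2)*t := by positivity
      have h2 : 0 ≤ 2*(a'*b')*‖v1‖^2 := by positivity
      rw [hγdef]; linarith
    -- construct y with D *ᵥ y = γ • e
    set τ : ℝ := (1 - (a'/b') * ∑ j, q j)/n with hτdef
    set y : Fin n → ℝ := fun i => (a'/b') * q i + τ with hy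
    have hysum : ∑ j, y j = 1 := by
      rw [hy]
      simp only
      rw [Finset.sum_add_distrib, ← Finset.mul_sum, Finset.sum_const, Finset.card_univ,
        Fintype.card_fin, nsmul_eq_mul, hτdef]
      field_simp
      ring
    have hyx : ∑ j, y j • x' j = (a'/b') • v1 := by
      calc ∑ j, y j • x' j = ∑ j, ((a'/b') • (q j • x' j) + τ • x' j) := by
            refine Finset.sum_congr rfl fun j _ => ?_
            rw [hy]; simp only
            rw [add_smul, smul_smul]
      _ = (a'/b') • (∑ j, q j • x' j) + τ • (∑ j, x' j) := by
            rw [Finset.sum_add_distrib, Finset.smul_sum, Finset.smul_sum]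
      _ = (a'/b') • v1 := by rw [hq, hsum', smul_zero, add_zero]
    have hSy : ∑ j, ‖x' j‖^2 * y j = 2*(a'/b')*‖v1‖^2 + t := by
      have h1 : ∀ j, ‖x' j‖^2 * y j = 2*(y j * ⟪x' j, v1⟫) + t * y j := by
        intro j; rw [hδ j]; ring
      simp_rw [h1]
      rw [Finset.sum_add_distrib, ← Finset.mul_sum, ← Finset.mul_sum]
      have h2 : ∑ j, y j * ⟪x' j, v1⟫ = (a'/b') * ‖v1‖^2 := by
        have h3 : ∀ j, y j * ⟪x' j, v1⟫ = ⟪y j • x' j, v1⟫ := fun j =>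
          (real_inner_smul_left _ _ _).symm
        simp_rw [h3]
        rw [← sum_inner, hyx, real_inner_smul_left, real_inner_self_eq_norm_sq]
      rw [h2, hysum]
      ring
    have hDy : D *ᵥ y = γ • e := by
      funext i
      rw [mulVec_formula a' b' x' D hform' y i, hysum, hyx, hSy, real_inner_smul_right, hδ i]
      show _ = γ * 1
      rw [hγdef]
      field_simp
      ring
    -- construct y' with Dᵀ *ᵥ y' = γ • e
    set τ' : ℝ := (1 - (b'/a') * ∑ j, q j)/n with hτ'def
    set y' : Fin n → ℝ := fun i => (b'/a') * q i + τ' with hy'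
    have hy'sum : ∑ j, y' j = 1 := by
      rw [hy']
      simp only
      rw [Finset.sum_add_distrib, ← Finset.mul_sum, Finset.sum_const, Finset.card_univ,
        Fintype.card_fin, nsmul_eq_mul, hτ'def]
      field_simp
      ring
    have hy'x : ∑ j, y' j • x' j = (b'/a') • v1 := by
      calc ∑ j, y' j • x' j = ∑ j, ((b'/a') • (q j • x' j) + τ' • x' j) := by
            refine Finset.sum_congr rfl fun j _ => ?_
            rw [hy']; simp only
            rw [add_smul, smul_smul]
      _ = (b'/a') • (∑ j, q j • x' j) + τ' • (∑ j, x' j) := by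
            rw [Finset.sum_add_distrib, Finset.smul_sum, Finset.smul_sum]
      _ = (b'/a') • v1 := by rw [hq, hsum', smul_zero, add_zero]
    have hSy' : ∑ j, ‖x' j‖^2 * y' j = 2*(b'/a')*‖v1‖^2 + t := by
      have h1 : ∀ j, ‖x' j‖^2 * y' j = 2*(y' j * ⟪x' j, v1⟫) + t * y' j := by
        intro j; rw [hδ j]; ring
      simp_rw [h1]
      rw [Finset.sum_add_distrib, ← Finset.mul_sum, ← Finset.mul_sum]
      have h2 : ∑ j, y' j * ⟪x' j, v1⟫ = (b'/a') * ‖v1‖^2 := by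
        have h3 : ∀ j, y' j * ⟪x' j, v1⟫ = ⟪y' j • x' j, v1⟫ := fun j =>
          (real_inner_smul_left _ _ _).symm
        simp_rw [h3]
        rw [← sum_inner, hy'x, real_inner_smul_left, real_inner_self_eq_norm_sq]
      rw [h2, hy'sum]
      ring
    have hDty' : Dᵀ *ᵥ y' = γ • e := by
      funext i
      rw [mulVecT_formula a' b' x' D hform' y' i, hy'sum, hy'x, hSy', real_inner_smul_right,
        hδ i]
      show _ = γ * 1
      rw [hγdef]
      field_simp
      ring
    -- conclude
    have he1 : e = γ⁻¹ • (D *ᵥ y) := by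
      rw [hDy, smul_smul, inv_mul_cancel₀ (ne_of_gt hγ), one_smul]
    have he2 : e = γ⁻¹ • (Dᵀ *ᵥ y') := by
      rw [hDty', smul_smul, inv_mul_cancel₀ (ne_of_gt hγ), one_smul]
    have hQDt : Dp * D * Dᵀ = Dᵀ := by
      calc Dp * D * Dᵀ = (Dp * D)ᵀ * Dᵀ := by rw [hQsymm]
      _ = (D * (Dp * D))ᵀ := (Matrix.transpose_mul _ _).symm
      _ = Dᵀ := by rw [← mul_assoc, hDD]
    have hQe : (Dp * D) *ᵥ e = e := by
      calc (Dp * D) *ᵥ e = (Dp * D) *ᵥ (γ⁻¹ • (Dᵀ *ᵥ y')) := by rw [← he2]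
      _ = γ⁻¹ • ((Dp * D) *ᵥ (Dᵀ *ᵥ y')) := Matrix.mulVec_smul _ _ _
      _ = γ⁻¹ • ((Dp * D * Dᵀ) *ᵥ y') := by rw [Matrix.mulVec_mulVec]
      _ = γ⁻¹ • (Dᵀ *ᵥ y') := by rw [hQDt]
      _ = e := he2.symm
    have key : e ⬝ᵥ (Dp *ᵥ e) = γ⁻¹ := by
      have h2 : Dp *ᵥ e = γ⁻¹ • ((Dp * D) *ᵥ y) := by
        conv_lhs => rw [he1]
        rw [Matrix.mulVec_smul, Matrix.mulVec_mulVec]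
      rw [h2, dotProduct_smul]
      have h3 : e ⬝ᵥ ((Dp * D) *ᵥ y) = ((Dp * D) *ᵥ e) ⬝ᵥ y := by
        rw [Matrix.dotProduct_mulVec]
        congr 1
        rw [← Matrix.mulVec_transpose, hQsymm]
      rw [h3, hQe]
      have h4 : e ⬝ᵥ y = 1 := by
        have : e ⬝ᵥ y = ∑ j, y j := by simp [dotProduct, he]
        rw [this, hysum]
      rw [h4, smul_eq_mul, mul_one]
    show 0 < e ⬝ᵥ (Dp *ᵥ e)
    rw [key]
    exact inv_pos.2 hγ

end Main
end
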